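/- arXiv:1105.5060 — 11 statements merged into one kernel-verified Lean document; each statement's English description precedes it below -/
import Mathlib

section
/- Let k > 0 and l > 0. Let h : ℝ × ℝ → ℝ be positive and twice continuously differentiable in the second variable s, with h(t,0) = 1, ∂_s h(t,0) = 0 and ∂²_s h(t,s) ≥ k² · h(t,s) for all (t,s) (so h is the Fermi-coordinate metric coefficient of a cylinder of curvature at most −k² whose baseline, of length l, lies at s = 0). Let A ⊆ [0,l] × ℝ be a measurable set of finite area Ar = ∬_A h(t,s) ds dt. Let f : ℝ × ℝ → ℝ be Lipschitz such that for every t ∈ [0,l] there exist real numbers α < β with {t} × (α,β) ⊆ A, f(t,α) = 0 and f(t,β) = 1 (encoding the boundary values 0 and 1 on the two boundary components of a non-contractible annulus). Then ∬_A ( (∂_t f)²/h + h·(∂_s f)² ) ds dt ≥ k·l / (h₁(W') − h₁(−W')), where W' = arcsinh(k·Ar/(2l)) and h₁(x) = 2·arctan(exp(x)); equivalently, the right-hand side equals k·l / (2·arctan(k·Ar/(2l))). -/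
open Real MeasureTheory Set
open scoped NNReal

/-- `h₁ x = 2 · arctan (exp x)`, an antiderivative of `1 / cosh`. -/
noncomputable def h₁ (x : ℝ) : ℝ := 2 * Real.arctan (Real.exp x)

lemma h1_hasDerivAt (x : ℝ) : HasDerivAt h₁ ((Real.cosh x)⁻¹) x := by
  have h : HasDerivAt (fun x : ℝ => 2 * Real.arctan (Real.exp x))
      (2 * ((1 + Real.exp x ^ 2)⁻¹ * Real.exp x)) x := by
    have := ((Real.hasDerivAt_arctan' (Real.exp x)).comp x (Real.hasDerivAt_exp x)).const_mul 2
    simpa [Function.comp] using this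
  have he : (Real.cosh x)⁻¹ = 2 * ((1 + Real.exp x ^ 2)⁻¹ * Real.exp x) := by
    rw [Real.cosh_eq, Real.exp_neg]
    have h1 : Real.exp x ≠ 0 := Real.exp_ne_zero x
    have h2 : (0:ℝ) < 1 + Real.exp x ^ 2 := by positivity
    field_simp
    ring
  rw [show h₁ = fun x : ℝ => 2 * Real.arctan (Real.exp x) from rfl, he]
  exact h

lemma hasDerivAt_cosh_comp (k s : ℝ) :
    HasDerivAt (fun s : ℝ => Real.cosh (k * s)) (k * Real.sinh (k * s)) s := by
  have c1 : HasDerivAt (fun s : ℝ => k * s) k s := by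
    simpa using (hasDerivAt_id s).const_mul k
  exact ((Real.hasDerivAt_cosh (k * s)).comp s c1).congr_deriv (mul_comm _ _)

lemma hasDerivAt_sinh_comp (k s : ℝ) :
    HasDerivAt (fun s : ℝ => Real.sinh (k * s)) (k * Real.cosh (k * s)) s := by
  have c1 : HasDerivAt (fun s : ℝ => k * s) k s := by
    simpa using (hasDerivAt_id s).const_mul k
  exact ((Real.hasDerivAt_sinh (k * s)).comp s c1).congr_deriv (mul_comm _ _)

/-- ODE comparison: `u'' ≥ k² u`, `u 0 = 1`, `u' 0 = 0` imply `u ≥ cosh (k ·)`. -/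
lemma cosh_le_of_ode {k : ℝ} (hk : 0 < k) {u : ℝ → ℝ}
    (hu : ContDiff ℝ 2 u) (h0 : u 0 = 1) (h0' : deriv u 0 = 0)
    (hineq : ∀ s, k ^ 2 * u s ≤ deriv (deriv u) s) :
    ∀ s, Real.cosh (k * s) ≤ u s := by
  have hud : Differentiable ℝ u := hu.differentiable (by norm_num)
  have hu' : ContDiff ℝ 1 (deriv u) := by
    have h2 : ((2:ℕ) : WithTop ℕ∞) = (1 : ℕ) + 1 := by norm_num
    exact (contDiff_succ_iff_deriv.mp (by exact_mod_cast hu)).2.2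
  have hud' : Differentiable ℝ (deriv u) := hu'.differentiable (by norm_num)
  set F : ℝ → ℝ := fun s => deriv u s * Real.cosh (k * s) - u s * (k * Real.sinh (k * s)) with hFdef
  have hF : ∀ s, HasDerivAt F ((deriv (deriv u) s - k ^ 2 * u s) * Real.cosh (k * s)) s := by
    intro s
    have h1 := ((hud' s).hasDerivAt.mul (hasDerivAt_cosh_comp k s)).sub
      ((hud s).hasDerivAt.mul ((hasDerivAt_sinh_comp k s).const_mul k))
    exact h1.congr_deriv (by ring)
  have hFmono : Monotone F :=
    monotone_of_deriv_nonneg (fun s => (hF s).differentiableAt) (fun s => by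
      rw [(hF s).deriv]
      exact mul_nonneg (sub_nonneg.2 (hineq s)) (Real.cosh_pos _).le)
  have hF0 : F 0 = 0 := by simp [hFdef, h0, h0']
  set R : ℝ → ℝ := fun s => u s / Real.cosh (k * s) with hRdef
  have hR : ∀ s, HasDerivAt R (F s / Real.cosh (k * s) ^ 2) s := by
    intro s
    exact (hud s).hasDerivAt.div (hasDerivAt_cosh_comp k s) (Real.cosh_pos _).ne'
  have hRd : Differentiable ℝ R := fun s => (hR s).differentiableAt
  have hR0 : R 0 = 1 := by simp [hRdef, h0]
  have key : ∀ s, 1 ≤ R s := by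
    intro s
    rcases le_total 0 s with hs | hs
    · have hmono : MonotoneOn R (Ici 0) := by
        apply monotoneOn_of_deriv_nonneg (convex_Ici 0) hRd.continuous.continuousOn
          (hRd.differentiableOn)
        intro x hx
        rw [interior_Ici] at hx
        rw [(hR x).deriv]
        apply div_nonneg _ (sq_nonneg _)
        have := hFmono (le_of_lt hx : (0:ℝ) ≤ x)
        linarith [hF0 ▸ this]
      have := hmono (self_mem_Ici) (mem_Ici.2 hs) hs
      linarith [hR0]
    · have hanti : AntitoneOn R (Iic 0) := by
        apply antitoneOn_of_deriv_nonpos (convex_Iic 0) hRd.continuous.continuousOn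
          (hRd.differentiableOn)
        intro x hx
        rw [interior_Iic] at hx
        rw [(hR x).deriv]
        apply div_nonpos_of_nonpos_of_nonneg _ (sq_nonneg _)
        have := hFmono (le_of_lt hx : x ≤ (0:ℝ))
        linarith [hF0 ▸ this]
      have := hanti (mem_Iic.2 hs) (self_mem_Iic) hs
      linarith [hR0]
  intro s
  have := key s
  have hc : (0:ℝ) < Real.cosh (k * s) := Real.cosh_pos _
  rw [hRdef] at this
  calc Real.cosh (k * s) = 1 * Real.cosh (k * s) := (one_mul _).symm
    _ ≤ (u s / Real.cosh (k * s)) * Real.cosh (k * s) := by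
        apply mul_le_mul_of_nonneg_right this hc.le
    _ = u s := by field_simp

lemma integral_sech {k : ℝ} (hk : 0 < k) (w : ℝ) :
    ∫ s in (-w)..w, (Real.cosh (k * s))⁻¹ = (h₁ (k * w) - h₁ (-(k * w))) / k := by
  have hder : ∀ x ∈ uIcc (-w) w, HasDerivAt (fun s => h₁ (k * s) / k)
      ((Real.cosh (k * x))⁻¹) x := by
    intro x _
    have c1 : HasDerivAt (fun s : ℝ => k * s) k x := by
      simpa using (hasDerivAt_id x).const_mul k
    have := ((h1_hasDerivAt (k * x)).comp x c1).div_const k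
    exact this.congr_deriv (mul_div_cancel_right₀ _ hk.ne')
  have hint : IntervalIntegrable (fun s => (Real.cosh (k * s))⁻¹) volume (-w) w := by
    apply Continuous.intervalIntegrable
    exact (Real.continuous_cosh.comp (continuous_const.mul continuous_id)).inv₀
      (fun x => (Real.cosh_pos _).ne')
  rw [intervalIntegral.integral_eq_sub_of_hasDerivAt hder hint]
  rw [mul_neg]
  ring

lemma integral_cosh_comp {k : ℝ} (hk : 0 < k) (w : ℝ) :
    ∫ s in (-w)..w, Real.cosh (k * s) = 2 * Real.sinh (k * w) / k := by
  have hder : ∀ x ∈ uIcc (-w) w, HasDerivAt (fun s => Real.sinh (k * s) / k)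
      (Real.cosh (k * x)) x := by
    intro x _
    have := (hasDerivAt_sinh_comp k x).div_const k
    exact this.congr_deriv (mul_div_cancel_left₀ _ hk.ne')
  have hint : IntervalIntegrable (fun s => Real.cosh (k * s)) volume (-w) w :=
    (Real.continuous_cosh.comp (continuous_const.mul continuous_id)).intervalIntegrable _ _
  rw [intervalIntegral.integral_eq_sub_of_hasDerivAt hder hint]
  rw [mul_neg, Real.sinh_neg]
  ring

noncomputable def Gfun (k a : ℝ) : ℝ :=
  (h₁ (Real.arsinh (k * a / 2)) - h₁ (-Real.arsinh (k * a / 2))) / k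

lemma Gfun_hasDerivAt {k : ℝ} (hk : 0 < k) (a : ℝ) :
    HasDerivAt (Gfun k) (1 / (1 + (k * a / 2) ^ 2)) a := by
  set X : ℝ := 1 + (k * a / 2) ^ 2 with hX
  have hXpos : (0:ℝ) < X := by positivity
  have c1 : HasDerivAt (fun a : ℝ => k * a / 2) (k / 2) a := by
    have : HasDerivAt (fun a : ℝ => (k / 2) * a) (k / 2) a := by
      simpa using (hasDerivAt_id a).const_mul (k / 2)
    convert this using 2 with x
    ring
  have hW : HasDerivAt (fun a : ℝ => Real.arsinh (k * a / 2))
      ((Real.sqrt X)⁻¹ * (k / 2)) a :=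
    (Real.hasDerivAt_arsinh _).comp a c1
  have hch : Real.cosh (Real.arsinh (k * a / 2)) = Real.sqrt X := Real.cosh_arsinh _
  have h1 : HasDerivAt (fun a : ℝ => h₁ (Real.arsinh (k * a / 2)))
      ((Real.sqrt X)⁻¹ * ((Real.sqrt X)⁻¹ * (k / 2))) a := by
    have := (h1_hasDerivAt (Real.arsinh (k * a / 2))).comp a hW
    rwa [hch] at this
  have h2 : HasDerivAt (fun a : ℝ => h₁ (-Real.arsinh (k * a / 2)))
      ((Real.sqrt X)⁻¹ * -((Real.sqrt X)⁻¹ * (k / 2))) a := by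
    have := (h1_hasDerivAt (-Real.arsinh (k * a / 2))).comp a hW.neg
    rwa [Real.cosh_neg, hch] at this
  have h3 := (h1.sub h2).div_const k
  have hs : Real.sqrt X * Real.sqrt X = X := Real.mul_self_sqrt hXpos.le
  have hs0 : Real.sqrt X ≠ 0 := by positivity
  have : ((Real.sqrt X)⁻¹ * ((Real.sqrt X)⁻¹ * (k / 2)) -
      (Real.sqrt X)⁻¹ * -((Real.sqrt X)⁻¹ * (k / 2))) / k = 1 / X := by
    field_simp
    nlinarith [hs]
  rw [show Gfun k = fun a => (h₁ (Real.arsinh (k * a / 2)) - h₁ (-Real.arsinh (k * a / 2))) / k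
    from rfl]
  rw [← this]
  exact h3

lemma Gfun_zero (k : ℝ) : Gfun k 0 = 0 := by
  simp [Gfun, Real.arsinh_zero]

lemma Gfun_strictMono {k : ℝ} (hk : 0 < k) : StrictMono (Gfun k) := by
  apply strictMono_of_deriv_pos
  intro x
  rw [(Gfun_hasDerivAt hk x).deriv]
  positivity

lemma Gfun_pos {k a : ℝ} (hk : 0 < k) (ha : 0 < a) : 0 < Gfun k a := by
  have := Gfun_strictMono hk ha
  rwa [Gfun_zero] at this

lemma Gfun_tangent {k : ℝ} (hk : 0 < k) {a m : ℝ} (ha : 0 ≤ a) (hm : 0 ≤ m) :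
    Gfun k a ≤ Gfun k m + (1 / (1 + (k * m / 2) ^ 2)) * (a - m) := by
  have hdiff : Differentiable ℝ (Gfun k) := fun z => (Gfun_hasDerivAt hk z).differentiableAt
  have hcont : ∀ x y : ℝ, ContinuousOn (Gfun k) (Icc x y) :=
    fun x y => hdiff.continuous.continuousOn
  rcases lt_trichotomy a m with hlt | heq | hgt
  · obtain ⟨c, hc, hceq⟩ := exists_hasDerivAt_eq_slope (Gfun k)
      (fun x => 1 / (1 + (k * x / 2) ^ 2)) hlt (hcont a m)
      (fun x _ => Gfun_hasDerivAt hk x)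
    have hca : a < c := hc.1
    have hcm : c < m := hc.2
    have hd : 1 / (1 + (k * m / 2) ^ 2) ≤ 1 / (1 + (k * c / 2) ^ 2) := by
      apply one_div_le_one_div_of_le (by positivity)
      have h0c : (0:ℝ) ≤ c := ha.trans hca.le
      have : (k * c / 2) ^ 2 ≤ (k * m / 2) ^ 2 :=
        pow_le_pow_left₀ (by positivity) (by nlinarith) 2
      linarith
    have hma : (0:ℝ) < m - a := by linarith
    have h1 : 1 / (1 + (k * m / 2) ^ 2) ≤ (Gfun k m - Gfun k a) / (m - a) := by
      rw [← hceq]; exact hd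
    have h2 := (le_div_iff₀ hma).mp h1
    linarith
  · simp [heq]
  · obtain ⟨c, hc, hceq⟩ := exists_hasDerivAt_eq_slope (Gfun k)
      (fun x => 1 / (1 + (k * x / 2) ^ 2)) hgt (hcont m a)
      (fun x _ => Gfun_hasDerivAt hk x)
    have hcm : m < c := hc.1
    have hd : 1 / (1 + (k * c / 2) ^ 2) ≤ 1 / (1 + (k * m / 2) ^ 2) := by
      apply one_div_le_one_div_of_le (by positivity)
      have h0c : (0:ℝ) ≤ c := hm.trans hcm.le
      have : (k * m / 2) ^ 2 ≤ (k * c / 2) ^ 2 :=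
        pow_le_pow_left₀ (by positivity) (by nlinarith) 2
      linarith
    have ham : (0:ℝ) < a - m := by linarith
    have h1 : (Gfun k a - Gfun k m) / (a - m) ≤ 1 / (1 + (k * m / 2) ^ 2) := by
      rw [← hceq]; exact hd
    have h2 := (div_le_iff₀ ham).mp h1
    linarith

/-- Fundamental theorem of calculus inequality for Lipschitz functions. -/
lemma lipschitz_sub_le_integral_abs_deriv {g : ℝ → ℝ} {C : ℝ≥0} (hg : LipschitzWith C g)
    {α β : ℝ} (hab : α ≤ β) :
    g β - g α ≤ ∫ s in Set.Ioc α β, |deriv g s| := by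
  set ψ : ℝ → ℝ := fun x => (C : ℝ) * x - g x with hψdef
  have hψ : Monotone ψ := by
    intro x y hxy
    have := hg.dist_le_mul x y
    rw [Real.dist_eq, Real.dist_eq] at this
    have h1 := (abs_le.mp this).1
    have h2 : |x - y| = y - x := by rw [abs_of_nonpos (by linarith)]; ring
    rw [h2] at h1
    simp only [hψdef]
    nlinarith [h1]
  set μ := hψ.stieltjesFunction.measure with hμdef
  set d : ℝ → ℝ := fun x => (μ.rnDeriv volume x).toReal with hddef
  have hae := hψ.ae_hasDerivAt
  have hψcont : Continuous ψ :=
    (continuous_const.mul continuous_id).sub hg.continuous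
  have hst : ∀ x, hψ.stieltjesFunction x = ψ x := by
    intro x
    rw [hψ.stieltjesFunction_eq]
    exact rightLim_eq_of_tendsto
      (hψcont.tendsto x |>.mono_left nhdsWithin_le_nhds)
  have hμIoc : μ (Set.Ioc α β) = ENNReal.ofReal (ψ β - ψ α) := by
    rw [hμdef, StieltjesFunction.measure_Ioc, hst, hst]
  have hgder : ∀ᵐ x, deriv g x = (C : ℝ) - d x := by
    filter_upwards [hae] with x hx
    have hg2 : (fun y => (C : ℝ) * y - ψ y) = g := by
      funext y; simp [hψdef]
    have h3 : HasDerivAt g ((C : ℝ) - d x) x := by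
      rw [← hg2]
      have := ((hasDerivAt_id x).const_mul (C : ℝ)).sub hx
      exact this.congr_deriv (by simp only [mul_one, hddef, hμdef])
    exact h3.deriv
  have habs : ∀ x, |deriv g x| ≤ (C : ℝ) := by
    intro x
    simpa [Real.norm_eq_abs] using norm_deriv_le_of_lipschitz (𝕜 := ℝ) hg
  have hfin : volume (Set.Ioc α β) < ⊤ := measure_Ioc_lt_top
  have iC : IntegrableOn (fun _ : ℝ => (C : ℝ)) (Set.Ioc α β) volume :=
    integrableOn_const hfin.ne
  have mg : Measurable (deriv g) := measurable_deriv g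
  have i1 : IntegrableOn (fun s => |deriv g s|) (Set.Ioc α β) volume := by
    apply Integrable.mono' iC (mg.abs.aestronglyMeasurable)
    exact ae_of_all _ fun x => by rw [Real.norm_eq_abs, abs_abs]; exact habs x
  have hrnmeas : Measurable (fun x => μ.rnDeriv volume x) := μ.measurable_rnDeriv volume
  have hlint : (∫⁻ x in Set.Ioc α β, μ.rnDeriv volume x) ≠ ⊤ := by
    refine ne_of_lt (lt_of_le_of_lt (μ.setLIntegral_rnDeriv_le _) ?_)
    rw [hμIoc]; exact ENNReal.ofReal_lt_top
  have i2 : IntegrableOn d (Set.Ioc α β) volume := by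
    exact integrable_toReal_of_lintegral_ne_top (hrnmeas.aemeasurable.restrict) hlint
  have i3 : IntegrableOn (fun x => (C : ℝ) - d x) (Set.Ioc α β) volume := iC.sub i2
  have step1 : ∫ s in Set.Ioc α β, ((C : ℝ) - d s) ≤ ∫ s in Set.Ioc α β, |deriv g s| := by
    apply integral_mono_ae i3 i1
    apply ae_restrict_of_ae
    filter_upwards [hgder] with x hx
    calc (C : ℝ) - d x = deriv g x := hx.symm
      _ ≤ |deriv g x| := le_abs_self _
  have hdle : ∫ s in Set.Ioc α β, d s ≤ ψ β - ψ α := by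
    have h4 : ∫ s in Set.Ioc α β, d s
        = (∫⁻ x in Set.Ioc α β, μ.rnDeriv volume x).toReal := by
      rw [hddef]
      apply integral_toReal (hrnmeas.aemeasurable.restrict)
      exact ae_restrict_of_ae (μ.rnDeriv_lt_top volume)
    rw [h4]
    have h5 : (∫⁻ x in Set.Ioc α β, μ.rnDeriv volume x).toReal ≤ (μ (Set.Ioc α β)).toReal := by
      apply ENNReal.toReal_mono _ (μ.setLIntegral_rnDeriv_le _)
      rw [hμIoc]; exact ENNReal.ofReal_ne_top
    refine h5.trans ?_
    rw [hμIoc, ENNReal.toReal_ofReal (sub_nonneg.2 (hψ hab))]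
  have hCint : ∫ s in Set.Ioc α β, (C : ℝ) = (C : ℝ) * (β - α) := by
    rw [setIntegral_const, Real.volume_real_Ioc_of_le hab, smul_eq_mul,
      mul_comm]
  have step2 : ∫ s in Set.Ioc α β, ((C : ℝ) - d s)
      = (C : ℝ) * (β - α) - ∫ s in Set.Ioc α β, d s := by
    rw [integral_sub iC i2, hCint]
  have : g β - g α ≤ ∫ s in Set.Ioc α β, ((C : ℝ) - d s) := by
    rw [step2]
    have : ψ β - ψ α = (C : ℝ) * β - g β - ((C : ℝ) * α - g α) := rfl
    nlinarith [hdle]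
  linarith [step1]

/-- Bathtub-type bound: if `v ≥ cosh (k·)` and `∫_E v ≤ a` then `∫_E v⁻¹ ≤ G a`. -/
lemma bathtub {k : ℝ} (hk : 0 < k) {v : ℝ → ℝ}
    (hvc : Continuous v)
    (hcmp : ∀ s, Real.cosh (k * s) ≤ v s)
    {E : Set ℝ} (hE : MeasurableSet E) (hvi : IntegrableOn v E volume)
    {a : ℝ} (ha : 0 < a) (hva : ∫ s in E, v s ≤ a) :
    ∫ s in E, (v s)⁻¹ ≤ Gfun k a := by
  have hvpos : ∀ s, 0 < v s := fun s => (Real.cosh_pos _).trans_le (hcmp s)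
  have hv1 : ∀ s, 1 ≤ v s := fun s => (Real.one_le_cosh _).trans (hcmp s)
  set W : ℝ := Real.arsinh (k * a / 2) with hWdef
  have hWpos : 0 < W := Real.arsinh_pos_iff.2 (by positivity)
  set w : ℝ := W / k with hwdef
  have hwpos : 0 < w := div_pos hWpos hk
  have hkw : k * w = W := by rw [hwdef, mul_comm, div_mul_cancel₀ W hk.ne']
  set c : ℝ := Real.cosh W with hcdef
  have hc1 : 1 ≤ c := Real.one_le_cosh W
  have hcpos : (0:ℝ) < c := by linarith
  have hsinh : Real.sinh W = k * a / 2 := Real.sinh_arsinh _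
  -- interval integral values
  have key1 : ∫ s in (-w)..w, Real.cosh (k * s) = a := by
    rw [integral_cosh_comp hk, hkw, hsinh]; field_simp
  have key2 : ∫ s in (-w)..w, (Real.cosh (k * s))⁻¹ = Gfun k a := by
    rw [integral_sech hk, hkw]; rfl
  -- the indicator function
  set q : ℝ → ℝ := fun s => (Real.cosh (k * s))⁻¹ - Real.cosh (k * s) / c ^ 2 with hqdef
  set ind : ℝ → ℝ := (Set.Icc (-w) w).indicator q with hinddef
  have hqcont : Continuous q := by
    apply Continuous.sub
    · exact (Real.continuous_cosh.comp (continuous_const.mul continuous_id)).inv₀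
        (fun x => (Real.cosh_pos _).ne')
    · exact (Real.continuous_cosh.comp (continuous_const.mul continuous_id)).div_const _
  have hcosh_le_c : ∀ s ∈ Set.Icc (-w) w, Real.cosh (k * s) ≤ c := by
    intro s hs
    rw [hcdef, ← hkw]
    rw [Real.cosh_le_cosh]
    rw [abs_mul, abs_mul, abs_of_pos hk]
    apply mul_le_mul_of_nonneg_left _ hk.le
    rw [abs_of_pos hwpos]
    exact abs_le.2 ⟨hs.1, hs.2⟩
  have hc_le_cosh : ∀ s, s ∉ Set.Icc (-w) w → c ≤ Real.cosh (k * s) := by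
    intro s hs
    rw [Set.mem_Icc, not_and_or] at hs
    rw [hcdef, ← hkw, Real.cosh_le_cosh, abs_mul, abs_mul, abs_of_pos hk]
    apply mul_le_mul_of_nonneg_left _ hk.le
    rw [abs_of_pos hwpos]
    rcases hs with h | h
    · push_neg at h; rw [abs_of_nonpos (by linarith)]; linarith
    · push_neg at h; rw [abs_of_pos (by linarith)]; linarith
  have hind_nonneg : ∀ s, 0 ≤ ind s := by
    intro s
    rw [hinddef]
    by_cases hs : s ∈ Set.Icc (-w) w
    · rw [Set.indicator_of_mem hs, hqdef]
      have h1 := hcosh_le_c s hs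
      have h2 := Real.cosh_pos (k * s)
      have h3 : Real.cosh (k * s) ^ 2 ≤ c ^ 2 := by nlinarith
      simp only [sub_nonneg]
      rw [div_le_iff₀ (by positivity : (0:ℝ) < c ^ 2)]
      nlinarith [mul_nonneg (inv_nonneg.2 h2.le) (sub_nonneg.2 h3),
        inv_mul_cancel₀ h2.ne']
    · rw [Set.indicator_of_notMem hs]
  -- pointwise bound
  have hpt : ∀ s, (v s)⁻¹ ≤ Real.cosh (k * s) / c ^ 2 + ind s := by
    intro s
    have h0 : (v s)⁻¹ ≤ (Real.cosh (k * s))⁻¹ := by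
      apply inv_anti₀ (Real.cosh_pos _) (hcmp s)
    by_cases hs : s ∈ Set.Icc (-w) w
    · rw [hinddef, Set.indicator_of_mem hs, hqdef]
      linarith
    · rw [hinddef, Set.indicator_of_notMem hs]
      refine h0.trans ?_
      have h1 := hc_le_cosh s hs
      have h2 := Real.cosh_pos (k * s)
      have h3 : c ^ 2 ≤ Real.cosh (k * s) ^ 2 := by nlinarith
      rw [add_zero, le_div_iff₀ (by positivity : (0:ℝ) < c ^ 2)]
      nlinarith [mul_nonneg (inv_nonneg.2 h2.le) (sub_nonneg.2 h3),
        inv_mul_cancel₀ h2.ne']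
  -- integrabilities on E
  have hEfin : IntegrableOn (fun _ : ℝ => (1:ℝ)) E volume := by
    apply Integrable.mono' hvi (aestronglyMeasurable_const)
    exact ae_of_all _ fun x => by rw [norm_one]; exact hv1 x
  have hiv_inv : IntegrableOn (fun s => (v s)⁻¹) E volume := by
    apply Integrable.mono' hEfin ((hvc.inv₀ (fun x => (hvpos x).ne')).aestronglyMeasurable)
    exact ae_of_all _ fun x => by
      rw [Real.norm_eq_abs]; show |(v x)⁻¹| ≤ _; rw [abs_of_pos (inv_pos.2 (hvpos x))]
      exact inv_le_one_of_one_le₀ (hv1 x)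
  have hccont : Continuous (fun s : ℝ => Real.cosh (k * s)) :=
    Real.continuous_cosh.comp (continuous_const.mul continuous_id)
  have hicosh : IntegrableOn (fun s => Real.cosh (k * s)) E volume := by
    apply Integrable.mono' hvi hccont.aestronglyMeasurable
    exact ae_of_all _ fun x => by
      rw [Real.norm_eq_abs, abs_of_pos (Real.cosh_pos _)]
      exact hcmp x
  have hicoshc : IntegrableOn (fun s => Real.cosh (k * s) / c ^ 2) E volume :=
    hicosh.div_const _
  have hind_int : Integrable ind volume := by
    rw [hinddef]
    apply (hqcont.integrableOn_Icc).integrable_indicator measurableSet_Icc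
  have hind_intE : IntegrableOn ind E volume := hind_int.integrableOn
  -- main chain
  have step1 : ∫ s in E, (v s)⁻¹ ≤ ∫ s in E, (Real.cosh (k * s) / c ^ 2 + ind s) := by
    apply setIntegral_mono_on hiv_inv (hicoshc.add hind_intE) hE
    exact fun s _ => hpt s
  have step2 : ∫ s in E, (Real.cosh (k * s) / c ^ 2 + ind s)
      = (∫ s in E, Real.cosh (k * s)) / c ^ 2 + ∫ s in E, ind s := by
    rw [integral_add hicoshc hind_intE, integral_div]
  have step3 : ∫ s in E, Real.cosh (k * s) ≤ a := by
    refine le_trans ?_ hva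
    apply setIntegral_mono_on hicosh hvi hE
    exact fun s _ => hcmp s
  have step4 : ∫ s in E, ind s ≤ ∫ s, ind s :=
    setIntegral_le_integral hind_int (ae_of_all _ hind_nonneg)
  have step5 : ∫ s, ind s = Gfun k a - a / c ^ 2 := by
    rw [hinddef, integral_indicator measurableSet_Icc]
    rw [integral_Icc_eq_integral_Ioc, ← intervalIntegral.integral_of_le (by linarith)]
    have hqint : ∫ s in (-w)..w, q s
        = (∫ s in (-w)..w, (Real.cosh (k * s))⁻¹) - ∫ s in (-w)..w, Real.cosh (k * s) / c ^ 2 := by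
      rw [hqdef, intervalIntegral.integral_sub]
      · exact ((Real.continuous_cosh.comp (continuous_const.mul continuous_id)).inv₀
          (fun x => (Real.cosh_pos _).ne')).intervalIntegrable _ _
      · exact ((Real.continuous_cosh.comp
          (continuous_const.mul continuous_id)).div_const _).intervalIntegrable _ _
    rw [hqint, key2, intervalIntegral.integral_div, key1]
  calc ∫ s in E, (v s)⁻¹ ≤ (∫ s in E, Real.cosh (k * s)) / c ^ 2 + ∫ s in E, ind s := by
        rw [← step2]; exact step1
    _ ≤ a / c ^ 2 + (Gfun k a - a / c ^ 2) := by
        apply add_le_add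
        · gcongr
        · exact step4.trans (le_of_eq step5)
    _ = Gfun k a := by ring

/-- Per-slice capacity bound. -/
lemma slice_bound {k : ℝ} (hk : 0 < k) {v g : ℝ → ℝ} {C : ℝ≥0}
    (hvc : Continuous v) (hcmp : ∀ s, Real.cosh (k * s) ≤ v s)
    (hg : LipschitzWith C g)
    {E : Set ℝ} (hE : MeasurableSet E) (hvi : IntegrableOn v E volume)
    {α β : ℝ} (hab : α < β) (hsub : Set.Ioo α β ⊆ E)
    (hga : g α = 0) (hgb : g β = 1)
    {a : ℝ} (ha : a = ∫ s in E, v s) :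
    0 < a ∧ 1 / Gfun k a ≤ ∫ s in E, v s * (deriv g s) ^ 2 := by
  have hvpos : ∀ s, 0 < v s := fun s => (Real.cosh_pos _).trans_le (hcmp s)
  have hv1 : ∀ s, 1 ≤ v s := fun s => (Real.one_le_cosh _).trans (hcmp s)
  have hvnn : 0 ≤ᵐ[volume.restrict E] v := Filter.Eventually.of_forall fun s => (hvpos s).le
  -- positivity of a
  have hIoo_int : IntegrableOn v (Set.Ioo α β) volume := hvi.mono_set hsub
  have hconst_int : IntegrableOn (fun _ : ℝ => (1:ℝ)) (Set.Ioo α β) volume :=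
    integrableOn_const measure_Ioo_lt_top.ne
  have h1le : ∫ s in Set.Ioo α β, (1:ℝ) ≤ ∫ s in Set.Ioo α β, v s :=
    setIntegral_mono_on hconst_int hIoo_int measurableSet_Ioo (fun s _ => hv1 s)
  have h1val : ∫ s in Set.Ioo α β, (1:ℝ) = β - α := by
    rw [setIntegral_const, Real.volume_real_Ioo_of_le hab.le, smul_eq_mul,
      mul_one]
  have hIooE : ∫ s in Set.Ioo α β, v s ≤ ∫ s in E, v s :=
    setIntegral_mono_set hvi hvnn (HasSubset.Subset.eventuallyLE hsub)
  have ha_pos : 0 < a := by rw [ha]; linarith [h1val ▸ h1le]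
  -- finiteness of E
  have hEfin : volume E < ⊤ := by
    have h2 := hvi.measure_ge_lt_top one_pos
    have h3 : {x | 1 ≤ v x} = Set.univ := Set.eq_univ_of_forall hv1
    rwa [h3, Measure.restrict_apply_univ] at h2
  set lam : ℝ := Gfun k a with hlamdef
  have hlam : 0 < lam := Gfun_pos hk ha_pos
  -- integrabilities
  have mg : Measurable (deriv g) := measurable_deriv g
  have habs : ∀ x, |deriv g x| ≤ (C : ℝ) := by
    intro x
    simpa [Real.norm_eq_abs] using norm_deriv_le_of_lipschitz (𝕜 := ℝ) hg
  have iconst : IntegrableOn (fun _ : ℝ => (C : ℝ)) E volume :=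
    integrableOn_const hEfin.ne
  have iconst1 : IntegrableOn (fun _ : ℝ => (1 : ℝ)) E volume :=
    integrableOn_const hEfin.ne
  have i_abs : IntegrableOn (fun s => |deriv g s|) E volume := by
    apply Integrable.mono' iconst (mg.abs.aestronglyMeasurable)
    exact ae_of_all _ fun x => by rw [Real.norm_eq_abs, abs_abs]; exact habs x
  have i_X : IntegrableOn (fun s => v s * (deriv g s) ^ 2) E volume := by
    apply Integrable.mono' (hvi.const_mul ((C:ℝ)^2))
      (((hvc.measurable).mul (mg.pow_const 2)).aestronglyMeasurable)
    refine ae_of_all _ fun s => ?_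
    rw [Real.norm_eq_abs]; show |v s * (deriv g s) ^ 2| ≤ _; rw [abs_of_nonneg (mul_nonneg (hvpos s).le (sq_nonneg _))]
    have h4 : (deriv g s) ^ 2 ≤ (C:ℝ)^2 := by
      rw [← sq_abs]
      exact pow_le_pow_left₀ (abs_nonneg _) (habs s) 2
    nlinarith [hvpos s]
  have i_inv : IntegrableOn (fun s => (v s)⁻¹) E volume := by
    apply Integrable.mono' iconst1 ((hvc.inv₀ (fun x => (hvpos x).ne')).aestronglyMeasurable)
    exact ae_of_all _ fun x => by
      rw [Real.norm_eq_abs]; show |(v x)⁻¹| ≤ _; rw [abs_of_pos (inv_pos.2 (hvpos x))]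
      exact inv_le_one_of_one_le₀ (hv1 x)
  -- FTC chain
  have hftc : 1 ≤ ∫ s in E, |deriv g s| := by
    have h5 := lipschitz_sub_le_integral_abs_deriv hg hab.le
    rw [hga, hgb, sub_zero] at h5
    refine h5.trans ?_
    rw [integral_Ioc_eq_integral_Ioo]
    apply setIntegral_mono_set i_abs
      (Filter.Eventually.of_forall fun s => abs_nonneg _)
      (HasSubset.Subset.eventuallyLE hsub)
  -- pointwise AM-GM
  have hptw : ∀ s, 2 * |deriv g s| ≤
      lam * (v s * (deriv g s) ^ 2) + lam⁻¹ * (v s)⁻¹ := by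
    intro s
    have hlv : 0 < lam * v s := mul_pos hlam (hvpos s)
    have h1 : (lam * v s) * (lam * v s)⁻¹ = 1 := mul_inv_cancel₀ hlv.ne'
    have h2 : lam⁻¹ * (v s)⁻¹ = (lam * v s)⁻¹ := by rw [mul_inv]
    rw [h2, ← mul_le_mul_iff_of_pos_right hlv]
    have h3 : (lam * v s)⁻¹ * (lam * v s) = 1 := inv_mul_cancel₀ hlv.ne'
    have h4 : (lam * v s) ^ 2 * (deriv g s) ^ 2 = (lam * v s) ^ 2 * |deriv g s| ^ 2 := by
      rw [sq_abs]
    nlinarith [sq_nonneg (lam * v s * |deriv g s| - 1), h3, h4]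
  -- integrate
  have hint2 : ∫ s in E, 2 * |deriv g s| ≤
      ∫ s in E, (lam * (v s * (deriv g s) ^ 2) + lam⁻¹ * (v s)⁻¹) := by
    apply setIntegral_mono_on (i_abs.const_mul 2)
      ((i_X.const_mul lam).add (i_inv.const_mul lam⁻¹)) hE
    exact fun s _ => hptw s
  have hYle : ∫ s in E, (v s)⁻¹ ≤ lam := bathtub hk hvc hcmp hE hvi ha_pos (le_of_eq ha.symm)
  have hsplit : ∫ s in E, (lam * (v s * (deriv g s) ^ 2) + lam⁻¹ * (v s)⁻¹)
      = lam * (∫ s in E, v s * (deriv g s) ^ 2) + lam⁻¹ * ∫ s in E, (v s)⁻¹ := by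
    rw [integral_add (i_X.const_mul lam) (i_inv.const_mul lam⁻¹),
      integral_const_mul, integral_const_mul]
  have h2int : ∫ s in E, 2 * |deriv g s| = 2 * ∫ s in E, |deriv g s| := integral_const_mul _ _
  have hYterm : lam⁻¹ * ∫ s in E, (v s)⁻¹ ≤ 1 := by
    rw [← inv_mul_cancel₀ hlam.ne']
    exact mul_le_mul_of_nonneg_left hYle (inv_pos.2 hlam).le
  refine ⟨ha_pos, ?_⟩
  rw [div_le_iff₀ hlam]
  have : 2 ≤ lam * (∫ s in E, v s * (deriv g s) ^ 2) + 1 := by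
    calc (2:ℝ) = 2 * 1 := by ring
      _ ≤ 2 * ∫ s in E, |deriv g s| := by linarith [hftc]
      _ = ∫ s in E, 2 * |deriv g s| := h2int.symm
      _ ≤ lam * (∫ s in E, v s * (deriv g s) ^ 2) + lam⁻¹ * ∫ s in E, (v s)⁻¹ := by
          rw [← hsplit]; exact hint2
      _ ≤ lam * (∫ s in E, v s * (deriv g s) ^ 2) + 1 := by linarith [hYterm]
  linarith [this]

set_option maxHeartbeats 2000000 in
/-- capacity lower bound for a non-contractible annulus of area `Ar`
on a cylinder of variable curvature at most `-k²`, with baseline of length `l`: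
the Dirichlet energy of any admissible Lipschitz function is at least
`k·l / (h₁ W' - h₁ (-W'))` with `W' = arsinh (k·Ar / (2l))`. -/
theorem capacity_lower_bound_variable_negative_curvature
    (k l : ℝ) (hk : 0 < k) (hl : 0 < l)
    (h : ℝ × ℝ → ℝ)
    (hpos : ∀ p : ℝ × ℝ, 0 < h p)
    (hsmooth : ∀ t : ℝ, ContDiff ℝ 2 (fun s => h (t, s)))
    (hbase : ∀ t : ℝ, h (t, 0) = 1)
    (hbase' : ∀ t : ℝ, deriv (fun s => h (t, s)) 0 = 0)
    (hcurv : ∀ t s : ℝ, k ^ 2 * h (t, s) ≤ deriv (deriv (fun s => h (t, s))) s)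
    (A : Set (ℝ × ℝ)) (hA : MeasurableSet A) (hAsub : A ⊆ Icc 0 l ×ˢ univ)
    (hAint : IntegrableOn (fun p => h p) A volume)
    (Ar : ℝ) (hAr : Ar = ∫ p in A, h p)
    (f : ℝ × ℝ → ℝ) (C : ℝ≥0) (hf : LipschitzWith C f)
    (hbdry : ∀ t ∈ Icc (0 : ℝ) l, ∃ α β : ℝ, α < β ∧ ({t} ×ˢ Ioo α β) ⊆ A ∧
      f (t, α) = 0 ∧ f (t, β) = 1)
    (W' : ℝ) (hW' : W' = Real.arsinh (k * Ar / (2 * l))) :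
    k * l / (h₁ W' - h₁ (-W')) ≤
      ∫ p in A, ((deriv (fun t => f (t, p.2)) p.1) ^ 2 / h p
        + h p * (deriv (fun s => f (p.1, s)) p.2) ^ 2) := by
  set Fi : ℝ × ℝ → ℝ := fun p => (deriv (fun t => f (t, p.2)) p.1) ^ 2 / h p
        + h p * (deriv (fun s => f (p.1, s)) p.2) ^ 2 with hFidef
  have hFinn : ∀ p, 0 ≤ Fi p := fun p => add_nonneg (div_nonneg (sq_nonneg _) (hpos p).le)
      (mul_nonneg (hpos p).le (sq_nonneg _))
  rcases le_or_gt Ar 0 with hAr0 | hArpos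
  · -- degenerate case: `Ar ≤ 0`, the left-hand side is nonpositive
    have hW0 : W' ≤ 0 := by
      rw [hW']
      apply Real.arsinh_nonpos_iff.2
      have : k * Ar ≤ 0 := mul_nonpos_of_nonneg_of_nonpos hk.le hAr0
      exact div_nonpos_of_nonpos_of_nonneg this (by positivity)
    have hD : h₁ W' - h₁ (-W') ≤ 0 := by
      have : Real.arctan (Real.exp W') ≤ Real.arctan (Real.exp (-W')) :=
        Real.arctan_strictMono.monotone (Real.exp_le_exp.2 (by linarith))
      simp only [h₁]
      linarith
    have hLHS : k * l / (h₁ W' - h₁ (-W')) ≤ 0 :=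
      div_nonpos_of_nonneg_of_nonpos (by positivity) hD
    exact hLHS.trans (setIntegral_nonneg hA (fun p _ => hFinn p))
  -- main case
  set m : ℝ := Ar / l with hmdef
  have hm : 0 < m := div_pos hArpos hl
  set Gm : ℝ := Gfun k m with hGmdef
  have hGm : 0 < Gm := Gfun_pos hk hm
  set q : ℝ := 1 / (1 + (k * m / 2) ^ 2) with hqdef
  have hq : 0 < q := by positivity
  -- comparison with cosh
  have hcomp : ∀ t s, Real.cosh (k * s) ≤ h (t, s) := fun t s =>
    cosh_le_of_ode hk (hsmooth t) (hbase t) (hbase' t) (fun s => hcurv t s) s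
  have hge1 : ∀ p : ℝ × ℝ, 1 ≤ h p := fun p =>
    (Real.one_le_cosh _).trans (by simpa using hcomp p.1 p.2)
  -- Lipschitz along lines
  have hfc : Continuous f := hf.continuous
  have hlip2 : ∀ t, LipschitzWith C (fun s => f (t, s)) := by
    intro t
    have h1 := hf.comp (LipschitzWith.prodMk_left (α := ℝ) (β := ℝ) t)
    rwa [mul_one] at h1
  have hlip1 : ∀ s, LipschitzWith C (fun τ => f (τ, s)) := by
    intro s
    have h1 := hf.comp (LipschitzWith.prodMk_right (α := ℝ) (β := ℝ) s)
    rwa [mul_one] at h1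
  have habs1 : ∀ p : ℝ × ℝ, |deriv (fun τ => f (τ, p.2)) p.1| ≤ (C : ℝ) := fun p => by
    simpa [Real.norm_eq_abs] using norm_deriv_le_of_lipschitz (𝕜 := ℝ) (hlip1 p.2)
  have habs2 : ∀ p : ℝ × ℝ, |deriv (fun s => f (p.1, s)) p.2| ≤ (C : ℝ) := fun p => by
    simpa [Real.norm_eq_abs] using norm_deriv_le_of_lipschitz (𝕜 := ℝ) (hlip2 p.1)
  -- joint measurability of the partial derivatives
  have md2 : Measurable (fun p : ℝ × ℝ => deriv (fun s => f (p.1, s)) p.2) := by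
    apply measurable_deriv_with_param (𝕜 := ℝ) (f := fun t s => f (t, s))
    exact hfc.comp (continuous_fst.prodMk continuous_snd)
  have md1' : Measurable (fun p : ℝ × ℝ => deriv (fun τ => f (τ, p.1)) p.2) := by
    apply measurable_deriv_with_param (𝕜 := ℝ) (f := fun s τ => f (τ, s))
    exact hfc.comp (continuous_snd.prodMk continuous_fst)
  have md1 : Measurable (fun p : ℝ × ℝ => deriv (fun τ => f (τ, p.2)) p.1) :=
    md1'.comp (measurable_snd.prodMk measurable_fst)
  -- integrability of the energy density on A
  have hham : AEMeasurable h (volume.restrict A) := hAint.aemeasurable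
  have hmeasA : AEStronglyMeasurable Fi (volume.restrict A) := by
    apply AEMeasurable.aestronglyMeasurable
    exact ((md1.aemeasurable.restrict.pow_const 2).div hham).add
      (hham.mul (md2.aemeasurable.restrict.pow_const 2))
  have hFi_le : ∀ p, Fi p ≤ 2 * (C : ℝ) ^ 2 * h p := by
    intro p
    have h1 := habs1 p
    have h2 := habs2 p
    have hp := hpos p
    have hp1 := hge1 p
    have e1 : (deriv (fun t => f (t, p.2)) p.1) ^ 2 ≤ (C : ℝ) ^ 2 := by
      rw [← sq_abs]; exact pow_le_pow_left₀ (abs_nonneg _) h1 2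
    have e2 : (deriv (fun s => f (p.1, s)) p.2) ^ 2 ≤ (C : ℝ) ^ 2 := by
      rw [← sq_abs]; exact pow_le_pow_left₀ (abs_nonneg _) h2 2
    have e3 : (deriv (fun t => f (t, p.2)) p.1) ^ 2 / h p ≤ (C : ℝ) ^ 2 := by
      rw [div_le_iff₀ hp]
      nlinarith [sq_nonneg (deriv (fun t => f (t, p.2)) p.1)]
    have e4 : h p * (deriv (fun s => f (p.1, s)) p.2) ^ 2 ≤ (C : ℝ) ^ 2 * h p := by
      nlinarith [sq_nonneg (deriv (fun s => f (p.1, s)) p.2)]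
    have e5 : (C : ℝ) ^ 2 ≤ (C : ℝ) ^ 2 * h p := by nlinarith [sq_nonneg (C : ℝ)]
    simp only [hFidef]
    linarith
  have hFi_int : IntegrableOn Fi A volume := by
    apply Integrable.mono' (hAint.const_mul (2 * (C : ℝ) ^ 2)) hmeasA
    exact ae_of_all _ fun p => by
      rw [Real.norm_eq_abs, abs_of_nonneg (hFinn p)]; exact hFi_le p
  -- pass to indicators and Fubini
  set ind : ℝ × ℝ → ℝ := A.indicator Fi with hinddef
  set indh : ℝ × ℝ → ℝ := A.indicator h with hindhdef
  have hind_int : Integrable ind (volume.prod volume) := by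
    rw [← Measure.volume_eq_prod]
    exact (integrable_indicator_iff hA).2 hFi_int
  have hindh_int : Integrable indh (volume.prod volume) := by
    rw [← Measure.volume_eq_prod]
    exact (integrable_indicator_iff hA).2 hAint
  set J : ℝ → ℝ := fun t => ∫ s, ind (t, s) with hJdef
  set av : ℝ → ℝ := fun t => ∫ s, indh (t, s) with havdef
  have hJint : Integrable J volume := hind_int.integral_prod_left
  have havint : Integrable av volume := hindh_int.integral_prod_left
  have hgoal_eq : ∫ p in A, Fi p = ∫ t, J t := by
    rw [← integral_indicator hA, ← hinddef, Measure.volume_eq_prod,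
      integral_prod _ hind_int]
  have hAr_eq : Ar = ∫ t, av t := by
    rw [hAr, ← integral_indicator hA, ← hindhdef, Measure.volume_eq_prod,
      integral_prod _ hindh_int]
  -- slice sets
  set E : ℝ → Set ℝ := fun t => {s | (t, s) ∈ A} with hEdef
  have hEmeas : ∀ t, MeasurableSet (E t) := fun t => measurable_prodMk_left hA
  have hslice : ∀ (F : ℝ × ℝ → ℝ) (t : ℝ),
      (fun s => A.indicator F (t, s)) = (E t).indicator (fun s => F (t, s)) := by
    intro F t
    funext s
    by_cases hs : (t, s) ∈ A
    · rw [Set.indicator_of_mem hs, Set.indicator_of_mem (by exact hs)]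
    · rw [Set.indicator_of_notMem hs, Set.indicator_of_notMem (by exact hs)]
  have hEempty : ∀ t, t ∉ Icc (0:ℝ) l → ∀ s, (t, s) ∉ A := by
    intro t ht s hts
    exact ht (hAsub hts).1
  have hav0 : ∀ t, t ∉ Icc (0:ℝ) l → av t = 0 := by
    intro t ht
    have : (fun s => indh (t, s)) = fun _ => (0:ℝ) := by
      funext s
      exact Set.indicator_of_notMem (hEempty t ht s) _
    rw [havdef]
    simp only [this, integral_zero]
  have hJnn : ∀ t, 0 ≤ J t := by
    intro t
    apply integral_nonneg
    intro s
    exact Set.indicator_nonneg (fun p _ => hFinn p) _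
  -- the key a.e. slice estimate
  have haeJ : ∀ᵐ t : ℝ, t ∈ Icc (0:ℝ) l →
      (Gm - q * (av t - m)) / Gm ^ 2 ≤ J t := by
    filter_upwards [hind_int.prod_right_ae, hindh_int.prod_right_ae] with t hit hiht htmem
    obtain ⟨α, β, hab, hsubA, hfα, hfβ⟩ := hbdry t htmem
    have hsub : Set.Ioo α β ⊆ E t := by
      intro s hs
      exact hsubA (by exact ⟨rfl, hs⟩ : (t, s) ∈ ({t} ×ˢ Ioo α β))
    have hiht' : IntegrableOn (fun s => h (t, s)) (E t) volume := by
      rw [hindhdef, hslice h t] at hiht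
      exact (integrable_indicator_iff (hEmeas t)).1 hiht
    have hit' : IntegrableOn (fun s => Fi (t, s)) (E t) volume := by
      rw [hinddef, hslice Fi t] at hit
      exact (integrable_indicator_iff (hEmeas t)).1 hit
    have havt : av t = ∫ s in E t, h (t, s) := by
      rw [havdef]
      simp only [hindhdef]
      rw [hslice h t, integral_indicator (hEmeas t)]
    obtain ⟨hat_pos, hXbound⟩ := slice_bound hk (hsmooth t).continuous (hcomp t) (hlip2 t)
      (hEmeas t) hiht' hab hsub hfα hfβ havt
    -- J t ≥ ∫_{E t} h(t,·) (deriv g)²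
    have hJt : J t = ∫ s in E t, Fi (t, s) := by
      rw [hJdef]
      simp only [hinddef]
      rw [hslice Fi t, integral_indicator (hEmeas t)]
    have hsecond_int : IntegrableOn (fun s => h (t, s) * (deriv (fun s => f (t, s)) s) ^ 2)
        (E t) volume := by
      apply Integrable.mono' (hiht'.const_mul ((C : ℝ) ^ 2))
      · exact (((hsmooth t).continuous.measurable.mul
          ((measurable_deriv _).pow_const 2)).aestronglyMeasurable)
      · refine ae_of_all _ fun s => ?_
        rw [Real.norm_eq_abs]; show |h (t, s) * (deriv (fun s => f (t, s)) s) ^ 2| ≤ _; rw [abs_of_nonneg (mul_nonneg (hpos (t, s)).le (sq_nonneg _))]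
        have := habs2 (t, s)
        have h5 : (deriv (fun s => f (t, s)) s) ^ 2 ≤ (C : ℝ) ^ 2 := by
          rw [← sq_abs]; exact pow_le_pow_left₀ (abs_nonneg _) this 2
        nlinarith [hpos (t, s)]
    have hX_le_J : ∫ s in E t, h (t, s) * (deriv (fun s => f (t, s)) s) ^ 2 ≤ J t := by
      rw [hJt]
      apply setIntegral_mono_on hsecond_int hit' (hEmeas t)
      intro s _
      have : 0 ≤ (deriv (fun τ => f (τ, s)) t) ^ 2 / h (t, s) :=
        div_nonneg (sq_nonneg _) (hpos (t, s)).le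
      simp only [hFidef]
      linarith [this]
    have hX : 1 / Gfun k (av t) ≤ J t := le_trans hXbound hX_le_J
    -- tangent line comparison
    have hGa : 0 < Gfun k (av t) := Gfun_pos hk hat_pos
    have hT := Gfun_tangent hk hat_pos.le hm.le
    rw [← hGmdef, ← hqdef] at hT
    have htang : (Gm - q * (av t - m)) / Gm ^ 2 ≤ 1 / Gfun k (av t) := by
      rw [div_le_div_iff₀ (by positivity) hGa]
      rcases le_total (q * (av t - m)) Gm with hS | hS
      · nlinarith [mul_le_mul_of_nonneg_left hT (sub_nonneg.2 hS),
          sq_nonneg (q * (av t - m)), hGm]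
      · nlinarith [mul_nonneg hGa.le (sub_nonneg.2 hS), hGm, sq_nonneg Gm]
    exact htang.trans hX
  -- assemble
  have hLint : IntegrableOn (fun t => (Gm - q * (av t - m)) / Gm ^ 2) (Icc (0:ℝ) l) volume := by
    have h6 : (fun t => (Gm - q * (av t - m)) / Gm ^ 2)
        = fun t => (Gm + q * m) / Gm ^ 2 - (q / Gm ^ 2) * av t := by
      funext t; field_simp; ring
    rw [h6]
    exact (integrableOn_const measure_Icc_lt_top.ne).sub
      ((havint.integrableOn).const_mul _)
  have hstep : ∫ t in Icc (0:ℝ) l, (Gm - q * (av t - m)) / Gm ^ 2 ≤ ∫ t in Icc (0:ℝ) l, J t := by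
    apply setIntegral_mono_ae_restrict hLint (hJint.integrableOn)
    filter_upwards [ae_restrict_of_ae haeJ, ae_restrict_mem measurableSet_Icc] with t h7 h8
    exact h7 h8
  have havIcc : ∫ t in Icc (0:ℝ) l, av t = Ar := by
    rw [setIntegral_eq_integral_of_forall_compl_eq_zero (fun t ht => hav0 t ht)]
    exact hAr_eq.symm
  have hLval : ∫ t in Icc (0:ℝ) l, (Gm - q * (av t - m)) / Gm ^ 2 = l / Gm := by
    have h6 : (fun t => (Gm - q * (av t - m)) / Gm ^ 2)
        = fun t => (Gm + q * m) / Gm ^ 2 - (q / Gm ^ 2) * av t := by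
      funext t; field_simp; ring
    rw [h6, integral_sub (integrableOn_const (C := (Gm + q * m) / Gm ^ 2) measure_Icc_lt_top.ne :
        IntegrableOn _ (Icc (0:ℝ) l) volume)
      ((havint.integrableOn).const_mul _)]
    rw [integral_const_mul, havIcc, setIntegral_const, Real.volume_real_Icc_of_le hl.le,
      smul_eq_mul]
    have hArlm : Ar = l * m := by rw [hmdef]; field_simp
    rw [hArlm]
    field_simp
    ring
  have hfinal : l / Gm ≤ ∫ t, J t := by
    calc l / Gm = ∫ t in Icc (0:ℝ) l, (Gm - q * (av t - m)) / Gm ^ 2 := hLval.symm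
      _ ≤ ∫ t in Icc (0:ℝ) l, J t := hstep
      _ ≤ ∫ t, J t := setIntegral_le_integral hJint (ae_of_all _ hJnn)
  -- identify the left-hand side
  have hWm : W' = Real.arsinh (k * m / 2) := by
    rw [hW', hmdef]
    congr 1
    field_simp
  have hGmD : Gm = (h₁ W' - h₁ (-W')) / k := by
    rw [hGmdef]
    rw [show Gfun k m = (h₁ (Real.arsinh (k * m / 2)) - h₁ (-Real.arsinh (k * m / 2))) / k
      from rfl, ← hWm]
  have hD : 0 < h₁ W' - h₁ (-W') := by
    have h9 : 0 < Gm := hGm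
    rw [hGmD] at h9
    rcases div_pos_iff.mp h9 with ⟨h1, _⟩ | ⟨_, h2⟩
    · exact h1
    · linarith
  have hLHS_eq : k * l / (h₁ W' - h₁ (-W')) = l / Gm := by
    rw [hGmD]
    field_simp
  rw [hLHS_eq, hgoal_eq]
  exact hfinal
end

section
/- Let k > 0, l > 0 and W > 0. Set h₁(x) = 2·arctan(exp(x)) and let p : [0,l] × [−W,W] → ℝ be defined by p(t,s) = (h₁(ks) − h₁(−kW)) / (h₁(kW) − h₁(−kW)). Then p(t,−W) = 0, p(t,W) = 1, the annulus A = [0,l] × [−W,W] with metric coefficient h(s) = cosh(ks) has area ∬_A cosh(ks) ds dt = (2l/k)·sinh(kW), and the energy of p equals ∬_A ( (∂_t p)²/cosh(ks) + cosh(ks)·(∂_s p)² ) ds dt = k·l / (h₁(kW) − h₁(−kW)). Hence on a cylinder of constant curvature −k² the annulus of constant width centered on the baseline attains the lower bound k·l/(h₁(W') − h₁(−W')) with W' = kW = arcsinh(k·area/(2l)), so this bound is sharp. -/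
open Real MeasureTheory Set

lemma h₁_hasDerivAt (x : ℝ) : HasDerivAt h₁ (1 / Real.cosh x) x := by
  have h : HasDerivAt (fun y : ℝ => 2 * Real.arctan (Real.exp y))
      (2 * (1 / (1 + Real.exp x ^ 2) * Real.exp x)) x :=
    (((Real.hasDerivAt_arctan (Real.exp x)).comp x (Real.hasDerivAt_exp x))).const_mul 2
  convert h using 1
  · rfl
  have hx : Real.exp x ≠ 0 := (Real.exp_pos x).ne'
  rw [Real.cosh_eq, Real.exp_neg]
  field_simp
  ring

lemma h₁_comp_hasDerivAt (k x : ℝ) :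
    HasDerivAt (fun s : ℝ => h₁ (k * s)) (1 / Real.cosh (k * x) * k) x := by
  have h : HasDerivAt (fun s : ℝ => k * s) k x := by
    simpa using (hasDerivAt_id x).const_mul k
  exact (h₁_hasDerivAt (k * x)).comp x h

lemma prod_integral (a b c d : ℝ) (hab : a ≤ b) (hcd : c ≤ d) (g : ℝ → ℝ)
    (hg : Continuous g) :
    (∫ q in Icc a b ×ˢ Icc c d, g q.2) = (b - a) * ∫ s in c..d, g s := by
  have hint : IntegrableOn (fun q : ℝ × ℝ => g q.2) (Icc a b ×ˢ Icc c d)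
      (volume.prod volume) := by
    rw [← Measure.volume_eq_prod]
    exact (hg.comp continuous_snd).continuousOn.integrableOn_compact
      (isCompact_Icc.prod isCompact_Icc)
  rw [Measure.volume_eq_prod, setIntegral_prod _ hint]
  have h1 : (∫ x in Icc a b, ∫ y in Icc c d, g y)
      = (volume (Icc a b)).toReal • ∫ y in Icc c d, g y := setIntegral_const _
  rw [h1, MeasureTheory.integral_Icc_eq_integral_Ioc, ← intervalIntegral.integral_of_le hcd,
    Real.volume_Icc, smul_eq_mul, ENNReal.toReal_ofReal (by linarith)]

set_option maxHeartbeats 1000000 in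
/-- on the cylinder of constant curvature `-k²` (Fermi metric
coefficient `cosh (k s)`), the annulus `A = [0,l] × [-W,W]` of constant width
centered on the baseline, together with the test function
`p (t,s) = (h₁ (k s) - h₁ (-k W)) / (h₁ (k W) - h₁ (-k W))`, satisfies:
`p = 0` on `s = -W`, `p = 1` on `s = W`, `area A = (2l/k)·sinh (k W)`, and the
energy of `p` equals `k·l / (h₁ (k W) - h₁ (-k W))`, so the capacity lower
bound is sharp. -/
theorem capacity_lower_bound_sharp_negative_curvature
    (k l W : ℝ) (hk : 0 < k) (hl : 0 < l) (hW : 0 < W)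
    (p : ℝ × ℝ → ℝ)
    (hp : ∀ t s : ℝ, p (t, s) = (h₁ (k * s) - h₁ (-(k * W))) / (h₁ (k * W) - h₁ (-(k * W))))
    (A : Set (ℝ × ℝ)) (hA : A = Icc 0 l ×ˢ Icc (-W) W) :
    (∀ t : ℝ, p (t, -W) = 0) ∧ (∀ t : ℝ, p (t, W) = 1) ∧
    (∫ q in A, Real.cosh (k * q.2)) = (2 * l / k) * Real.sinh (k * W) ∧
    (∫ q in A, ((deriv (fun t => p (t, q.2)) q.1) ^ 2 / Real.cosh (k * q.2)
        + Real.cosh (k * q.2) * (deriv (fun s => p (q.1, s)) q.2) ^ 2))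
      = k * l / (h₁ (k * W) - h₁ (-(k * W))) := by
  have hmono : StrictMono h₁ := by
    intro x y hxy
    exact mul_lt_mul_of_pos_left (Real.arctan_strictMono (Real.exp_lt_exp.2 hxy)) two_pos
  have hD : 0 < h₁ (k * W) - h₁ (-(k * W)) := by
    have : (-(k * W)) < k * W := by nlinarith
    linarith [hmono this]
  set D := h₁ (k * W) - h₁ (-(k * W)) with hDdef
  clear_value D
  have hWW : (-W : ℝ) ≤ W := by linarith
  refine ⟨?_, ?_, ?_, ?_⟩
  · intro t; rw [hp]; simp [mul_neg]
  · intro t; rw [hp, ← hDdef, div_self hD.ne']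
  · have h3 := prod_integral 0 l (-W) W hl.le hWW (fun s => Real.cosh (k * s)) (by continuity)
    rw [hA]
    simp only [sub_zero] at h3
    rw [h3]
    have : (∫ s in (-W)..W, Real.cosh (k * s))
        = Real.sinh (k * W) / k - Real.sinh (k * (-W)) / k := by
      apply intervalIntegral.integral_eq_sub_of_hasDerivAt
      · intro x _
        have h := ((Real.hasDerivAt_sinh (k * x)).comp x
          (by simpa using (hasDerivAt_id x).const_mul k : HasDerivAt (fun s : ℝ => k * s) k x)).div_const k
        refine h.congr_deriv ?_
        exact mul_div_cancel_right₀ _ hk.ne'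
      · exact (Continuous.intervalIntegrable (by continuity) _ _)
    rw [this, mul_neg, Real.sinh_neg]
    field_simp
    ring
  · have hderiv_t : ∀ q : ℝ × ℝ, deriv (fun t => p (t, q.2)) q.1 = 0 := by
      intro q
      have h : (fun t => p (t, q.2)) = fun _ => (h₁ (k * q.2) - h₁ (-(k * W))) / D := by
        funext t; exact hp t q.2
      rw [h, deriv_const]
    have hderiv_s : ∀ q : ℝ × ℝ, deriv (fun s => p (q.1, s)) q.2
        = k / Real.cosh (k * q.2) / D := by
      intro q
      have heq : (fun s => p (q.1, s)) = fun s => (h₁ (k * s) - h₁ (-(k * W))) / D := by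
        funext s; exact hp q.1 s
      rw [heq]
      have h2 : HasDerivAt (fun s => (h₁ (k * s) - h₁ (-(k * W))) / D)
          (1 / Real.cosh (k * q.2) * k / D) q.2 :=
        ((h₁_comp_hasDerivAt k q.2).sub_const _).div_const D
      rw [h2.deriv]; ring
    have hint_eq : (∫ q in A, ((deriv (fun t => p (t, q.2)) q.1) ^ 2 / Real.cosh (k * q.2)
        + Real.cosh (k * q.2) * (deriv (fun s => p (q.1, s)) q.2) ^ 2))
        = ∫ q in A, k ^ 2 / (Real.cosh (k * q.2) * D ^ 2) := by
      apply setIntegral_congr_fun (hA ▸ (measurableSet_Icc.prod measurableSet_Icc))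
      intro q _
      simp only [hderiv_t q, hderiv_s q]
      have hc : Real.cosh (k * q.2) ≠ 0 := (Real.cosh_pos (k * q.2)).ne'
      field_simp
      ring
    have hcontg : Continuous fun s => k ^ 2 / (Real.cosh (k * s) * D ^ 2) := by
      apply Continuous.div continuous_const
      · exact (Real.continuous_cosh.comp (continuous_const.mul continuous_id)).mul continuous_const
      · intro x; exact mul_ne_zero (Real.cosh_pos (k * x)).ne' (pow_ne_zero 2 hD.ne')
    have h3 := prod_integral 0 l (-W) W hl.le hWW _ hcontg
    simp only [sub_zero] at h3
    rw [hint_eq, hA, h3]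
    have h4 : (∫ s in (-W)..W, k ^ 2 / (Real.cosh (k * s) * D ^ 2))
        = (k / D ^ 2) * h₁ (k * W) - (k / D ^ 2) * h₁ (k * (-W)) := by
      apply intervalIntegral.integral_eq_sub_of_hasDerivAt
      · intro x _
        have h1 : HasDerivAt (fun s => (k / D ^ 2) * h₁ (k * s))
            ((k / D ^ 2) * (1 / Real.cosh (k * x) * k)) x :=
          (h₁_comp_hasDerivAt k x).const_mul _
        refine h1.congr_deriv ?_
        have hc : Real.cosh (k * x) ≠ 0 := (Real.cosh_pos (k * x)).ne'
        simp only [div_eq_mul_inv, mul_inv]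
        ring
      · exact hcontg.intervalIntegrable _ _
    rw [h4]
    have h5 : (k / D ^ 2) * h₁ (k * W) - (k / D ^ 2) * h₁ (k * (-W)) = k / D := by
      have : k * (-W) = -(k * W) := by ring
      rw [this, ← mul_sub, ← hDdef]
      field_simp
    rw [h5]
    field_simp
end

section
/- Let k > 0, l > 0, and −π/(2k) < −a ≤ W < π/(2k) with a ≥ 0. Set h₂(x) = log((1+sin x)/cos x) and define p : [0,l] × [−a, W] → ℝ by p(t,s) = (h₂(ks) − h₂(−ka)) / (h₂(kW) − h₂(−ka)). Then p(t,−a) = 0, p(t,W) = 1, the annulus A = [0,l] × [−a, W] with metric coefficient h(s) = cos(ks) has area ∬_A cos(ks) ds dt = (l/k)·(sin(kW) + sin(ka)), and the energy of p equals ∬_A ( (∂_t p)²/cos(ks) + cos(ks)·(∂_s p)² ) ds dt = k·l / (h₂(kW) − h₂(−ka)). Hence on a cylinder of constant curvature k² the annulus of constant width with one boundary equal to the shortest boundary s = −a of the cylinder attains the lower bound of the capacity estimate, so that bound is sharp. -/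
open Real MeasureTheory Set

/-- `h₂ x = log ((1 + sin x) / cos x)`, an antiderivative of `1 / cos`. -/
noncomputable def h₂ (x : ℝ) : ℝ := Real.log ((1 + Real.sin x) / Real.cos x)

lemma hasDerivAt_h₂ {x : ℝ} (h1 : -(π/2) < x) (h2 : x < π/2) :
    HasDerivAt h₂ (1 / Real.cos x) x := by
  have hc : 0 < Real.cos x := Real.cos_pos_of_mem_Ioo ⟨h1, h2⟩
  have hs : -1 < Real.sin x := by
    have hmem : -(π/2) ∈ Icc (-(π/2)) (π/2) := ⟨le_rfl, by linarith [Real.pi_pos]⟩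
    have := Real.strictMonoOn_sin hmem ⟨le_of_lt h1, le_of_lt h2⟩ h1
    simpa using this
  have h1s : 0 < 1 + Real.sin x := by linarith
  have hd1 : HasDerivAt (fun x => (1 + Real.sin x) / Real.cos x)
      ((1 + Real.sin x) / (Real.cos x)^2) x := by
    have := ((hasDerivAt_const x (1:ℝ)).add (Real.hasDerivAt_sin x)).div
      (Real.hasDerivAt_cos x) hc.ne'
    refine this.congr_deriv ?_
    have := Real.sin_sq_add_cos_sq x
    rw [div_left_inj' (pow_ne_zero 2 hc.ne')]
    change (0 + Real.cos x) * Real.cos x - (1 + Real.sin x) * -Real.sin x = 1 + Real.sin x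
    nlinarith [this]
  have hd2 := hd1.log (by positivity)
  have : HasDerivAt (fun x => Real.log ((1 + Real.sin x) / Real.cos x))
      (1 / Real.cos x) x := by
    convert hd2 using 1
    field_simp
  exact this

lemma box_integral (l a b : ℝ) (hl : 0 ≤ l) (f : ℝ → ℝ) :
    ∫ q in Icc (0:ℝ) l ×ˢ Icc a b, f q.2 = l * ∫ s in Icc a b, f s := by
  rw [MeasureTheory.Measure.volume_eq_prod]
  have := MeasureTheory.setIntegral_prod_mul (μ := (volume : Measure ℝ))
    (ν := (volume : Measure ℝ)) (fun _ : ℝ => (1:ℝ)) f (Icc 0 l) (Icc a b)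
  simpa [Real.volume_Icc, hl] using this

lemma Icc_integral_eq {a b : ℝ} (hab : a ≤ b) (f F : ℝ → ℝ)
    (hF : ∀ x ∈ Icc a b, HasDerivAt F (f x) x) (hf : ContinuousOn f (Icc a b)) :
    ∫ s in Icc a b, f s = F b - F a := by
  rw [MeasureTheory.integral_Icc_eq_integral_Ioc, ← intervalIntegral.integral_of_le hab]
  exact intervalIntegral.integral_eq_sub_of_hasDerivAt
    (fun x hx => hF x (by rwa [Set.uIcc_of_le hab] at hx))
    ((hf.mono (by rw [Set.uIcc_of_le hab])).intervalIntegrable)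

/-- on the cylinder of constant curvature `k²` (Fermi metric
coefficient `cos (k s)`), the annulus `A = [0,l] × [-a,W]` of constant width
anchored at the shortest boundary `s = -a`, together with the test function
`p (t,s) = (h₂ (k s) - h₂ (-k a)) / (h₂ (k W) - h₂ (-k a))`, satisfies:
`p = 0` on `s = -a`, `p = 1` on `s = W`, `area A = (l/k)·(sin (k W) + sin (k a))`,
and the energy of `p` equals `k·l / (h₂ (k W) - h₂ (-k a))`, so the capacity
lower bound is sharp. -/
theorem capacity_lower_bound_sharp_positive_curvature
    (k l a W : ℝ) (hk : 0 < k) (hl : 0 < l) (ha : 0 ≤ a)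
    (haW : -a < W) (hW : W < π / (2 * k)) (ha' : -(π / (2 * k)) < -a)
    (p : ℝ × ℝ → ℝ)
    (hp : ∀ t s : ℝ, p (t, s) = (h₂ (k * s) - h₂ (-(k * a))) / (h₂ (k * W) - h₂ (-(k * a))))
    (A : Set (ℝ × ℝ)) (hA : A = Icc 0 l ×ˢ Icc (-a) W) :
    (∀ t : ℝ, p (t, -a) = 0) ∧ (∀ t : ℝ, p (t, W) = 1) ∧
    (∫ q in A, Real.cos (k * q.2)) = (l / k) * (Real.sin (k * W) + Real.sin (k * a)) ∧
    (∫ q in A, ((deriv (fun t => p (t, q.2)) q.1) ^ 2 / Real.cos (k * q.2)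
        + Real.cos (k * q.2) * (deriv (fun s => p (q.1, s)) q.2) ^ 2))
      = k * l / (h₂ (k * W) - h₂ (-(k * a))) := by
  set c := h₂ (-(k * a)) with hc
  set D := h₂ (k * W) - h₂ (-(k * a)) with hD
  -- basic bounds
  have hkW : k * W < π/2 := by
    have : W < (π/2) / k := by rw [div_div]; exact hW
    calc k * W = W * k := mul_comm _ _
    _ < π/2 := (lt_div_iff₀ hk).mp this
  have hka : -(π/2) < -(k * a) := by
    have : a < (π/2) / k := by
      have : -((π/2)/k) < -a := by rw [div_div]; exact ha'
      linarith
    have := (lt_div_iff₀ hk).mp this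
    nlinarith
  have hkaW : -(k * a) < k * W := by nlinarith
  have hka2 : -(k * a) < π/2 := lt_of_lt_of_le (by nlinarith) (le_of_lt hkW)
  have hkW2 : -(π/2) < k * W := lt_trans hka hkaW
  -- membership helper
  have hmem : ∀ s ∈ Icc (-a) W, -(π/2) < k * s ∧ k * s < π/2 := by
    intro s hs
    constructor
    · nlinarith [hs.1]
    · nlinarith [hs.2]
  -- cos positive on the strip
  have hcospos : ∀ s ∈ Icc (-a) W, 0 < Real.cos (k * s) := by
    intro s hs
    exact Real.cos_pos_of_mem_Ioo ⟨(hmem s hs).1, (hmem s hs).2⟩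
  -- D > 0
  have hsec_cont : ContinuousOn (fun s => 1 / Real.cos (k * s)) (Icc (-a) W) := by
    apply ContinuousOn.div continuousOn_const
      ((Real.continuous_cos.comp (continuous_const.mul continuous_id)).continuousOn)
    intro s hs
    exact (hcospos s hs).ne'
  have hderiv_sec : ∀ s ∈ Icc (-a) W,
      HasDerivAt (fun s => h₂ (k * s) / k) (1 / Real.cos (k * s)) s := by
    intro s hs
    have hmul : HasDerivAt (fun s : ℝ => k * s) k s := by
      simpa using (hasDerivAt_id s).const_mul k
    have := ((hasDerivAt_h₂ (hmem s hs).1 (hmem s hs).2).comp s hmul).div_const k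
    rw [mul_div_assoc, div_self hk.ne', mul_one] at this
    exact this
  have hsec_int : ∫ s in Icc (-a) W, 1 / Real.cos (k * s) = D / k := by
    rw [Icc_integral_eq (le_of_lt haW) _ _ hderiv_sec hsec_cont]
    rw [hD]; ring
  have hDpos : 0 < D := by
    have hpos : 0 < ∫ s in Icc (-a) W, 1 / Real.cos (k * s) := by
      rw [MeasureTheory.integral_Icc_eq_integral_Ioc,
        ← intervalIntegral.integral_of_le (le_of_lt haW)]
      apply intervalIntegral.intervalIntegral_pos_of_pos_on
      · exact (hsec_cont.mono (by rw [Set.uIcc_of_le (le_of_lt haW)])).intervalIntegrable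
      · intro s hs
        exact div_pos one_pos (hcospos s ⟨le_of_lt hs.1, le_of_lt hs.2⟩)
      · exact haW
    rw [hsec_int] at hpos
    have := mul_pos hpos hk
    rwa [div_mul_cancel₀ _ hk.ne'] at this
  refine ⟨?_, ?_, ?_, ?_⟩
  · intro t; rw [hp]; simp [hD, hc]
  · intro t; rw [hp]; exact div_self hDpos.ne'
  -- area
  · have hbox := box_integral l (-a) W (le_of_lt hl) (fun s => Real.cos (k * s))
    rw [hA, hbox]
    have : ∫ s in Icc (-a) W, Real.cos (k * s)
        = Real.sin (k * W) / k - Real.sin (k * (-a)) / k := by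
      apply Icc_integral_eq (le_of_lt haW)
      · intro s hs
        have hmul : HasDerivAt (fun s : ℝ => k * s) k s := by
          simpa using (hasDerivAt_id s).const_mul k
        have := ((Real.hasDerivAt_sin (k * s)).comp s hmul).div_const k
        rw [mul_div_assoc, div_self hk.ne', mul_one] at this
        exact this
      · exact (Real.continuous_cos.comp (continuous_const.mul continuous_id)).continuousOn
    rw [this]
    have : Real.sin (k * (-a)) = -Real.sin (k * a) := by
      rw [mul_neg, Real.sin_neg]
    rw [this]
    field_simp
    ring
  -- energy
  · have hAm : MeasurableSet A := by
      rw [hA]; exact measurableSet_Icc.prod measurableSet_Icc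
    have hEq : EqOn
        (fun q : ℝ × ℝ => ((deriv (fun t => p (t, q.2)) q.1) ^ 2 / Real.cos (k * q.2)
          + Real.cos (k * q.2) * (deriv (fun s => p (q.1, s)) q.2) ^ 2))
        (fun q : ℝ × ℝ => (k^2 / D^2) * (1 / Real.cos (k * q.2))) A := by
      intro q hq
      rw [hA] at hq
      obtain ⟨hq1, hq2⟩ := hq
      have hcq : 0 < Real.cos (k * q.2) := hcospos q.2 hq2
      have e1 : deriv (fun t => p (t, q.2)) q.1 = 0 := by
        have : (fun t => p (t, q.2)) = fun _ => (h₂ (k * q.2) - c) / D :=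
          funext fun t => hp t q.2
        rw [this, deriv_const]
      have e2 : deriv (fun s => p (q.1, s)) q.2 = (1 / Real.cos (k * q.2) * k) / D := by
        have hfun : (fun s => p (q.1, s)) = fun s => (h₂ (k * s) - c) / D :=
          funext fun s => hp q.1 s
        rw [hfun]
        have hmul : HasDerivAt (fun s : ℝ => k * s) k q.2 := by
          simpa using (hasDerivAt_id q.2).const_mul k
        have hd := (((hasDerivAt_h₂ (hmem q.2 hq2).1 (hmem q.2 hq2).2).comp q.2
          hmul).sub_const c).div_const D
        exact hd.deriv
      simp only [e1, e2]
      field_simp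
      ring
    have hbox := box_integral l (-a) W (le_of_lt hl)
      (fun s => (k^2 / D^2) * (1 / Real.cos (k * s)))
    rw [MeasureTheory.setIntegral_congr_fun hAm hEq, hA, hbox,
      MeasureTheory.integral_const_mul, hsec_int]
    field_simp
end

section
/- Let l > 0. Let A ⊆ [0,l] × ℝ be a measurable set of finite Lebesgue measure |A| > 0, and let f : ℝ × ℝ → ℝ be Lipschitz such that for every t ∈ [0,l] there exist α < β with {t} × (α,β) ⊆ A, f(t,α) = 0 and f(t,β) = 1. Then the Dirichlet energy satisfies ∬_A |∇f|² ds dt ≥ l² / |A|. (This is the flat, k → 0, limit case of the capacity lower bound: on a Euclidean cylinder of circumference l, every non-contractible annulus A satisfies cap(A) ≥ l²/area(A).) -/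
open Real MeasureTheory Set
open scoped NNReal ENNReal

lemma one_le_lintegral_abs_deriv {C : ℝ≥0} {φ : ℝ → ℝ} (hφ : LipschitzWith C φ)
    {α β : ℝ} (hab : α < β) (h0 : φ α = 0) (h1 : φ β = 1) :
    (1 : ℝ≥0∞) ≤ ∫⁻ s in Ioo α β, ENNReal.ofReal |deriv φ s| := by
  set g : ℝ → ℝ := fun s => C * s - φ s with hg
  have hmono : Monotone g := by
    intro s s' hss
    have hd := hφ.dist_le_mul s' s
    rw [Real.dist_eq, Real.dist_eq] at hd
    have h2 : φ s' - φ s ≤ C * (s' - s) := by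
      have := le_trans (le_abs_self _) hd
      rw [abs_of_nonneg (sub_nonneg.2 hss)] at this
      linarith
    simp only [g]
    linarith
  have hcont : Continuous g := (continuous_const.mul continuous_id).sub hφ.continuous
  have hGeq : ∀ x, hmono.stieltjesFunction x = g x := by
    intro x
    rw [hmono.stieltjesFunction_eq]
    exact rightLim_eq_of_tendsto
      ((hcont.tendsto x).mono_left nhdsWithin_le_nhds)
  set μ := hmono.stieltjesFunction.measure with hμ
  set d : ℝ → ℝ≥0∞ := μ.rnDeriv volume with hd
  have hd_meas : Measurable d := Measure.measurable_rnDeriv μ volume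
  have hφeq : φ = fun s => C * s - g s := by funext s; simp [g]
  have hderiv : ∀ᵐ x, deriv φ x = C - (d x).toReal := by
    filter_upwards [hmono.ae_hasDerivAt] with x hx
    have h1 : HasDerivAt (fun s : ℝ => (C : ℝ) * s) C x := by
      simpa using (hasDerivAt_id x).const_mul (C : ℝ)
    have : HasDerivAt φ ((C : ℝ) - (d x).toReal) x := by
      rw [hφeq]; exact h1.sub hx
    exact this.deriv
  have hIoo_sub : ∫⁻ s in Ioo α β, d s ≤ μ (Ioo α β) := by
    calc ∫⁻ s in Ioo α β, d s = volume.withDensity d (Ioo α β) :=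
          (withDensity_apply d measurableSet_Ioo).symm
      _ ≤ μ (Ioo α β) := Measure.withDensity_rnDeriv_le μ volume _
  have hμIoc : μ (Ioo α β) ≤ ENNReal.ofReal (C * (β - α) - 1) := by
    calc μ (Ioo α β) ≤ μ (Ioc α β) := measure_mono Ioo_subset_Ioc_self
      _ = ENNReal.ofReal (g β - g α) := by
          rw [hμ, StieltjesFunction.measure_Ioc, hGeq, hGeq]
      _ = ENNReal.ofReal (C * (β - α) - 1) := by
          simp only [g, h0, h1]; ring_nf
  have hC1 : (1 : ℝ) ≤ C * (β - α) := by
    have := hmono hab.le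
    simp only [g, h0, h1] at this
    linarith
  calc (1 : ℝ≥0∞) = ENNReal.ofReal (C * (β - α)) - ENNReal.ofReal (C * (β - α) - 1) := by
        rw [← ENNReal.ofReal_sub _ (by linarith)]; norm_num
    _ ≤ (∫⁻ s in Ioo α β, ENNReal.ofReal C)
        - ∫⁻ s in Ioo α β, ENNReal.ofReal (d s).toReal := by
        apply tsub_le_tsub
        · rw [lintegral_const, Measure.restrict_apply MeasurableSet.univ, univ_inter,
            Real.volume_Ioo, ← ENNReal.ofReal_mul C.coe_nonneg]
        · exact le_trans (lintegral_mono fun s => ENNReal.ofReal_toReal_le)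
            (hIoo_sub.trans hμIoc)
    _ ≤ ∫⁻ s in Ioo α β, (ENNReal.ofReal C - ENNReal.ofReal (d s).toReal) :=
        lintegral_sub_le _ _
          (ENNReal.measurable_ofReal.comp (ENNReal.measurable_toReal.comp hd_meas))
    _ = ∫⁻ s in Ioo α β, ENNReal.ofReal ((C : ℝ) - (d s).toReal) := by
        refine lintegral_congr fun s => ?_
        rw [ENNReal.ofReal_sub _ ENNReal.toReal_nonneg]
    _ ≤ ∫⁻ s in Ioo α β, ENNReal.ofReal |deriv φ s| := by
        apply lintegral_mono_ae
        filter_upwards [ae_restrict_of_ae hderiv] with s hs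
        exact ENNReal.ofReal_le_ofReal (hs ▸ le_abs_self _)

lemma abs_deriv_le_of_lipschitz {C : ℝ≥0} {φ : ℝ → ℝ} (hφ : LipschitzWith C φ) (x : ℝ) :
    |deriv φ x| ≤ C := by
  calc |deriv φ x| = ‖fderiv ℝ φ x 1‖ := by rw [fderiv_apply_one_eq_deriv, Real.norm_eq_abs]
    _ ≤ ‖fderiv ℝ φ x‖ * ‖(1 : ℝ)‖ := (fderiv ℝ φ x).le_opNorm 1
    _ ≤ C := by simpa using norm_fderiv_le_of_lipschitz ℝ hφ

/-- flat case of the capacity lower bound: on the Euclidean cylinder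
of circumference `l`, any measurable `A ⊆ [0,l] × ℝ` of finite positive area and
any Lipschitz `f` passing from `0` to `1` across `A` along every vertical line
satisfy `∬_A |∇f|² ≥ l² / |A|`. -/
theorem capacity_lower_bound_flat
    (l : ℝ) (hl : 0 < l)
    (A : Set (ℝ × ℝ)) (hA : MeasurableSet A) (hAsub : A ⊆ Icc 0 l ×ˢ univ)
    (hfin : volume A < ⊤) (hposm : 0 < volume A)
    (f : ℝ × ℝ → ℝ) (C : ℝ≥0) (hf : LipschitzWith C f)
    (hbdry : ∀ t ∈ Icc (0 : ℝ) l, ∃ α β : ℝ, α < β ∧ ({t} ×ˢ Ioo α β) ⊆ A ∧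
      f (t, α) = 0 ∧ f (t, β) = 1) :
    l ^ 2 / (volume A).toReal ≤
      ∫ p in A, ((deriv (fun t => f (t, p.2)) p.1) ^ 2
        + (deriv (fun s => f (p.1, s)) p.2) ^ 2) := by
  have h22 : Real.HolderConjugate 2 2 := Real.HolderConjugate.two_two
  have hfc : Continuous f := hf.continuous
  -- slice Lipschitz bounds
  have hslice : ∀ t : ℝ, LipschitzWith C fun s => f (t, s) := fun t => by
    simpa [Function.comp_def] using hf.comp (LipschitzWith.prodMk_left t)
  have htlice : ∀ s : ℝ, LipschitzWith C fun t => f (t, s) := fun s => by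
    simpa [Function.comp_def] using hf.comp (LipschitzWith.prodMk_right s)
  set Ds : ℝ × ℝ → ℝ := fun p => deriv (fun s => f (p.1, s)) p.2 with hDs
  set Dt : ℝ × ℝ → ℝ := fun p => deriv (fun t => f (t, p.2)) p.1 with hDt
  -- measurability
  have hDs_meas : Measurable Ds := by
    have hc : Continuous (Function.uncurry fun t s => f (t, s)) := by
      exact hfc
    exact measurable_deriv_with_param hc
  have hDt_meas : Measurable Dt := by
    have hc : Continuous (Function.uncurry fun s t => f (t, s)) := by
      have : Continuous fun q : ℝ × ℝ => f (q.2, q.1) := hfc.comp continuous_swap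
      exact this
    have h := measurable_deriv_with_param hc
    exact h.comp measurable_swap
  -- pointwise bounds
  have hDs_bd : ∀ p : ℝ × ℝ, |Ds p| ≤ C := fun p => abs_deriv_le_of_lipschitz (hslice p.1) p.2
  have hDt_bd : ∀ p : ℝ × ℝ, |Dt p| ≤ C := fun p => abs_deriv_le_of_lipschitz (htlice p.2) p.1
  have hDs_sq : ∀ p : ℝ × ℝ, Ds p ^ 2 ≤ (C : ℝ) ^ 2 := fun p => by
    rw [← sq_abs]; exact pow_le_pow_left₀ (abs_nonneg _) (hDs_bd p) 2
  have hDt_sq : ∀ p : ℝ × ℝ, Dt p ^ 2 ≤ (C : ℝ) ^ 2 := fun p => by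
    rw [← sq_abs]; exact pow_le_pow_left₀ (abs_nonneg _) (hDt_bd p) 2
  set E : ℝ≥0∞ := ∫⁻ p in A, ENNReal.ofReal (Ds p ^ 2) with hE
  set F : ℝ → ℝ≥0∞ := fun t => ∫⁻ s in Prod.mk t ⁻¹' A, ENNReal.ofReal (Ds (t, s) ^ 2) with hF
  set V : ℝ → ℝ≥0∞ := fun t => volume (Prod.mk t ⁻¹' A) with hV
  -- step A : per-slice Cauchy-Schwarz
  have key : ∀ t ∈ Icc (0 : ℝ) l, (1 : ℝ≥0∞) ≤ V t ^ (1/2 : ℝ) * F t ^ (1/2 : ℝ) := by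
    intro t ht
    obtain ⟨α, β, hab, hsub, h0, h1⟩ := hbdry t ht
    have hsub' : Ioo α β ⊆ Prod.mk t ⁻¹' A := fun s hs => hsub ⟨rfl, hs⟩
    have h1le : (1 : ℝ≥0∞) ≤ ∫⁻ s in Prod.mk t ⁻¹' A, ENNReal.ofReal |Ds (t, s)| :=
      le_trans (one_le_lintegral_abs_deriv (hslice t) hab h0 h1) (lintegral_mono_set hsub')
    have hv : Measurable fun s => ENNReal.ofReal |Ds (t, s)| :=
      ((hDs_meas.comp measurable_prodMk_left).abs).ennreal_ofReal
    have hCS := ENNReal.lintegral_mul_le_Lp_mul_Lq (volume.restrict (Prod.mk t ⁻¹' A)) h22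
      (aemeasurable_const (b := (1 : ℝ≥0∞))) hv.aemeasurable
    simp only [Pi.mul_apply, one_mul] at hCS
    have e1 : ∫⁻ s in Prod.mk t ⁻¹' A, (1 : ℝ≥0∞) ^ (2 : ℝ) = V t := by
      simp [setLIntegral_one, hV]
    have e2 : (∫⁻ s in Prod.mk t ⁻¹' A, (ENNReal.ofReal |Ds (t, s)|) ^ (2 : ℝ)) = F t := by
      refine lintegral_congr fun s => ?_
      rw [ENNReal.ofReal_rpow_of_nonneg (abs_nonneg _) (by norm_num)]
      congr 1
      rw [show (2 : ℝ) = ((2 : ℕ) : ℝ) by norm_num, Real.rpow_natCast, sq_abs]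
    rw [e1, e2] at hCS
    exact le_trans h1le hCS
  -- step B : integrate over [0, l]
  have hV_meas : Measurable V := measurable_measure_prodMk_left hA
  set H : ℝ × ℝ → ℝ≥0∞ := A.indicator fun q => ENNReal.ofReal (Ds q ^ 2) with hH
  have hH_meas : Measurable H := ((hDs_meas.pow_const 2).ennreal_ofReal).indicator hA
  have hHF : ∀ t, (∫⁻ s, H (t, s)) = F t := by
    intro t
    have : (fun s => H (t, s))
        = (Prod.mk t ⁻¹' A).indicator fun s => ENNReal.ofReal (Ds (t, s) ^ 2) := by
      funext s
      by_cases h : (t, s) ∈ A <;> simp [H, Set.indicator, h]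
    rw [this, lintegral_indicator (hA.preimage measurable_prodMk_left)]
  have hF_meas : Measurable F := by
    have h := (hH_meas.lintegral_prod_right' : Measurable fun t => ∫⁻ s, H (t, s) ∂volume)
    simpa only [hHF] using h
  have hVsum : (∫⁻ t, V t) = volume A := by
    have : (volume : Measure (ℝ × ℝ)) A = ∫⁻ t, volume (Prod.mk t ⁻¹' A) := by
      rw [Measure.volume_eq_prod]; exact Measure.prod_apply hA
    exact this.symm
  have hFsum : (∫⁻ t, F t) = E := by
    calc (∫⁻ t, F t) = ∫⁻ t, ∫⁻ s, H (t, s) := by simp only [hHF]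
      _ = ∫⁻ p, H p := (lintegral_prod H hH_meas.aemeasurable).symm
      _ = ∫⁻ p, H p ∂(volume : Measure (ℝ × ℝ)) := by rw [Measure.volume_eq_prod]
      _ = E := by rw [hH, lintegral_indicator hA]
  have hlle : ENNReal.ofReal l ≤ volume A ^ (1/2 : ℝ) * E ^ (1/2 : ℝ) := by
    calc ENNReal.ofReal l = ∫⁻ _ in Icc (0 : ℝ) l, (1 : ℝ≥0∞) := by
          rw [setLIntegral_one, Real.volume_Icc]; norm_num
      _ ≤ ∫⁻ t in Icc (0 : ℝ) l, V t ^ (1/2 : ℝ) * F t ^ (1/2 : ℝ) :=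
          setLIntegral_mono ((hV_meas.pow_const _).mul (hF_meas.pow_const _)) key
      _ ≤ (∫⁻ t in Icc (0 : ℝ) l, (V t ^ (1/2 : ℝ)) ^ (2 : ℝ)) ^ (1/2 : ℝ)
          * (∫⁻ t in Icc (0 : ℝ) l, (F t ^ (1/2 : ℝ)) ^ (2 : ℝ)) ^ (1/2 : ℝ) := by
          have := ENNReal.lintegral_mul_le_Lp_mul_Lq (volume.restrict (Icc (0 : ℝ) l)) h22
            (hV_meas.pow_const (1/2 : ℝ)).aemeasurable (hF_meas.pow_const (1/2 : ℝ)).aemeasurable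
          simpa using this
      _ ≤ volume A ^ (1/2 : ℝ) * E ^ (1/2 : ℝ) := by
          have hrw : ∀ x : ℝ≥0∞, (x ^ (1/2 : ℝ)) ^ (2 : ℝ) = x := fun x => by
            rw [← ENNReal.rpow_mul]; norm_num
          simp only [hrw]
          gcongr
          · exact le_trans (setLIntegral_le_lintegral _ _) (le_of_eq hVsum)
          · exact le_trans (setLIntegral_le_lintegral _ _) (le_of_eq hFsum)
  -- step C : square it
  have hsq : ENNReal.ofReal l * ENNReal.ofReal l ≤ volume A * E := by
    calc ENNReal.ofReal l * ENNReal.ofReal l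
        ≤ (volume A ^ (1/2 : ℝ) * E ^ (1/2 : ℝ)) * (volume A ^ (1/2 : ℝ) * E ^ (1/2 : ℝ)) :=
          mul_le_mul' hlle hlle
      _ = (volume A ^ (1/2 : ℝ) * volume A ^ (1/2 : ℝ)) * (E ^ (1/2 : ℝ) * E ^ (1/2 : ℝ)) := by
          ring
      _ = volume A * E := by
          rw [← ENNReal.rpow_add_of_nonneg _ _ (by norm_num) (by norm_num),
            ← ENNReal.rpow_add_of_nonneg _ _ (by norm_num) (by norm_num)]
          norm_num
  -- step D : E is finite
  have hEfin : E ≠ ⊤ := by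
    have : E ≤ ENNReal.ofReal ((C : ℝ) ^ 2) * volume A := by
      calc E ≤ ∫⁻ _ in A, ENNReal.ofReal ((C : ℝ) ^ 2) :=
            lintegral_mono fun p => ENNReal.ofReal_le_ofReal (hDs_sq p)
        _ = ENNReal.ofReal ((C : ℝ) ^ 2) * volume A := by
            rw [lintegral_const, Measure.restrict_apply MeasurableSet.univ, univ_inter]
    exact ne_top_of_le_ne_top (ENNReal.mul_ne_top ENNReal.ofReal_ne_top hfin.ne) this
  -- step E : Bochner side
  haveI : IsFiniteMeasure (volume.restrict A) := ⟨by rwa [Measure.restrict_apply_univ]⟩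
  have hSM : AEStronglyMeasurable (fun p => Dt p ^ 2 + Ds p ^ 2) (volume.restrict A) :=
    ((hDt_meas.pow_const 2).add (hDs_meas.pow_const 2)).aestronglyMeasurable
  have hint : IntegrableOn (fun p => Dt p ^ 2 + Ds p ^ 2) A := by
    refine Integrable.mono' (integrable_const ((C : ℝ) ^ 2 + (C : ℝ) ^ 2)) hSM ?_
    refine Filter.Eventually.of_forall fun p => ?_
    rw [Real.norm_eq_abs, abs_of_nonneg (by positivity)]
    exact add_le_add (hDt_sq p) (hDs_sq p)
  have hintDs : IntegrableOn (fun p => Ds p ^ 2) A := by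
    refine Integrable.mono' (integrable_const ((C : ℝ) ^ 2))
      ((hDs_meas.pow_const 2).aestronglyMeasurable) ?_
    refine Filter.Eventually.of_forall fun p => ?_
    rw [Real.norm_eq_abs, abs_of_nonneg (by positivity)]
    exact hDs_sq p
  have hle1 : ∫ p in A, Ds p ^ 2 ≤ ∫ p in A, (Dt p ^ 2 + Ds p ^ 2) :=
    integral_mono hintDs hint fun p => by nlinarith [sq_nonneg (Dt p)]
  have hEeq : ∫ p in A, Ds p ^ 2 = E.toReal := by
    rw [integral_eq_lintegral_of_nonneg_ae
      (Filter.Eventually.of_forall fun p => sq_nonneg (Ds p))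
      (hDs_meas.pow_const 2).aestronglyMeasurable]
  -- conclude
  have hApos : 0 < (volume A).toReal := ENNReal.toReal_pos hposm.ne' hfin.ne
  rw [div_le_iff₀ hApos]
  have h2 : l ^ 2 ≤ (volume A).toReal * E.toReal := by
    have := ENNReal.toReal_mono (ENNReal.mul_ne_top hfin.ne hEfin) hsq
    rw [ENNReal.toReal_mul, ENNReal.toReal_ofReal hl.le, ENNReal.toReal_mul] at this
    nlinarith
  calc l ^ 2 ≤ (volume A).toReal * E.toReal := h2
    _ = E.toReal * (volume A).toReal := by ring
    _ ≤ (∫ p in A, (Dt p ^ 2 + Ds p ^ 2)) * (volume A).toReal := by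
        have := hEeq ▸ hle1
        exact mul_le_mul_of_nonneg_right this hApos.le
    _ = (∫ p in A, ((deriv (fun t => f (t, p.2)) p.1) ^ 2
        + (deriv (fun s => f (p.1, s)) p.2) ^ 2)) * (volume A).toReal := rfl
end

section
/- Let a < b, let h : [a,b] → ℝ be positive and continuous, and let g : [a,b] → ℝ be Lipschitz with g(a) = 0 and g(b) = 1. Then ∫ₐᵇ h(s)·g'(s)² ds ≥ ( ∫ₐᵇ ds / h(s) )⁻¹. -/
open Set intervalIntegral

open MeasureTheory Filter Topology in
private lemma slope_tendsto_aux {f : ℝ → ℝ} {x L : ℝ} (hf : HasDerivAt f L x) :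
    Tendsto (fun n : ℕ => (f (x + ((n : ℝ) + 1)⁻¹) - f x) / ((n : ℝ) + 1)⁻¹)
      atTop (𝓝 L) := by
  have hδ0 : Tendsto (fun n : ℕ => ((n : ℝ) + 1)⁻¹) atTop (𝓝 0) := by
    simpa [one_div] using tendsto_one_div_add_atTop_nhds_zero_nat (𝕜 := ℝ)
  have h1 := hasDerivAt_iff_tendsto_slope.1 hf
  have h2 : Tendsto (fun n : ℕ => x + ((n : ℝ) + 1)⁻¹) atTop (𝓝[≠] x) := by
    apply tendsto_nhdsWithin_of_tendsto_nhds_of_eventually_within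
    · simpa using tendsto_const_nhds.add hδ0
    · filter_upwards with n
      have : (0 : ℝ) < ((n : ℝ) + 1)⁻¹ := by positivity
      simp only [mem_compl_iff, mem_singleton_iff]
      intro hx
      nlinarith [add_right_cancel (a := x) (b := ((n : ℝ) + 1)⁻¹) (c := 0)]
  have := h1.comp h2
  refine this.congr fun n => ?_
  simp [Function.comp, slope_def_field]

open MeasureTheory Filter Topology in
private lemma lipschitz_ftc {C : NNReal} {g : ℝ → ℝ} (hg : LipschitzWith C g)
    (a b : ℝ) : (∫ s in a..b, deriv g s) = g b - g a := by
  have gcont : Continuous g := hg.continuous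
  set δ : ℕ → ℝ := fun n => ((n : ℝ) + 1)⁻¹ with hδdef
  have hδpos : ∀ n, 0 < δ n := fun n => by positivity
  have hInt : ∀ c d : ℝ, IntervalIntegrable g volume c d := fun c d =>
    gcont.intervalIntegrable c d
  -- Step 1: dominated convergence
  have main : Tendsto (fun n => ∫ s in a..b, (g (s + δ n) - g s) / δ n) atTop
      (𝓝 (∫ s in a..b, deriv g s)) := by
    apply intervalIntegral.tendsto_integral_filter_of_dominated_convergence (fun _ => (C : ℝ))
    · filter_upwards with n
      exact (((gcont.comp (continuous_id.add continuous_const)).sub gcont).div_const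
        _).aestronglyMeasurable
    · filter_upwards with n
      filter_upwards with x _
      have hd : dist (g (x + δ n)) (g x) ≤ C * dist (x + δ n) x := hg.dist_le_mul _ _
      rw [Real.dist_eq, Real.dist_eq] at hd
      have h1 : |g (x + δ n) - g x| ≤ C * δ n := by
        simpa [abs_of_pos (hδpos n)] using hd
      rw [Real.norm_eq_abs, abs_div, abs_of_pos (hδpos n), div_le_iff₀ (hδpos n)]
      exact h1
    · exact intervalIntegrable_const
    · filter_upwards [hg.ae_differentiableAt] with x hx
      intro _
      exact slope_tendsto_aux hx.hasDerivAt
  -- Step 2: compute the integral of the difference quotient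
  have key : ∀ n, (∫ s in a..b, (g (s + δ n) - g s) / δ n)
      = (∫ s in b..(b + δ n), g s) / δ n - (∫ s in a..(a + δ n), g s) / δ n := by
    intro n
    have i1 : IntervalIntegrable (fun s => g (s + δ n)) volume a b :=
      (gcont.comp (continuous_id.add continuous_const)).intervalIntegrable a b
    have e1 : (∫ s in a..b, (g (s + δ n) - g s) / δ n)
        = ((∫ s in a..b, g (s + δ n)) - ∫ s in a..b, g s) / δ n := by
      rw [← intervalIntegral.integral_sub i1 (hInt a b), intervalIntegral.integral_div]
    rw [e1, integral_comp_add_right]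
    have c1 : (∫ s in (a + δ n)..b, g s) + (∫ s in b..(b + δ n), g s)
        = ∫ s in (a + δ n)..(b + δ n), g s :=
      integral_add_adjacent_intervals (hInt _ _) (hInt _ _)
    have c2 : (∫ s in a..(a + δ n), g s) + (∫ s in (a + δ n)..b, g s)
        = ∫ s in a..b, g s :=
      integral_add_adjacent_intervals (hInt _ _) (hInt _ _)
    rw [div_sub_div_same]
    congr 1
    linarith
  -- Step 3: the endpoint limits
  have lim_end : ∀ c : ℝ, Tendsto (fun n => (∫ s in c..(c + δ n), g s) / δ n)
      atTop (𝓝 (g c)) := by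
    intro c
    have hΦ : HasDerivAt (fun x => ∫ s in c..x, g s) (g c) c :=
      integral_hasDerivAt_right (hInt c c)
        (gcont.aestronglyMeasurable.stronglyMeasurableAtFilter) gcont.continuousAt
    have := slope_tendsto_aux hΦ
    simp only [intervalIntegral.integral_same, sub_zero] at this
    exact this
  have final : Tendsto (fun n => ∫ s in a..b, (g (s + δ n) - g s) / δ n) atTop
      (𝓝 (g b - g a)) := by
    simp only [key]
    exact (lim_end b).sub (lim_end a)
  exact tendsto_nhds_unique main final

open MeasureTheory Filter Topology in
/-- One-dimensional weighted capacity lemma: if `h` is positive and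
continuous on `[a,b]` and `g` is Lipschitz with `g a = 0`, `g b = 1`, then
`∫ₐᵇ h · g'² ≥ (∫ₐᵇ 1/h)⁻¹`. -/
theorem one_dim_weighted_capacity (a b : ℝ) (hab : a < b) (h g : ℝ → ℝ)
    (hpos : ∀ s ∈ Icc a b, 0 < h s) (hcont : ContinuousOn h (Icc a b))
    (C : NNReal) (hg : LipschitzWith C g) (hga : g a = 0) (hgb : g b = 1) :
    (∫ s in a..b, 1 / h s)⁻¹ ≤ ∫ s in a..b, h s * (deriv g s) ^ 2 := by
  have hab' : a ≤ b := hab.le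
  have huIcc : uIcc a b = Icc a b := uIcc_of_le hab'
  have huIoc : uIoc a b = Ioc a b := uIoc_of_le hab'
  -- basic facts about the derivative of g
  have hderiv_bound : ∀ s : ℝ, ‖deriv g s‖ ≤ C := fun s => norm_deriv_le_of_lipschitz hg
  have hmeas : Measurable (deriv g) := measurable_deriv g
  -- integrability of deriv g
  have hIoc_finite : volume (Ioc a b) < ⊤ := measure_Ioc_lt_top
  have hg'int : IntervalIntegrable (deriv g) volume a b := by
    rw [intervalIntegrable_iff, huIoc]
    exact ⟨hmeas.aestronglyMeasurable.restrict,
      HasFiniteIntegral.restrict_of_bounded (C := (C : ℝ)) hIoc_finite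
        (ae_of_all _ fun x => hderiv_bound x)⟩
  -- bound h on Icc a b
  obtain ⟨M, hM⟩ : ∃ M : ℝ, ∀ s ∈ Icc a b, h s ≤ M := by
    obtain ⟨x, hx, hmax⟩ := isCompact_Icc.exists_isMaxOn (nonempty_Icc.2 hab') hcont
    exact ⟨h x, fun s hs => hmax hs⟩
  -- integrability of h * (deriv g)^2
  have hhmeas : AEStronglyMeasurable h (volume.restrict (Ioc a b)) :=
    (hcont.mono Ioc_subset_Icc_self).aestronglyMeasurable measurableSet_Ioc
  have hInt1 : IntervalIntegrable (fun s => h s * deriv g s ^ 2) volume a b := by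
    rw [intervalIntegrable_iff, huIoc]
    refine ⟨hhmeas.mul ((hmeas.pow_const 2).aestronglyMeasurable.restrict),
      HasFiniteIntegral.restrict_of_bounded (C := M * (C : ℝ) ^ 2) hIoc_finite ?_⟩
    rw [ae_restrict_iff' measurableSet_Ioc]
    filter_upwards with x hx
    have hx' : x ∈ Icc a b := Ioc_subset_Icc_self hx
    have h1 : 0 ≤ h x := (hpos x hx').le
    have h2 : |deriv g x| ≤ C := by simpa [Real.norm_eq_abs] using hderiv_bound x
    have h3 : deriv g x ^ 2 ≤ (C : ℝ) ^ 2 := by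
      rw [← sq_abs]; exact pow_le_pow_left₀ (abs_nonneg _) h2 2
    rw [Real.norm_eq_abs, abs_of_nonneg (mul_nonneg h1 (sq_nonneg _))]
    exact mul_le_mul (hM x hx') h3 (sq_nonneg _) ((h1.trans (hM x hx')))
  -- integrability of 1/h
  have hinv_cont : ContinuousOn (fun s => 1 / h s) (Icc a b) :=
    continuousOn_const.div hcont (fun x hx => (hpos x hx).ne')
  have hInt3 : IntervalIntegrable (fun s => 1 / h s) volume a b := by
    apply ContinuousOn.intervalIntegrable
    rwa [huIcc]
  -- D := ∫ 1/h is positive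
  set D := ∫ s in a..b, 1 / h s with hD
  have hDpos : 0 < D := by
    apply intervalIntegral_pos_of_pos_on hInt3 _ hab
    intro x hx
    exact div_pos one_pos (hpos x (Ioo_subset_Icc_self hx))
  -- ∫ deriv g = 1
  have hB : (∫ s in a..b, deriv g s) = 1 := by
    rw [lipschitz_ftc hg, hga, hgb, sub_zero]
  -- the quadratic trick
  have expand : EqOn (fun s => h s * (deriv g s - D⁻¹ / h s) ^ 2)
      (fun s => h s * deriv g s ^ 2 - 2 * D⁻¹ * deriv g s + D⁻¹ ^ 2 * (1 / h s))
      (uIcc a b) := by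
    intro s hs
    rw [huIcc] at hs
    have hh : h s ≠ 0 := (hpos s hs).ne'
    field_simp
    ring
  have nonneg : 0 ≤ ∫ s in a..b, h s * (deriv g s - D⁻¹ / h s) ^ 2 :=
    intervalIntegral.integral_nonneg hab' (fun s hs =>
      mul_nonneg (hpos s hs).le (sq_nonneg _))
  have compute : (∫ s in a..b, h s * (deriv g s - D⁻¹ / h s) ^ 2)
      = (∫ s in a..b, h s * deriv g s ^ 2) - 2 * D⁻¹ + D⁻¹ := by
    rw [intervalIntegral.integral_congr expand]
    rw [intervalIntegral.integral_add (hInt1.sub ((hg'int.const_mul (2 * D⁻¹))))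
        (hInt3.const_mul (D⁻¹ ^ 2)),
      intervalIntegral.integral_sub hInt1 (hg'int.const_mul (2 * D⁻¹)),
      intervalIntegral.integral_const_mul, intervalIntegral.integral_const_mul, hB, ← hD]
    have : D⁻¹ ^ 2 * D = D⁻¹ := by
      field_simp
    rw [this, mul_one]
  rw [compute] at nonneg
  linarith
end

section
/- Let l > 0, let h : ℝ × ℝ → ℝ be positive and continuous, and let a₁, a₂ : [0,l] → ℝ be continuous with a₁(t) < a₂(t) for all t. Let A = {(t,s) : t ∈ [0,l], a₁(t) < s < a₂(t)} (an annulus of type A), and let f be Lipschitz on the closure of A with f(t, a₁(t)) = 0 and f(t, a₂(t)) = 1 for all t ∈ [0,l]. Then ∬_A ( (∂_t f)²/h + h·(∂_s f)² ) ds dt ≥ ∫₀ˡ ( ∫_{a₁(t)}^{a₂(t)} ds / h(t,s) )⁻¹ dt. In particular the capacity of A is at least ∫₀ˡ dt / (H(t,a₂(t)) − H(t,a₁(t))), where H(t,·) is an antiderivative of 1/h(t,·). -/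
open Real MeasureTheory Set
open scoped NNReal

open Filter
open scoped Topology

/-- Fundamental theorem of calculus for Lipschitz functions on `ℝ`: the integral of the
(a.e. defined) derivative recovers the increment. -/
lemma lipschitz_integral_deriv {C : ℝ≥0} {g : ℝ → ℝ} (hg : LipschitzWith C g) {a b : ℝ}
    (hab : a ≤ b) : ∫ x in a..b, deriv g x = g b - g a := by
  have hgc : Continuous g := hg.continuous
  -- difference quotients
  set φ : ℕ → ℝ → ℝ := fun n x => (g (x + 1 / (n + 1)) - g x) * (n + 1) with hφ
  have hεpos : ∀ n : ℕ, (0:ℝ) < 1 / (n + 1) := fun n => by positivity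
  -- a.e. convergence to deriv g
  have hae : ∀ᵐ x : ℝ, Tendsto (fun n => φ n x) atTop (𝓝 (deriv g x)) := by
    filter_upwards [hg.ae_differentiableAt (μ := volume)] with x hx
    have hd := hx.hasDerivAt
    rw [hasDerivAt_iff_tendsto_slope] at hd
    have hseq : Tendsto (fun n : ℕ => x + 1 / (n + 1)) atTop (𝓝[≠] x) := by
      apply tendsto_nhdsWithin_of_tendsto_nhds_of_eventually_within
      · have : Tendsto (fun n : ℕ => (1:ℝ) / (n + 1)) atTop (𝓝 0) :=
          tendsto_one_div_add_atTop_nhds_zero_nat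
        simpa using tendsto_const_nhds.add this
      · exact Eventually.of_forall fun n => by
          simp only [mem_compl_iff, mem_singleton_iff]
          have := hεpos n; intro hcon; nlinarith [hcon]
    have := hd.comp hseq
    convert this using 2 with n
    simp only [Function.comp_apply, slope_def_field]
    rw [add_sub_cancel_left, div_div_eq_mul_div, div_one]
  -- uniform bound
  have hbd : ∀ n x, |φ n x| ≤ C := by
    intro n x
    have h1 : |g (x + 1 / (n + 1)) - g x| ≤ C * (1 / (n + 1)) := by
      have := hg.dist_le_mul (x + 1 / (n + 1)) x
      rw [Real.dist_eq, Real.dist_eq, add_sub_cancel_left] at this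
      rwa [abs_of_pos (hεpos n)] at this
    have h2 : |φ n x| = |g (x + 1 / (n + 1)) - g x| * (n + 1) := by
      rw [hφ]; rw [abs_mul, abs_of_pos (by positivity : (0:ℝ) < (n:ℝ) + 1)]
    rw [h2]
    calc |g (x + 1 / (n + 1)) - g x| * ((n:ℝ) + 1) ≤ (C * (1 / (n + 1))) * ((n:ℝ) + 1) := by
          apply mul_le_mul_of_nonneg_right h1 (by positivity)
      _ = C := by field_simp
  -- dominated convergence on Ioc a b
  have hmint : ∀ n, Integrable (φ n) (volume.restrict (Ioc a b)) := by
    intro n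
    apply Continuous.integrableOn_Ioc
    exact ((hgc.comp (continuous_id.add continuous_const)).sub hgc).mul continuous_const
  have hDC : Tendsto (fun n => ∫ x in Ioc a b, φ n x) atTop
      (𝓝 (∫ x in Ioc a b, deriv g x)) := by
    apply MeasureTheory.tendsto_integral_of_dominated_convergence (fun _ => (C:ℝ))
    · exact fun n => (hmint n).aestronglyMeasurable
    · exact integrable_const _
    · exact fun n => Eventually.of_forall fun x => by simpa using hbd n x
    · exact ae_restrict_of_ae hae
  -- compute ∫ φ n
  have hint_g : ∀ u v : ℝ, IntervalIntegrable g volume u v := fun u v =>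
    hgc.intervalIntegrable u v
  have hcomp : ∀ n, ∫ x in Ioc a b, φ n x
      = ((∫ x in b..(b + 1/(n+1)), g x) - ∫ x in a..(a + 1/(n+1)), g x) * ((n:ℝ)+1) := by
    intro n
    have h1 : ∫ x in Ioc a b, φ n x = ∫ x in a..b, φ n x :=
      (intervalIntegral.integral_of_le hab).symm
    rw [h1, hφ]
    simp only []
    have h0 : IntervalIntegrable (fun x => g (x + 1/(n+1))) volume a b := by
      apply Continuous.intervalIntegrable; fun_prop
    rw [intervalIntegral.integral_mul_const, intervalIntegral.integral_sub h0 (hint_g a b)]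
    have h2 : ∫ x in a..b, g (x + 1/(n+1)) = ∫ x in (a + 1/(n+1))..(b + 1/(n+1)), g x :=
      intervalIntegral.integral_comp_add_right g (1/(n+1))
    rw [h2]
    have h3 : (∫ x in (a + 1/(n+1))..(b + 1/(n+1)), g x) - ∫ x in a..b, g x
        = (∫ x in b..(b + 1/(n+1)), g x) - ∫ x in a..(a + 1/(n+1)), g x := by
      have e1 : (∫ x in a..(a + 1/(n+1)), g x) + (∫ x in (a + 1/(n+1))..(b + 1/(n+1)), g x)
          = ∫ x in a..(b + 1/(n+1)), g x :=
        intervalIntegral.integral_add_adjacent_intervals (hint_g _ _) (hint_g _ _)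
      have e2 : (∫ x in a..b, g x) + (∫ x in b..(b + 1/(n+1)), g x)
          = ∫ x in a..(b + 1/(n+1)), g x :=
        intervalIntegral.integral_add_adjacent_intervals (hint_g _ _) (hint_g _ _)
      linarith
    rw [h3]
  -- limit of the primitive-difference
  have hlim : ∀ c : ℝ, Tendsto (fun n : ℕ => (∫ x in c..(c + 1/(n+1)), g x) * ((n:ℝ)+1))
      atTop (𝓝 (g c)) := by
    intro c
    have hF : HasDerivAt (fun u => ∫ x in c..u, g x) (g c) c :=
      intervalIntegral.integral_hasDerivAt_right (hint_g c c)
        (hgc.stronglyMeasurableAtFilter _ _) hgc.continuousAt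
    rw [hasDerivAt_iff_tendsto_slope] at hF
    have hseq : Tendsto (fun n : ℕ => c + 1 / (n + 1)) atTop (𝓝[≠] c) := by
      apply tendsto_nhdsWithin_of_tendsto_nhds_of_eventually_within
      · have : Tendsto (fun n : ℕ => (1:ℝ) / (n + 1)) atTop (𝓝 0) :=
          tendsto_one_div_add_atTop_nhds_zero_nat
        simpa using tendsto_const_nhds.add this
      · exact Eventually.of_forall fun n => by
          simp only [mem_compl_iff, mem_singleton_iff]
          have := hεpos n; intro hcon; nlinarith [hcon]
    have := hF.comp hseq
    convert this using 2 with n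
    simp only [Function.comp_apply, slope_def_field]
    rw [add_sub_cancel_left, intervalIntegral.integral_same, sub_zero,
      div_div_eq_mul_div, div_one]
  -- combine
  have hlim2 : Tendsto (fun n => ∫ x in Ioc a b, φ n x) atTop (𝓝 (g b - g a)) := by
    simp only [hcomp, sub_mul]
    exact (hlim b).sub (hlim a)
  have := tendsto_nhds_unique hDC hlim2
  rw [intervalIntegral.integral_of_le hab]
  exact this

/-- Cauchy–Schwarz lower bound for the weighted energy of a slice. -/
lemma slice_cauchy_schwarz {C : ℝ≥0} (w g : ℝ → ℝ) (hw : Continuous w)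
    (hwpos : ∀ s, 0 < w s) (hgm : Measurable g) (hgb : ∀ s, |g s| ≤ C)
    {α β : ℝ} (hαβ : α < β) (hint : (∫ s in α..β, g s) = 1) :
    (∫ s in α..β, 1 / w s)⁻¹ ≤ ∫ s in Ioo α β, w s * g s ^ 2 := by
  set μ := volume.restrict (Ioo α β) with hμ
  haveI : IsFiniteMeasure μ := ⟨by
    rw [hμ, Measure.restrict_apply_univ]; exact measure_Ioo_lt_top⟩
  -- bounds for w on the compact interval
  obtain ⟨Mw, hMw⟩ : ∃ Mw, ∀ s ∈ Icc α β, w s ≤ Mw :=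
    ⟨_, fun s hs => isCompact_Icc.exists_isMaxOn ⟨α, left_mem_Icc.2 hαβ.le⟩
      hw.continuousOn |>.choose_spec.2 hs⟩
  obtain ⟨εw, hεwpos, hεw⟩ : ∃ εw, 0 < εw ∧ ∀ s ∈ Icc α β, εw ≤ w s := by
    obtain ⟨x, hx, hmin⟩ := isCompact_Icc.exists_isMinOn (⟨α, left_mem_Icc.2 hαβ.le⟩ :
      (Icc α β).Nonempty) hw.continuousOn
    exact ⟨w x, hwpos x, fun s hs => hmin hs⟩
  have hMwpos : 0 < Mw := lt_of_lt_of_le (hwpos α) (hMw α (left_mem_Icc.2 hαβ.le))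
  -- the two factors
  set u : ℝ → ℝ := fun s => Real.sqrt (w s) * |g s| with hu
  set v : ℝ → ℝ := fun s => (Real.sqrt (w s))⁻¹ with hv
  have hsqpos : ∀ s, 0 < Real.sqrt (w s) := fun s => Real.sqrt_pos.2 (hwpos s)
  have hunn : 0 ≤ᵐ[μ] u := Eventually.of_forall fun s =>
    mul_nonneg (Real.sqrt_nonneg _) (abs_nonneg _)
  have hvnn : 0 ≤ᵐ[μ] v := Eventually.of_forall fun s => (inv_pos.2 (hsqpos s)).le
  have hum : AEStronglyMeasurable u μ :=
    ((hw.measurable.sqrt).mul hgm.abs).aestronglyMeasurable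
  have hvm : AEStronglyMeasurable v μ :=
    (hw.measurable.sqrt.inv).aestronglyMeasurable
  have hu2 : MemLp u (ENNReal.ofReal 2) μ := by
    apply MemLp.of_bound hum (Real.sqrt Mw * C)
    rw [hμ, ae_restrict_iff' measurableSet_Ioo]
    apply Eventually.of_forall fun s hs => ?_
    rw [Real.norm_eq_abs, hu, abs_mul, abs_of_nonneg (Real.sqrt_nonneg _), abs_abs]
    apply mul_le_mul _ (hgb s) (abs_nonneg _) (Real.sqrt_nonneg _)
    exact Real.sqrt_le_sqrt (hMw s (Ioo_subset_Icc_self hs))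
  have hv2 : MemLp v (ENNReal.ofReal 2) μ := by
    apply MemLp.of_bound hvm (Real.sqrt εw)⁻¹
    rw [hμ, ae_restrict_iff' measurableSet_Ioo]
    apply Eventually.of_forall fun s hs => ?_
    rw [Real.norm_eq_abs, hv, abs_of_nonneg (inv_pos.2 (hsqpos s)).le]
    apply inv_anti₀ (Real.sqrt_pos.2 hεwpos)
    exact Real.sqrt_le_sqrt (hεw s (Ioo_subset_Icc_self hs))
  have hconj : Real.HolderConjugate 2 2 := ⟨by norm_num, by norm_num, by norm_num⟩
  have hholder := MeasureTheory.integral_mul_le_Lp_mul_Lq_of_nonneg hconj hunn hvnn hu2 hv2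
  -- rewrite the three integrals
  have huv : ∀ s, u s * v s = |g s| := fun s => by
    rw [hu, hv]
    show Real.sqrt (w s) * |g s| * (Real.sqrt (w s))⁻¹ = |g s|
    rw [mul_comm (Real.sqrt (w s)) (|g s|), mul_assoc, mul_inv_cancel₀ (hsqpos s).ne', mul_one]
  have hu2eq : ∀ s, u s ^ (2:ℝ) = w s * g s ^ 2 := fun s => by
    rw [show (2:ℝ) = ((2:ℕ):ℝ) by norm_num, Real.rpow_natCast, hu, mul_pow,
      Real.sq_sqrt (hwpos s).le, sq_abs]
  have hv2eq : ∀ s, v s ^ (2:ℝ) = 1 / w s := fun s => by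
    rw [show (2:ℝ) = ((2:ℕ):ℝ) by norm_num, Real.rpow_natCast, hv, inv_pow,
      Real.sq_sqrt (hwpos s).le, one_div]
  simp only [huv, hu2eq, hv2eq] at hholder
  -- the integral of |g| dominates 1
  set A := ∫ s, w s * g s ^ 2 ∂μ with hA
  set B := ∫ s, 1 / w s ∂μ with hB
  have hgint : Integrable g μ := by
    apply Integrable.mono' (integrable_const (C:ℝ)) hgm.aestronglyMeasurable
    exact Eventually.of_forall fun s => by simpa using hgb s
  have h1le : (1:ℝ) ≤ ∫ s, |g s| ∂μ := by
    rw [← hint, intervalIntegral.integral_of_le hαβ.le,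
      MeasureTheory.integral_Ioc_eq_integral_Ioo]
    exact integral_mono_ae (by exact hgint) (by exact hgint.abs)
      (Eventually.of_forall fun s => le_abs_self _)
  have hAnn : 0 ≤ A := integral_nonneg fun s => mul_nonneg (hwpos s).le (sq_nonneg _)
  have hBnn : 0 ≤ B := integral_nonneg fun s => one_div_nonneg.2 (hwpos s).le
  have hmain : (1:ℝ) ≤ A * B := by
    have h2 : (1:ℝ) ≤ A ^ (1/2:ℝ) * B ^ (1/2:ℝ) := le_trans h1le hholder
    have e1 : A ^ (1/2:ℝ) = Real.sqrt A := (Real.sqrt_eq_rpow A).symm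
    have e2 : B ^ (1/2:ℝ) = Real.sqrt B := (Real.sqrt_eq_rpow B).symm
    rw [e1, e2] at h2
    nlinarith [Real.sq_sqrt hAnn, Real.sq_sqrt hBnn, Real.sqrt_nonneg A, Real.sqrt_nonneg B]
  -- conclude
  have hBeq : (∫ s in α..β, 1 / w s) = B := by
    rw [intervalIntegral.integral_of_le hαβ.le, MeasureTheory.integral_Ioc_eq_integral_Ioo, hB, hμ]
  have hBpos : 0 < B := by
    rw [← hBeq]
    apply intervalIntegral.intervalIntegral_pos_of_pos_on
    · exact (continuous_const.div hw fun s => (hwpos s).ne').intervalIntegrable α β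
    · exact fun s hs => one_div_pos.2 (hwpos s)
    · exact hαβ
  rw [hBeq, inv_eq_one_div, div_le_iff₀ hBpos]
  show 1 ≤ A * B
  exact hmain

/-- lower capacity bound for an annulus of type A,
`A = {(t,s) : t ∈ [0,l], a₁ t < s < a₂ t}`, on a cylinder with positive
continuous Fermi metric coefficient `h`: for every `f` Lipschitz on the closure
of `A` with `f (t, a₁ t) = 0` and `f (t, a₂ t) = 1`, the Dirichlet energy of `f`
on `A` is at least `∫₀ˡ (∫_{a₁ t}^{a₂ t} ds / h (t,s))⁻¹ dt`. -/
theorem capacity_lower_bound_typeA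
    (l : ℝ) (hl : 0 < l)
    (h : ℝ × ℝ → ℝ) (hpos : ∀ p : ℝ × ℝ, 0 < h p) (hcont : Continuous h)
    (a₁ a₂ : ℝ → ℝ) (hc₁ : Continuous a₁) (hc₂ : Continuous a₂)
    (h₁₂ : ∀ t ∈ Icc (0 : ℝ) l, a₁ t < a₂ t)
    (A : Set (ℝ × ℝ))
    (hA : A = {p : ℝ × ℝ | p.1 ∈ Icc (0 : ℝ) l ∧ p.2 ∈ Ioo (a₁ p.1) (a₂ p.1)})
    (f : ℝ × ℝ → ℝ) (C : ℝ≥0)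
    (hf : LipschitzOnWith C f {p : ℝ × ℝ | p.1 ∈ Icc (0 : ℝ) l ∧ p.2 ∈ Icc (a₁ p.1) (a₂ p.1)})
    (hbdry : ∀ t ∈ Icc (0 : ℝ) l, f (t, a₁ t) = 0 ∧ f (t, a₂ t) = 1) :
    (∫ t in (0 : ℝ)..l, (∫ s in (a₁ t)..(a₂ t), 1 / h (t, s))⁻¹) ≤
      ∫ p in A, ((deriv (fun t => f (t, p.2)) p.1) ^ 2 / h p
        + h p * (deriv (fun s => f (p.1, s)) p.2) ^ 2) := by
  -- Lipschitz extension
  obtain ⟨F, hF, hfF⟩ := hf.extend_real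
  have hFc : Continuous F := hF.continuous
  set K : Set (ℝ × ℝ) := {p : ℝ × ℝ | p.1 ∈ Icc (0 : ℝ) l ∧ p.2 ∈ Icc (a₁ p.1) (a₂ p.1)}
    with hK
  -- partial derivatives of the extension
  set Ds : ℝ × ℝ → ℝ := fun p => deriv (fun s => F (p.1, s)) p.2 with hDs
  set Dt : ℝ × ℝ → ℝ := fun p => deriv (fun t => F (t, p.2)) p.1 with hDt
  have hFun : Continuous (Function.uncurry fun t s => F (t, s)) := by
    exact hFc
  have hFun' : Continuous (Function.uncurry fun s t => F (t, s)) := by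
    have : Continuous fun p : ℝ × ℝ => F (p.2, p.1) := hFc.comp continuous_swap
    exact this
  have hDsm : Measurable Ds := measurable_deriv_with_param hFun
  have hDtm : Measurable Dt := by
    have := (measurable_deriv_with_param hFun').comp measurable_swap
    exact this
  -- Lipschitz bounds on partial derivatives
  have hlips : ∀ t : ℝ, LipschitzWith C fun s => F (t, s) := fun t => by
    simpa [Function.comp_def] using hF.comp (LipschitzWith.prodMk_left t)
  have hlipt : ∀ s : ℝ, LipschitzWith C fun t => F (t, s) := fun s => by
    simpa [Function.comp_def] using hF.comp (LipschitzWith.prodMk_right s)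
  have derivbd : ∀ G : ℝ → ℝ, LipschitzWith C G → ∀ x, |deriv G x| ≤ C := by
    intro G hG x
    by_cases hd : DifferentiableAt ℝ G x
    · rw [← Real.norm_eq_abs, ← fderiv_apply_one_eq_deriv]
      calc ‖fderiv ℝ G x 1‖ ≤ ‖fderiv ℝ G x‖ * ‖(1:ℝ)‖ := (fderiv ℝ G x).le_opNorm 1
        _ ≤ C * 1 := by
            apply mul_le_mul (norm_fderiv_le_of_lipschitz ℝ hG) (by simp) (norm_nonneg _)
              C.coe_nonneg
        _ = C := mul_one _
    · rw [deriv_zero_of_not_differentiableAt hd]; simp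
  have hDsbd : ∀ p : ℝ × ℝ, |Ds p| ≤ C := fun p => derivbd _ (hlips p.1) p.2
  have hDtbd : ∀ p : ℝ × ℝ, |Dt p| ≤ C := fun p => derivbd _ (hlipt p.2) p.1
  -- boundary values of F
  have hFb : ∀ t ∈ Icc (0:ℝ) l, F (t, a₁ t) = 0 ∧ F (t, a₂ t) = 1 := by
    intro t ht
    constructor
    · rw [← hfF ⟨ht, left_mem_Icc.2 (h₁₂ t ht).le⟩]; exact (hbdry t ht).1
    · rw [← hfF ⟨ht, right_mem_Icc.2 (h₁₂ t ht).le⟩]; exact (hbdry t ht).2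
  -- bounds for the region
  obtain ⟨m, hm⟩ : ∃ m, ∀ t ∈ Icc (0:ℝ) l, m ≤ a₁ t := by
    obtain ⟨x, hx, hmin⟩ := isCompact_Icc.exists_isMinOn (⟨0, left_mem_Icc.2 hl.le⟩ :
      (Icc (0:ℝ) l).Nonempty) hc₁.continuousOn
    exact ⟨a₁ x, fun t ht => hmin ht⟩
  obtain ⟨M, hM⟩ : ∃ M, ∀ t ∈ Icc (0:ℝ) l, a₂ t ≤ M := by
    obtain ⟨x, hx, hmax⟩ := isCompact_Icc.exists_isMaxOn (⟨0, left_mem_Icc.2 hl.le⟩ :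
      (Icc (0:ℝ) l).Nonempty) hc₂.continuousOn
    exact ⟨a₂ x, fun t ht => hmax ht⟩
  set R : Set (ℝ × ℝ) := Icc (0:ℝ) l ×ˢ Icc m M with hR
  have hRc : IsCompact R := isCompact_Icc.prod isCompact_Icc
  have hAR : A ⊆ R := by
    rw [hA, hR]
    rintro p ⟨hp1, hp2⟩
    exact ⟨hp1, (hm p.1 hp1).trans hp2.1.le, hp2.2.le.trans (hM p.1 hp1)⟩
  -- bounds for h on R
  obtain ⟨εh, hεhpos, hεh⟩ : ∃ εh, 0 < εh ∧ ∀ p ∈ R, εh ≤ h p := by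
    rcases R.eq_empty_or_nonempty with hempty | hne
    · exact ⟨1, one_pos, fun p hp => by rw [hempty] at hp; exact absurd hp (notMem_empty p)⟩
    · obtain ⟨x, hx, hmin⟩ := hRc.exists_isMinOn hne hcont.continuousOn
      exact ⟨h x, hpos x, fun p hp => hmin hp⟩
  obtain ⟨Mh, hMh⟩ : ∃ Mh, ∀ p ∈ R, h p ≤ Mh := by
    rcases R.eq_empty_or_nonempty with hempty | hne
    · exact ⟨1, fun p hp => by rw [hempty] at hp; exact absurd hp (notMem_empty p)⟩
    · obtain ⟨x, hx, hmax⟩ := hRc.exists_isMaxOn hne hcont.continuousOn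
      exact ⟨h x, fun p hp => hmax hp⟩
  -- measurability and finiteness of A
  have hAm : MeasurableSet A := by
    rw [hA]
    have : {p : ℝ × ℝ | p.1 ∈ Icc (0:ℝ) l ∧ p.2 ∈ Ioo (a₁ p.1) (a₂ p.1)}
        = (Prod.fst ⁻¹' Icc (0:ℝ) l) ∩ ({p : ℝ × ℝ | a₁ p.1 < p.2} ∩ {p : ℝ × ℝ | p.2 < a₂ p.1}) := by
      ext p; simp [mem_Ioo, and_assoc]
    rw [this]
    exact (measurable_fst measurableSet_Icc).inter
      ((measurableSet_lt ((hc₁.comp continuous_fst).measurable) measurable_snd).inter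
        (measurableSet_lt measurable_snd ((hc₂.comp continuous_fst).measurable)))
  have hAvol : volume A < ⊤ := lt_of_le_of_lt (measure_mono hAR) hRc.measure_lt_top
  haveI hfin : IsFiniteMeasure (volume.restrict A) :=
    ⟨by rwa [Measure.restrict_apply_univ]⟩
  -- the integrands
  set G : ℝ × ℝ → ℝ := fun p => Dt p ^ 2 / h p + h p * Ds p ^ 2 with hG
  set G₂ : ℝ × ℝ → ℝ := fun p => h p * Ds p ^ 2 with hG₂
  have hGm : Measurable G :=
    ((hDtm.pow_const 2).div hcont.measurable).add (hcont.measurable.mul (hDsm.pow_const 2))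
  have hG₂m : Measurable G₂ := hcont.measurable.mul (hDsm.pow_const 2)
  have hGbd : ∀ p ∈ A, |G p| ≤ (C:ℝ)^2 / εh + Mh * (C:ℝ)^2 := by
    intro p hp
    have hpR := hAR hp
    have h1 : 0 ≤ Dt p ^ 2 / h p := div_nonneg (sq_nonneg _) (hpos p).le
    have h2 : 0 ≤ h p * Ds p ^ 2 := mul_nonneg (hpos p).le (sq_nonneg _)
    rw [abs_of_nonneg (add_nonneg h1 h2)]
    apply add_le_add
    · apply div_le_div₀ (sq_nonneg _) _ hεhpos (hεh p hpR)
      calc Dt p ^ 2 = |Dt p| ^ 2 := (sq_abs _).symm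
        _ ≤ (C:ℝ)^2 := pow_le_pow_left₀ (abs_nonneg _) (hDtbd p) 2
    · apply mul_le_mul (hMh p hpR) _ (sq_nonneg _)
        ((hεhpos.trans_le (hεh p hpR)).le.trans (hMh p hpR))
      calc Ds p ^ 2 = |Ds p| ^ 2 := (sq_abs _).symm
        _ ≤ (C:ℝ)^2 := pow_le_pow_left₀ (abs_nonneg _) (hDsbd p) 2
  have hGint : IntegrableOn G A := by
    apply Integrable.mono' (integrable_const ((C:ℝ)^2 / εh + Mh * (C:ℝ)^2))
      hGm.aestronglyMeasurable
    rw [ae_restrict_iff' hAm]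
    exact Eventually.of_forall fun p hp => by
      rw [Real.norm_eq_abs]; exact hGbd p hp
  have hG₂bd : ∀ p ∈ A, |G₂ p| ≤ (C:ℝ)^2 / εh + Mh * (C:ℝ)^2 := by
    intro p hp
    refine le_trans ?_ (hGbd p hp)
    have h1 : 0 ≤ Dt p ^ 2 / h p := div_nonneg (sq_nonneg _) (hpos p).le
    have h2 : 0 ≤ h p * Ds p ^ 2 := mul_nonneg (hpos p).le (sq_nonneg _)
    rw [abs_of_nonneg h2, abs_of_nonneg (add_nonneg h1 h2)]
    linarith
  have hG₂int : IntegrableOn G₂ A := by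
    apply Integrable.mono' (integrable_const ((C:ℝ)^2 / εh + Mh * (C:ℝ)^2))
      hG₂m.aestronglyMeasurable
    rw [ae_restrict_iff' hAm]
    exact Eventually.of_forall fun p hp => by
      rw [Real.norm_eq_abs]; exact hG₂bd p hp
  -- a.e. on A, the derivatives of f agree with those of F
  have hnull : (volume : Measure (ℝ × ℝ)) {p : ℝ × ℝ | p.1 = 0 ∨ p.1 = l} = 0 := by
    have hset : {p : ℝ × ℝ | p.1 = 0 ∨ p.1 = l} = ({0, l} : Set ℝ) ×ˢ (univ : Set ℝ) := by
      ext p; simp [mem_prod]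
    rw [hset, Measure.volume_eq_prod, Measure.prod_prod]
    have : (volume : Measure ℝ) ({0, l} : Set ℝ) = 0 :=
      measure_union_null (measure_singleton 0) (measure_singleton l)
    rw [this, zero_mul]
  have hcongr : ∀ᵐ p ∂(volume.restrict A),
      ((deriv (fun t => f (t, p.2)) p.1) ^ 2 / h p
        + h p * (deriv (fun s => f (p.1, s)) p.2) ^ 2) = G p := by
    have h1 : ∀ᵐ p ∂(volume.restrict A), p ∈ A := ae_restrict_mem hAm
    have h2 : ∀ᵐ p ∂(volume.restrict A), p ∉ {p : ℝ × ℝ | p.1 = 0 ∨ p.1 = l} :=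
      ae_restrict_of_ae (measure_eq_zero_iff_ae_notMem.1 hnull)
    filter_upwards [h1, h2] with p hp hp0
    rw [hA] at hp
    obtain ⟨hpt, hps⟩ := hp
    simp only [mem_setOf_eq, not_or] at hp0
    have hpt' : p.1 ∈ Ioo (0:ℝ) l :=
      ⟨lt_of_le_of_ne hpt.1 (Ne.symm hp0.1), lt_of_le_of_ne hpt.2 hp0.2⟩
    have eds : deriv (fun s => f (p.1, s)) p.2 = Ds p := by
      apply Filter.EventuallyEq.deriv_eq
      filter_upwards [Ioo_mem_nhds hps.1 hps.2] with s hs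
      exact hfF ⟨hpt, Ioo_subset_Icc_self hs⟩
    have edt : deriv (fun t => f (t, p.2)) p.1 = Dt p := by
      apply Filter.EventuallyEq.deriv_eq
      have hU : (Ioo (0:ℝ) l ∩ ({t : ℝ | a₁ t < p.2} ∩ {t : ℝ | p.2 < a₂ t})) ∈ 𝓝 p.1 := by
        apply IsOpen.mem_nhds
        · exact isOpen_Ioo.inter ((isOpen_lt hc₁ continuous_const).inter
            (isOpen_lt continuous_const hc₂))
        · exact ⟨hpt', hps.1, hps.2⟩
      filter_upwards [hU] with t ht
      exact hfF ⟨⟨ht.1.1.le, ht.1.2.le⟩, ht.2.1.le, ht.2.2.le⟩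
    rw [eds, edt]
  have hstep1 : (∫ p in A, ((deriv (fun t => f (t, p.2)) p.1) ^ 2 / h p
      + h p * (deriv (fun s => f (p.1, s)) p.2) ^ 2)) = ∫ p in A, G p :=
    integral_congr_ae hcongr
  -- drop the first (nonnegative) term
  have hstep2 : (∫ p in A, G₂ p) ≤ ∫ p in A, G p := by
    apply integral_mono_ae hG₂int hGint
    apply Eventually.of_forall fun p => ?_
    have h1 : 0 ≤ Dt p ^ 2 / h p := div_nonneg (sq_nonneg _) (hpos p).le
    rw [hG, hG₂]; dsimp only; linarith
  -- Fubini for the second term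
  set inner : ℝ → ℝ := fun t => ∫ s in Ioo (a₁ t) (a₂ t), h (t, s) * Ds (t, s) ^ 2
    with hinner
  have hindint : Integrable (A.indicator G₂) (volume : Measure (ℝ × ℝ)) :=
    (integrable_indicator_iff hAm).2 hG₂int
  have hfunEq : (fun t => ∫ s, A.indicator G₂ (t, s)) = (Icc (0:ℝ) l).indicator inner := by
    funext t
    by_cases ht : t ∈ Icc (0:ℝ) l
    · rw [indicator_of_mem ht]
      have hptw : ∀ s, A.indicator G₂ (t, s)
          = (Ioo (a₁ t) (a₂ t)).indicator (fun s => h (t, s) * Ds (t, s) ^ 2) s := by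
        intro s
        by_cases hs : s ∈ Ioo (a₁ t) (a₂ t)
        · rw [indicator_of_mem hs, indicator_of_mem (show (t, s) ∈ A by
            rw [hA]; exact ⟨ht, hs⟩)]
        · rw [indicator_of_notMem hs, indicator_of_notMem (show (t, s) ∉ A by
            rw [hA]; exact fun hmem => hs hmem.2)]
      simp_rw [hptw]
      rw [integral_indicator measurableSet_Ioo]
    · rw [indicator_of_notMem ht]
      have hptw : ∀ s, A.indicator G₂ (t, s) = 0 := fun s =>
        indicator_of_notMem (show (t, s) ∉ A by rw [hA]; exact fun hmem => ht hmem.1) _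
      simp_rw [hptw]
      exact integral_zero _ _
  have hfub : (∫ p in A, G₂ p) = ∫ t, (Icc (0:ℝ) l).indicator inner t := by
    rw [← integral_indicator hAm, Measure.volume_eq_prod, MeasureTheory.integral_prod _ ?hint]
    case hint => rw [← Measure.volume_eq_prod]; exact hindint
    rw [← hfunEq]
  have hinner_int : Integrable ((Icc (0:ℝ) l).indicator inner) volume := by
    rw [← hfunEq]
    have : Integrable (A.indicator G₂) ((volume : Measure ℝ).prod (volume : Measure ℝ)) := by
      rw [← Measure.volume_eq_prod]; exact hindint
    exact this.integral_prod_left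
  -- the slice Cauchy–Schwarz bound
  have hslice : ∀ t ∈ Icc (0:ℝ) l,
      (∫ s in (a₁ t)..(a₂ t), 1 / h (t, s))⁻¹ ≤ inner t := by
    intro t ht
    have hw : Continuous fun s => h (t, s) := hcont.comp (Continuous.prodMk_right t)
    have hgm : Measurable fun s => Ds (t, s) :=
      hDsm.comp (measurable_const.prodMk measurable_id)
    have hgb : ∀ s, |Ds (t, s)| ≤ C := fun s => hDsbd (t, s)
    have hintg : (∫ s in (a₁ t)..(a₂ t), Ds (t, s)) = 1 := by
      have : (fun s => Ds (t, s)) = deriv (fun s => F (t, s)) := rfl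
      rw [this, lipschitz_integral_deriv (hlips t) (h₁₂ t ht).le, (hFb t ht).1,
        (hFb t ht).2, sub_zero]
    exact slice_cauchy_schwarz (fun s => h (t, s)) (fun s => Ds (t, s)) hw
      (fun s => hpos (t, s)) hgm hgb (h₁₂ t ht) hintg
  -- integrability of the left-hand side integrand
  have hone_h : Continuous (Function.uncurry fun t s => 1 / h (t, s)) := by
    have : Continuous fun p : ℝ × ℝ => 1 / h p :=
      continuous_const.div hcont fun p => (hpos p).ne'
    exact this
  have hIint : ∀ t u v : ℝ, IntervalIntegrable (fun s => 1 / h (t, s)) volume u v :=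
    fun t u v => (continuous_const.div (hcont.comp (Continuous.prodMk_right t))
      fun s => (hpos (t, s)).ne').intervalIntegrable u v
  have hPhi : Continuous fun t => ∫ s in (a₁ t)..(a₂ t), 1 / h (t, s) := by
    have h1 : Continuous fun t => ∫ s in (0:ℝ)..(a₁ t), 1 / h (t, s) :=
      intervalIntegral.continuous_parametric_intervalIntegral_of_continuous hone_h hc₁
    have h2 : Continuous fun t => ∫ s in (0:ℝ)..(a₂ t), 1 / h (t, s) :=
      intervalIntegral.continuous_parametric_intervalIntegral_of_continuous hone_h hc₂
    have heq : (fun t => ∫ s in (a₁ t)..(a₂ t), 1 / h (t, s))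
        = fun t => (∫ s in (0:ℝ)..(a₂ t), 1 / h (t, s))
          - ∫ s in (0:ℝ)..(a₁ t), 1 / h (t, s) := by
      funext t
      rw [intervalIntegral.integral_interval_sub_left (hIint t 0 (a₂ t)) (hIint t 0 (a₁ t))]
    rw [heq]
    exact h2.sub h1
  have hPhipos : ∀ t ∈ Icc (0:ℝ) l, 0 < ∫ s in (a₁ t)..(a₂ t), 1 / h (t, s) := by
    intro t ht
    apply intervalIntegral.intervalIntegral_pos_of_pos_on (hIint t _ _)
      (fun s hs => one_div_pos.2 (hpos (t, s))) (h₁₂ t ht)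
  have hLHSint : IntervalIntegrable
      (fun t => (∫ s in (a₁ t)..(a₂ t), 1 / h (t, s))⁻¹) volume 0 l := by
    apply ContinuousOn.intervalIntegrable
    apply ContinuousOn.inv₀ hPhi.continuousOn
    intro t ht
    rw [uIcc_of_le hl.le] at ht
    exact (hPhipos t ht).ne'
  have hInnerInt : IntervalIntegrable inner volume 0 l := by
    rw [intervalIntegrable_iff_integrableOn_Ioc_of_le hl.le]
    have : IntegrableOn inner (Icc (0:ℝ) l) volume :=
      (integrable_indicator_iff measurableSet_Icc).1 hinner_int
    exact this.mono_set Ioc_subset_Icc_self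
  -- final chain
  calc (∫ t in (0:ℝ)..l, (∫ s in (a₁ t)..(a₂ t), 1 / h (t, s))⁻¹)
      ≤ ∫ t in (0:ℝ)..l, inner t := by
        apply intervalIntegral.integral_mono_on hl.le hLHSint hInnerInt
        exact hslice
    _ = ∫ t in Icc (0:ℝ) l, inner t := by
        rw [intervalIntegral.integral_of_le hl.le, MeasureTheory.integral_Icc_eq_integral_Ioc]
    _ = ∫ t, (Icc (0:ℝ) l).indicator inner t := (integral_indicator measurableSet_Icc).symm
    _ = ∫ p in A, G₂ p := hfub.symm
    _ ≤ ∫ p in A, G p := hstep2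
    _ = _ := hstep1.symm
end

section
/- Let k > 0, l > 0, and let h(s) = cosh(ks) with H(s) = (1/k)·h₁(ks), h₁(x) = 2·arctan(exp(x)) (constant curvature −k²), or alternatively h(s) = cos(ks) with H(s) = (1/k)·h₂(ks), h₂(x) = log((1+sin x)/cos x), restricted to s ∈ (−π/(2k), π/(2k)) (constant curvature k²). Let a₁, a₂ : [0,l] → ℝ be continuously differentiable with a₁(t) < a₂(t) (with values in (−π/(2k), π/(2k)) in the positive-curvature case), and define p(t,s) = (H(s) − H(a₁(t))) / (H(a₂(t)) − H(a₁(t))) on A = {(t,s) : t ∈ [0,l], a₁(t) ≤ s ≤ a₂(t)}, and q_i(t) = a_i'(t)/h(a_i(t)) for i = 1,2. Then the energy of p equals ∬_A ( (∂_t p)²/h(s) + h(s)·(∂_s p)² ) ds dt = ∫₀ˡ ( 1 + (q₁(t)² + q₁(t)q₂(t) + q₂(t)²)/3 ) / (H(a₂(t)) − H(a₁(t))) dt. Since p equals 0 on s = a₁(t) and 1 on s = a₂(t), the capacity of the type-A annulus A is at most this integral. -/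
open Real MeasureTheory Set
open scoped NNReal Topology

lemma aux_fubini (G : ℝ × ℝ → ℝ) (l : ℝ) (a₁ a₂ : ℝ → ℝ) (A : Set (ℝ × ℝ))
    (hA : A = {x : ℝ × ℝ | x.1 ∈ Icc (0 : ℝ) l ∧ x.2 ∈ Icc (a₁ x.1) (a₂ x.1)})
    (hAmeas : MeasurableSet A) (hGint : IntegrableOn G A) :
    ∫ x in A, G x = ∫ t in Icc (0 : ℝ) l, ∫ s in Icc (a₁ t) (a₂ t), G (t, s) := by
  have hind : Integrable (A.indicator G) (volume : Measure (ℝ × ℝ)) :=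
    (integrable_indicator_iff hAmeas).mpr hGint
  rw [← integral_indicator hAmeas]
  rw [show (volume : Measure (ℝ × ℝ)) = (volume : Measure ℝ).prod volume from
    (MeasureTheory.Measure.volume_eq_prod ℝ ℝ)] at hind ⊢
  rw [MeasureTheory.integral_prod _ hind]
  have hpt : (fun t => ∫ s, A.indicator G (t, s)) =
      (Icc (0 : ℝ) l).indicator (fun t => ∫ s in Icc (a₁ t) (a₂ t), G (t, s)) := by
    funext t
    by_cases ht : t ∈ Icc (0 : ℝ) l
    · rw [Set.indicator_of_mem ht]
      have he : (fun s => A.indicator G (t, s)) =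
          (Icc (a₁ t) (a₂ t)).indicator (fun s => G (t, s)) := by
        funext s
        by_cases hs : s ∈ Icc (a₁ t) (a₂ t)
        · rw [Set.indicator_of_mem hs, Set.indicator_of_mem (by rw [hA]; exact ⟨ht, hs⟩)]
        · rw [Set.indicator_of_notMem hs,
            Set.indicator_of_notMem (by rw [hA]; exact fun hm => hs hm.2)]
      rw [he, integral_indicator measurableSet_Icc]
    · rw [Set.indicator_of_notMem ht]
      have he : (fun s => A.indicator G (t, s)) = fun _ => (0 : ℝ) :=
        funext fun s => Set.indicator_of_notMem (by rw [hA]; exact fun hm => ht hm.1) _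
      rw [he, integral_zero]
  rw [hpt, integral_indicator measurableSet_Icc]

set_option maxHeartbeats 1000000 in
theorem capacity_upper_bound_typeA
    (k l : ℝ) (hk : 0 < k) (hl : 0 < l)
    (h H : ℝ → ℝ) (a₁ a₂ : ℝ → ℝ)
    (hd₁ : ContDiff ℝ 1 a₁) (hd₂ : ContDiff ℝ 1 a₂)
    (h₁₂ : ∀ t ∈ Icc (0 : ℝ) l, a₁ t < a₂ t)
    (hcase :
      ((∀ s : ℝ, h s = Real.cosh (k * s)) ∧
        (∀ s : ℝ, H s = (2 * Real.arctan (Real.exp (k * s))) / k)) ∨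
      ((∀ s : ℝ, h s = Real.cos (k * s)) ∧
        (∀ s : ℝ, H s = Real.log ((1 + Real.sin (k * s)) / Real.cos (k * s)) / k) ∧
        (∀ t ∈ Icc (0 : ℝ) l, -(π / (2 * k)) < a₁ t ∧ a₂ t < π / (2 * k))))
    (p : ℝ × ℝ → ℝ)
    (hp : ∀ t s : ℝ, p (t, s) = (H s - H (a₁ t)) / (H (a₂ t) - H (a₁ t)))
    (q₁ q₂ : ℝ → ℝ)
    (hq₁ : ∀ t : ℝ, q₁ t = deriv a₁ t / h (a₁ t))
    (hq₂ : ∀ t : ℝ, q₂ t = deriv a₂ t / h (a₂ t))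
    (A : Set (ℝ × ℝ))
    (hA : A = {x : ℝ × ℝ | x.1 ∈ Icc (0 : ℝ) l ∧ x.2 ∈ Icc (a₁ x.1) (a₂ x.1)}) :
    (∀ t ∈ Icc (0 : ℝ) l, p (t, a₁ t) = 0 ∧ p (t, a₂ t) = 1) ∧
    (∫ x in A, ((deriv (fun t => p (t, x.2)) x.1) ^ 2 / h x.2
        + h x.2 * (deriv (fun s => p (x.1, s)) x.2) ^ 2))
      = (∫ t in (0 : ℝ)..l,
          (1 + (q₁ t ^ 2 + q₁ t * q₂ t + q₂ t ^ 2) / 3) / (H (a₂ t) - H (a₁ t))) ∧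
    sInf {E : ℝ | ∃ f : ℝ × ℝ → ℝ, (∃ C : ℝ≥0, LipschitzOnWith C f A) ∧
        (∀ t ∈ Icc (0 : ℝ) l, f (t, a₁ t) = 0 ∧ f (t, a₂ t) = 1) ∧
        E = ∫ x in A, ((deriv (fun t => f (t, x.2)) x.1) ^ 2 / h x.2
          + h x.2 * (deriv (fun s => f (x.1, s)) x.2) ^ 2)} ≤
      ∫ t in (0 : ℝ)..l,
        (1 + (q₁ t ^ 2 + q₁ t * q₂ t + q₂ t ^ 2) / 3) / (H (a₂ t) - H (a₁ t)) := by
  have hkne : k ≠ 0 := hk.ne'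
  have h0mem : (0 : ℝ) ∈ Icc (0 : ℝ) l := ⟨le_refl 0, hl.le⟩
  have hIccNE : (Icc (0 : ℝ) l).Nonempty := ⟨0, h0mem⟩
  obtain ⟨t₀, ht₀, hmin⟩ := isCompact_Icc.exists_isMinOn hIccNE hd₁.continuous.continuousOn
  obtain ⟨t₁, ht₁, hmax⟩ := isCompact_Icc.exists_isMaxOn hIccNE hd₂.continuous.continuousOn
  set m : ℝ := a₁ t₀ with hm_def
  set M : ℝ := a₂ t₁ with hM_def
  have hsub : ∀ t ∈ Icc (0 : ℝ) l, ∀ s ∈ Icc (a₁ t) (a₂ t), s ∈ Icc m M := by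
    intro t ht s hs
    exact ⟨(hmin ht).trans hs.1, hs.2.trans (hmax ht)⟩
  have hmem₁ : ∀ t ∈ Icc (0 : ℝ) l, a₁ t ∈ Icc m M := fun t ht =>
    hsub t ht (a₁ t) ⟨le_rfl, (h₁₂ t ht).le⟩
  have hmem₂ : ∀ t ∈ Icc (0 : ℝ) l, a₂ t ∈ Icc m M := fun t ht =>
    hsub t ht (a₂ t) ⟨(h₁₂ t ht).le, le_rfl⟩
  -- key analytic facts, by cases
  have hmain : (∀ s ∈ Icc m M, 0 < h s ∧ HasDerivAt H (1 / h s) s ∧ ContDiffAt ℝ 1 H s)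
      ∧ Continuous h := by
    rcases hcase with ⟨hh, hH⟩ | ⟨hh, hH, hstrip⟩
    · constructor
      · intro s _
        refine ⟨by rw [hh]; exact Real.cosh_pos _, ?_, ?_⟩
        · rw [funext hH, hh]
          have h1 : HasDerivAt (fun s : ℝ => k * s) k s := by
            simpa using (hasDerivAt_id s).const_mul k
          have h2 : HasDerivAt (fun s => Real.exp (k * s)) (Real.exp (k * s) * k) s :=
            (Real.hasDerivAt_exp _).comp s h1
          have h3 := ((Real.hasDerivAt_arctan (Real.exp (k * s))).comp s h2).const_mul 2
          have h4 := h3.div_const k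
          refine h4.congr_deriv ?_
          have he := (Real.exp_pos (k * s)).ne'
          have h1e : (1 : ℝ) + Real.exp (k * s) ^ 2 ≠ 0 := by positivity
          have hc := (Real.cosh_pos (k * s)).ne'
          rw [Real.cosh_eq, Real.exp_neg]
          field_simp
          ring
        · rw [funext hH]
          exact ((contDiff_const.mul (Real.contDiff_arctan.comp (Real.contDiff_exp.comp
            (contDiff_const.mul contDiff_id)))).div_const k).contDiffAt
      · rw [funext hh]
        exact Real.continuous_cosh.comp (continuous_const.mul continuous_id)
    · constructor
      · intro s hs
        have hm' : -(π / (2 * k)) < m := (hstrip t₀ ht₀).1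
        have hM' : M < π / (2 * k) := (hstrip t₁ ht₁).2
        have e1 : k * -(π / (2 * k)) = -(π / 2) := by field_simp
        have e2 : k * (π / (2 * k)) = π / 2 := by field_simp
        have hks1 : -(π / 2) < k * s := by
          have h1 : k * -(π / (2 * k)) < k * m := (mul_lt_mul_iff_right₀ hk).mpr hm'
          have h2 : k * m ≤ k * s := (mul_le_mul_iff_right₀ hk).mpr hs.1
          linarith [e1 ▸ h1]
        have hks2 : k * s < π / 2 := by
          have h1 : k * M < k * (π / (2 * k)) := (mul_lt_mul_iff_right₀ hk).mpr hM'
          have h2 : k * s ≤ k * M := (mul_le_mul_iff_right₀ hk).mpr hs.2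
          linarith [e2 ▸ h1]
        have hcos : 0 < Real.cos (k * s) := Real.cos_pos_of_mem_Ioo ⟨hks1, hks2⟩
        have hsin : -1 < Real.sin (k * s) := by
          have := Real.sin_lt_sin_of_lt_of_le_pi_div_two (le_refl (-(π / 2))) hks2.le hks1
          rwa [Real.sin_neg, Real.sin_pi_div_two] at this
        have h1s : 0 < 1 + Real.sin (k * s) := by linarith
        have harg : 0 < (1 + Real.sin (k * s)) / Real.cos (k * s) := div_pos h1s hcos
        refine ⟨by rw [hh]; exact hcos, ?_, ?_⟩
        · rw [funext hH, hh]
          have h1 : HasDerivAt (fun s : ℝ => k * s) k s := by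
            simpa using (hasDerivAt_id s).const_mul k
          have hsin' : HasDerivAt (fun s => 1 + Real.sin (k * s)) (Real.cos (k * s) * k) s := by
            simpa using ((Real.hasDerivAt_sin (k * s)).comp s h1).const_add 1
          have hcos' : HasDerivAt (fun s => Real.cos (k * s)) (-Real.sin (k * s) * k) s :=
            (Real.hasDerivAt_cos (k * s)).comp s h1
          have hdiv := hsin'.div hcos' hcos.ne'
          have hfinal := (hdiv.log harg.ne').div_const k
          refine hfinal.congr_deriv ?_
          have hpy := Real.sin_sq_add_cos_sq (k * s)
          simp only [Pi.div_apply]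
          field_simp
          linear_combination hpy
        · rw [funext hH]
          have c1 : ContDiffAt ℝ 1 (fun s => 1 + Real.sin (k * s)) s :=
            (contDiff_const.add (Real.contDiff_sin.comp
              (contDiff_const.mul contDiff_id))).contDiffAt
          have c2 : ContDiffAt ℝ 1 (fun s => Real.cos (k * s)) s :=
            (Real.contDiff_cos.comp (contDiff_const.mul contDiff_id)).contDiffAt
          exact ((Real.contDiffAt_log.mpr harg.ne').comp s (c1.div c2 hcos.ne')).div_const k
      · rw [funext hh]
        exact Real.continuous_cos.comp (continuous_const.mul continuous_id)
  obtain ⟨hkey, hhcont⟩ := hmain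
  have hpos : ∀ s ∈ Icc m M, 0 < h s := fun s hs => (hkey s hs).1
  have hHd : ∀ s ∈ Icc m M, HasDerivAt H (1 / h s) s := fun s hs => (hkey s hs).2.1
  have hmono : StrictMonoOn H (Icc m M) := by
    apply strictMonoOn_of_deriv_pos (convex_Icc m M)
    · exact fun s hs => (hHd s hs).continuousAt.continuousWithinAt
    · intro s hs
      rw [interior_Icc] at hs
      rw [(hHd s (Ioo_subset_Icc_self hs)).deriv]
      exact one_div_pos.mpr (hpos s (Ioo_subset_Icc_self hs))
  have hD : ∀ t ∈ Icc (0 : ℝ) l, 0 < H (a₂ t) - H (a₁ t) := fun t ht =>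
    sub_pos.mpr (hmono (hmem₁ t ht) (hmem₂ t ht) (h₁₂ t ht))
  -- part 1 : boundary values
  have part1 : ∀ t ∈ Icc (0 : ℝ) l, p (t, a₁ t) = 0 ∧ p (t, a₂ t) = 1 := by
    intro t ht
    exact ⟨by rw [hp]; simp, by rw [hp]; exact div_self (hD t ht).ne'⟩
  -- derivatives of H ∘ aᵢ
  have hq₁' : ∀ t ∈ Icc (0 : ℝ) l, HasDerivAt (fun t => H (a₁ t)) (q₁ t) t := by
    intro t ht
    have h2 := (hHd (a₁ t) (hmem₁ t ht)).comp t ((hd₁.differentiable one_ne_zero) t).hasDerivAt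
    have hv : q₁ t = 1 / h (a₁ t) * deriv a₁ t := by rw [hq₁]; ring
    rw [hv]; exact h2
  have hq₂' : ∀ t ∈ Icc (0 : ℝ) l, HasDerivAt (fun t => H (a₂ t)) (q₂ t) t := by
    intro t ht
    have h2 := (hHd (a₂ t) (hmem₂ t ht)).comp t ((hd₂.differentiable one_ne_zero) t).hasDerivAt
    have hv : q₂ t = 1 / h (a₂ t) * deriv a₂ t := by rw [hq₂]; ring
    rw [hv]; exact h2
  -- derivatives of p
  have hderivt : ∀ t ∈ Icc (0 : ℝ) l, ∀ s : ℝ,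
      HasDerivAt (fun t => p (t, s))
        ((-q₁ t * (H (a₂ t) - H (a₁ t)) - (H s - H (a₁ t)) * (q₂ t - q₁ t))
          / (H (a₂ t) - H (a₁ t)) ^ 2) t := by
    intro t ht s
    have hN : HasDerivAt (fun t => H s - H (a₁ t)) (-q₁ t) t := (hq₁' t ht).const_sub (H s)
    have hDt : HasDerivAt (fun t => H (a₂ t) - H (a₁ t)) (q₂ t - q₁ t) t :=
      (hq₂' t ht).sub (hq₁' t ht)
    have hres := hN.div hDt (hD t ht).ne'
    have hfun : (fun t => p (t, s)) = fun t => (H s - H (a₁ t)) / (H (a₂ t) - H (a₁ t)) :=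
      funext fun t => hp t s
    rw [hfun]
    exact hres
  have hderivs : ∀ t ∈ Icc (0 : ℝ) l, ∀ s ∈ Icc m M,
      HasDerivAt (fun s => p (t, s)) ((1 / h s) / (H (a₂ t) - H (a₁ t))) s := by
    intro t ht s hs
    have hfun : (fun s => p (t, s)) = fun s => (H s - H (a₁ t)) / (H (a₂ t) - H (a₁ t)) :=
      funext fun s => hp t s
    rw [hfun]
    exact ((hHd s hs).sub_const (H (a₁ t))).div_const _
  -- explicit integrand
  set G : ℝ × ℝ → ℝ := fun x =>
    ((q₁ x.1 + (H x.2 - H (a₁ x.1)) / (H (a₂ x.1) - H (a₁ x.1)) * (q₂ x.1 - q₁ x.1)) ^ 2 + 1)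
      / (h x.2 * (H (a₂ x.1) - H (a₁ x.1)) ^ 2) with hG_def
  -- measurability / compactness of A
  have hAclosed : IsClosed A := by
    rw [hA]
    have hset : {x : ℝ × ℝ | x.1 ∈ Icc (0 : ℝ) l ∧ x.2 ∈ Icc (a₁ x.1) (a₂ x.1)} =
        ({x : ℝ × ℝ | 0 ≤ x.1} ∩ {x : ℝ × ℝ | x.1 ≤ l}) ∩
          ({x : ℝ × ℝ | a₁ x.1 ≤ x.2} ∩ {x : ℝ × ℝ | x.2 ≤ a₂ x.1}) := by
      ext x; simp only [mem_setOf_eq, mem_Icc, mem_inter_iff]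
    rw [hset]
    exact (((isClosed_le continuous_const continuous_fst).inter
      (isClosed_le continuous_fst continuous_const)).inter
      ((isClosed_le (hd₁.continuous.comp continuous_fst) continuous_snd).inter
      (isClosed_le continuous_snd (hd₂.continuous.comp continuous_fst))))
  have hAmeas : MeasurableSet A := hAclosed.measurableSet
  have hAsubR : A ⊆ Icc (0 : ℝ) l ×ˢ Icc m M := by
    rw [hA]; rintro ⟨t, s⟩ ⟨ht, hs⟩; exact ⟨ht, hsub t ht s hs⟩
  have hAcomp : IsCompact A :=
    (isCompact_Icc.prod isCompact_Icc).of_isClosed_subset hAclosed hAsubR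
  -- continuity of G on A
  have hGcont : ContinuousOn G A := by
    rintro ⟨t, s⟩ hxA
    have ht : t ∈ Icc (0 : ℝ) l := (hAsubR hxA).1
    have hs : s ∈ Icc m M := (hAsubR hxA).2
    apply ContinuousAt.continuousWithinAt
    have cq₁ : ContinuousAt q₁ t := by
      rw [funext hq₁]
      exact ((hd₁.continuous_deriv le_rfl).continuousAt).div
        ((hhcont.comp hd₁.continuous).continuousAt) (hpos _ (hmem₁ t ht)).ne'
    have cq₂ : ContinuousAt q₂ t := by
      rw [funext hq₂]
      exact ((hd₂.continuous_deriv le_rfl).continuousAt).div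
        ((hhcont.comp hd₂.continuous).continuousAt) (hpos _ (hmem₂ t ht)).ne'
    have ca₁ : ContinuousAt (fun x : ℝ × ℝ => a₁ x.1) (t, s) :=
      (hd₁.continuous.comp continuous_fst).continuousAt
    have ca₂ : ContinuousAt (fun x : ℝ × ℝ => a₂ x.1) (t, s) :=
      (hd₂.continuous.comp continuous_fst).continuousAt
    have cH₁ : ContinuousAt (fun x : ℝ × ℝ => H (a₁ x.1)) (t, s) :=
      ContinuousAt.comp (x := ((t, s) : ℝ × ℝ)) (g := H)
        ((hkey (a₁ t) (hmem₁ t ht)).2.2.continuousAt) ca₁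
    have cH₂ : ContinuousAt (fun x : ℝ × ℝ => H (a₂ x.1)) (t, s) :=
      ContinuousAt.comp (x := ((t, s) : ℝ × ℝ)) (g := H)
        ((hkey (a₂ t) (hmem₂ t ht)).2.2.continuousAt) ca₂
    have cHs : ContinuousAt (fun x : ℝ × ℝ => H x.2) (t, s) :=
      ((hkey s hs).2.2.continuousAt).comp continuous_snd.continuousAt
    have chs : ContinuousAt (fun x : ℝ × ℝ => h x.2) (t, s) :=
      (hhcont.comp continuous_snd).continuousAt
    have cq₁' : ContinuousAt (fun x : ℝ × ℝ => q₁ x.1) (t, s) :=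
      cq₁.comp continuous_fst.continuousAt
    have cq₂' : ContinuousAt (fun x : ℝ × ℝ => q₂ x.1) (t, s) :=
      cq₂.comp continuous_fst.continuousAt
    exact (((cq₁'.add (((cHs.sub cH₁).div (cH₂.sub cH₁) (hD t ht).ne').mul
      (cq₂'.sub cq₁'))).pow 2).add continuousAt_const).div
      (chs.mul ((cH₂.sub cH₁).pow 2))
      (mul_ne_zero (hpos s hs).ne' (pow_ne_zero 2 (hD t ht).ne'))
  have hGint : IntegrableOn G A := hGcont.integrableOn_compact hAcomp
  -- integrand equals G on A
  have hFG : ∀ x ∈ A, (deriv (fun t => p (t, x.2)) x.1) ^ 2 / h x.2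
      + h x.2 * (deriv (fun s => p (x.1, s)) x.2) ^ 2 = G x := by
    rintro ⟨t, s⟩ hxA
    have ht : t ∈ Icc (0 : ℝ) l := (hAsubR hxA).1
    have hs : s ∈ Icc m M := (hAsubR hxA).2
    show (deriv (fun t' => p (t', s)) t) ^ 2 / h s
      + h s * (deriv (fun s' => p (t, s')) s) ^ 2 = G (t, s)
    rw [(hderivt t ht s).deriv, (hderivs t ht s hs).deriv]
    have h1 : h s ≠ 0 := (hpos s hs).ne'
    have h2 : H (a₂ t) - H (a₁ t) ≠ 0 := (hD t ht).ne'
    simp only [hG_def]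
    field_simp
    ring
  -- inner integral via FTC
  have hinner : ∀ t ∈ Icc (0 : ℝ) l, (∫ s in Icc (a₁ t) (a₂ t), G (t, s)) =
      (1 + (q₁ t ^ 2 + q₁ t * q₂ t + q₂ t ^ 2) / 3) / (H (a₂ t) - H (a₁ t)) := by
    intro t ht
    have hab : a₁ t ≤ a₂ t := (h₁₂ t ht).le
    set c := q₂ t - q₁ t with hc_def
    set Dt := H (a₂ t) - H (a₁ t) with hDt_def
    have hDne : Dt ≠ 0 := by rw [hDt_def]; exact (hD t ht).ne'
    set Ψ : ℝ → ℝ := fun s =>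
      ((1 + q₁ t ^ 2) * ((H s - H (a₁ t)) / Dt) + q₁ t * c * ((H s - H (a₁ t)) / Dt) ^ 2
        + c ^ 2 / 3 * ((H s - H (a₁ t)) / Dt) ^ 3) / Dt with hΨ_def
    have hGtcont : ContinuousOn (fun s => G (t, s)) (Icc (a₁ t) (a₂ t)) :=
      hGcont.comp ((continuous_const.prodMk continuous_id).continuousOn)
        (fun s hs => by rw [hA]; exact ⟨ht, hs⟩)
    have hint : IntervalIntegrable (fun s => G (t, s)) volume (a₁ t) (a₂ t) :=
      ContinuousOn.intervalIntegrable (by rw [uIcc_of_le hab]; exact hGtcont)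
    have hder : ∀ s ∈ uIcc (a₁ t) (a₂ t), HasDerivAt Ψ (G (t, s)) s := by
      rw [uIcc_of_le hab]
      intro s hs
      have hs' := hsub t ht s hs
      have hu : HasDerivAt (fun s => (H s - H (a₁ t)) / Dt) ((1 / h s) / Dt) s :=
        ((hHd s hs').sub_const _).div_const _
      have h1 := hu.const_mul (1 + q₁ t ^ 2)
      have h2 := (hu.pow 2).const_mul (q₁ t * c)
      have h3 := (hu.pow 3).const_mul (c ^ 2 / 3)
      have hres := ((h1.add h2).add h3).div_const Dt
      refine hres.congr_deriv ?_
      have hhne : h s ≠ 0 := (hpos s hs').ne'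
      simp only [hG_def, ← hDt_def, hc_def, Nat.cast_ofNat, show (2:ℕ) - 1 = 1 from rfl,
        show (3:ℕ) - 1 = 2 from rfl, pow_one]
      field_simp
      ring
    rw [MeasureTheory.integral_Icc_eq_integral_Ioc, ← intervalIntegral.integral_of_le hab,
      intervalIntegral.integral_eq_sub_of_hasDerivAt hder hint]
    simp only [hΨ_def]
    rw [← hDt_def, div_self hDne, sub_self, zero_div]
    rw [hc_def]
    field_simp
    ring
  -- part 2 : energy computation
  have part2 : (∫ x in A, ((deriv (fun t => p (t, x.2)) x.1) ^ 2 / h x.2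
      + h x.2 * (deriv (fun s => p (x.1, s)) x.2) ^ 2))
      = (∫ t in (0 : ℝ)..l,
          (1 + (q₁ t ^ 2 + q₁ t * q₂ t + q₂ t ^ 2) / 3) / (H (a₂ t) - H (a₁ t))) := by
    rw [setIntegral_congr_fun hAmeas (fun x hx => hFG x hx)]
    rw [aux_fubini G l a₁ a₂ A hA hAmeas hGint]
    rw [setIntegral_congr_fun measurableSet_Icc (fun t ht => hinner t ht)]
    rw [intervalIntegral.integral_of_le hl.le, MeasureTheory.integral_Icc_eq_integral_Ioc]
  refine ⟨part1, part2, ?_⟩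
  -- part 3 : capacity bound
  have hpfun : p = fun x : ℝ × ℝ => (H x.2 - H (a₁ x.1)) / (H (a₂ x.1) - H (a₁ x.1)) := by
    funext x; obtain ⟨t, s⟩ := x; exact hp t s
  set R : Set (ℝ × ℝ) := Icc (0 : ℝ) l ×ˢ Icc m M with hR_def
  have hpC1 : ∀ x ∈ R, ContDiffAt ℝ 1 p x := by
    rintro ⟨t, s⟩ hx
    obtain ⟨ht, hs⟩ := hx
    rw [hpfun]
    have cH₁ : ContDiffAt ℝ 1 (fun x : ℝ × ℝ => H (a₁ x.1)) (t, s) :=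
      ((hkey (a₁ t) (hmem₁ t ht)).2.2).comp (t, s) ((hd₁.comp contDiff_fst).contDiffAt)
    have cH₂ : ContDiffAt ℝ 1 (fun x : ℝ × ℝ => H (a₂ x.1)) (t, s) :=
      ((hkey (a₂ t) (hmem₂ t ht)).2.2).comp (t, s) ((hd₂.comp contDiff_fst).contDiffAt)
    have cHs : ContDiffAt ℝ 1 (fun x : ℝ × ℝ => H x.2) (t, s) :=
      ((hkey s hs).2.2).comp (t, s) contDiff_snd.contDiffAt
    exact (cHs.sub cH₁).div (cH₂.sub cH₁) (hD t ht).ne'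
  have hRconv : Convex ℝ R := (convex_Icc _ _).prod (convex_Icc _ _)
  have hRcomp : IsCompact R := isCompact_Icc.prod isCompact_Icc
  have hfdc : ∀ x ∈ R, ContinuousAt (fderiv ℝ p) x := by
    intro x hx
    obtain ⟨f', u, hu, hf'c, hf'd⟩ := contDiffAt_one_iff.mp (hpC1 x hx)
    have he : ∀ᶠ y in 𝓝 x, fderiv ℝ p y = f' y :=
      Filter.eventually_of_mem hu (fun y hy => (hf'd y hy).fderiv)
    exact (hf'c.continuousAt hu).congr (Filter.EventuallyEq.symm he)
  obtain ⟨C, hC⟩ := hRcomp.exists_bound_of_continuousOn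
    (fun x hx => (hfdc x hx).continuousWithinAt)
  have hlipR : LipschitzOnWith C.toNNReal p R := by
    apply Convex.lipschitzOnWith_of_nnnorm_fderiv_le
      (fun x hx => (hpC1 x hx).differentiableAt one_ne_zero) ?_ hRconv
    intro x hx
    rw [← NNReal.coe_le_coe, coe_nnnorm, Real.coe_toNNReal']
    exact (hC x hx).trans (le_max_left _ _)
  apply csInf_le
  · refine ⟨0, ?_⟩
    rintro E ⟨f, -, -, rfl⟩
    apply MeasureTheory.setIntegral_nonneg hAmeas
    intro x hx
    have hx2 : 0 < h x.2 := hpos x.2 ((hAsubR hx).2)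
    positivity
  · exact ⟨p, ⟨C.toNNReal, hlipR.mono hAsubR⟩, part1, part2.symm⟩
end

section
/- Let 0 < k₁ ≤ k₂, let K : ℝ → ℝ be continuous with −k₂² ≤ K(s) ≤ −k₁² for all s, and let h : ℝ → ℝ be twice differentiable with h''(s) = −K(s)·h(s), h(0) = 1 and h'(0) = 0. Then for all s ∈ ℝ, cosh(k₁ s) ≤ h(s) ≤ cosh(k₂ s). -/
open Real Set

/-- derivative of `s ↦ cosh (k*s)` -/
lemma hasDerivAt_cosh_mul (k s : ℝ) :
    HasDerivAt (fun s => Real.cosh (k * s)) (k * Real.sinh (k * s)) s := by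
  simpa [mul_comm, Function.comp_def] using (Real.hasDerivAt_cosh (k * s)).comp s ((hasDerivAt_id s).const_mul k)

lemma hasDerivAt_sinh_mul (k s : ℝ) :
    HasDerivAt (fun s => Real.sinh (k * s)) (k * Real.cosh (k * s)) s := by
  simpa [mul_comm, Function.comp_def] using (Real.hasDerivAt_sinh (k * s)).comp s ((hasDerivAt_id s).const_mul k)

/-- positivity of h on [0,∞) -/
lemma fermi_pos (k₁ : ℝ) (hk₁ : 0 < k₁)
    (K h h' : ℝ → ℝ)
    (hKub : ∀ s, K s ≤ -k₁ ^ 2)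
    (hder : ∀ s, HasDerivAt h (h' s) s)
    (hder2 : ∀ s, HasDerivAt h' (-K s * h s) s)
    (h0 : h 0 = 1) (h'0 : h' 0 = 0) :
    ∀ s, 0 ≤ s → 0 < h s := by
  have hch : Continuous h := continuous_iff_continuousAt.2 fun s => (hder s).continuousAt
  have hch' : Continuous h' := continuous_iff_continuousAt.2 fun s => (hder2 s).continuousAt
  by_contra hc
  push_neg at hc
  obtain ⟨t, ht0, htle⟩ := hc
  set S : Set ℝ := {s | 0 ≤ s} ∩ {s | h s ≤ 0} with hS
  have hScl : IsClosed S :=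
    (isClosed_le continuous_const continuous_id).inter (isClosed_le hch continuous_const)
  have hSne : S.Nonempty := ⟨t, ht0, htle⟩
  have hSbd : BddBelow S := ⟨0, fun x hx => hx.1⟩
  set t₀ := sInf S with ht₀
  have ht₀S : t₀ ∈ S := hScl.csInf_mem hSne hSbd
  have ht₀0 : 0 < t₀ := by
    rcases lt_or_eq_of_le (show (0:ℝ) ≤ t₀ from ht₀S.1) with h1 | h1
    · exact h1
    · exfalso
      have h2 : h t₀ ≤ 0 := ht₀S.2
      rw [← h1, h0] at h2; linarith
  have hposlt : ∀ x, 0 < x → x < t₀ → 0 < h x := by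
    intro x hx0 hxlt
    by_contra hx
    push_neg at hx
    exact absurd (csInf_le hSbd ⟨hx0.le, hx⟩) (not_le.2 hxlt)
  have h'mono : MonotoneOn h' (Icc 0 t₀) := by
    apply monotoneOn_of_deriv_nonneg (convex_Icc 0 t₀) hch'.continuousOn
    · exact fun x _ => (hder2 x).differentiableAt.differentiableWithinAt
    · intro x hx
      rw [interior_Icc] at hx
      rw [(hder2 x).deriv]
      have hKx := hKub x
      have : 0 < h x := hposlt x hx.1 hx.2
      nlinarith
  have h'nn : ∀ x ∈ Icc (0:ℝ) t₀, 0 ≤ h' x := by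
    intro x hx
    have := h'mono (left_mem_Icc.2 ht₀0.le) hx hx.1
    rwa [h'0] at this
  have hmono : MonotoneOn h (Icc 0 t₀) := by
    apply monotoneOn_of_deriv_nonneg (convex_Icc 0 t₀) hch.continuousOn
    · exact fun x _ => (hder x).differentiableAt.differentiableWithinAt
    · intro x hx
      rw [interior_Icc] at hx
      rw [(hder x).deriv]
      exact h'nn x ⟨hx.1.le, hx.2.le⟩
  have hm := hmono (left_mem_Icc.2 ht₀0.le) (right_mem_Icc.2 ht₀0.le) ht₀0.le
  rw [h0] at hm
  have h2 : h t₀ ≤ 0 := ht₀S.2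
  linarith

/-- main comparison on [0,∞) -/
lemma fermi_aux (k₁ k₂ : ℝ) (hk₁ : 0 < k₁) (hk : k₁ ≤ k₂)
    (K h h' : ℝ → ℝ)
    (hKlb : ∀ s, -k₂ ^ 2 ≤ K s) (hKub : ∀ s, K s ≤ -k₁ ^ 2)
    (hder : ∀ s, HasDerivAt h (h' s) s)
    (hder2 : ∀ s, HasDerivAt h' (-K s * h s) s)
    (h0 : h 0 = 1) (h'0 : h' 0 = 0) :
    ∀ s, 0 ≤ s → Real.cosh (k₁ * s) ≤ h s ∧ h s ≤ Real.cosh (k₂ * s) := by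
  have hpos := fermi_pos k₁ hk₁ K h h' hKub hder hder2 h0 h'0
  -- Wronskian-type functions
  have hwd : ∀ (k : ℝ) (s : ℝ), HasDerivAt
      (fun s => h' s * Real.cosh (k * s) - h s * (k * Real.sinh (k * s)))
      ((-K s - k ^ 2) * (h s * Real.cosh (k * s))) s := by
    intro k s
    have h1 := ((hder2 s).mul (hasDerivAt_cosh_mul k s))
    have h2 := ((hder s).mul ((hasDerivAt_sinh_mul k s).const_mul k))
    exact (h1.sub h2).congr_deriv (by ring)
  have hqd : ∀ (k : ℝ) (s : ℝ), HasDerivAt (fun s => h s / Real.cosh (k * s))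
      ((h' s * Real.cosh (k * s) - h s * (k * Real.sinh (k * s))) / (Real.cosh (k * s)) ^ 2) s := by
    intro k s
    exact (hder s).div (hasDerivAt_cosh_mul k s) (Real.cosh_pos _).ne'
  intro s hs
  constructor
  · -- lower bound via k₁
    set v : ℝ → ℝ := fun s => h' s * Real.cosh (k₁ * s) - h s * (k₁ * Real.sinh (k₁ * s)) with hv
    have hvmono : MonotoneOn v (Ici 0) := by
      apply monotoneOn_of_deriv_nonneg (convex_Ici 0)
        (continuous_iff_continuousAt.2 fun x => (hwd k₁ x).continuousAt).continuousOn
      · exact fun x _ => (hwd k₁ x).differentiableAt.differentiableWithinAt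
      · intro x hx
        rw [interior_Ici] at hx
        rw [(hwd k₁ x).deriv]
        have h1 := hKub x
        have h2 := hpos x (le_of_lt hx)
        exact mul_nonneg (by linarith) (mul_nonneg h2.le (Real.cosh_pos _).le)
    have hvnn : ∀ x, 0 ≤ x → 0 ≤ v x := by
      intro x hx
      have := hvmono (self_mem_Ici) hx hx
      simp only [hv] at this ⊢
      rw [h'0, h0, mul_zero, Real.sinh_zero, mul_zero, mul_zero, zero_mul, sub_zero] at this
      linarith [this]
    have hqmono : MonotoneOn (fun s => h s / Real.cosh (k₁ * s)) (Ici 0) := by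
      apply monotoneOn_of_deriv_nonneg (convex_Ici 0)
        (continuous_iff_continuousAt.2 fun x => (hqd k₁ x).continuousAt).continuousOn
      · exact fun x _ => (hqd k₁ x).differentiableAt.differentiableWithinAt
      · intro x hx
        rw [interior_Ici] at hx
        rw [(hqd k₁ x).deriv]
        exact div_nonneg (hvnn x hx.le) (by positivity)
    have := hqmono self_mem_Ici hs hs
    simp only [mul_zero, Real.cosh_zero, h0, div_one] at this
    exact (one_le_div (Real.cosh_pos _)).1 this
  · -- upper bound via k₂
    set w : ℝ → ℝ := fun s => h' s * Real.cosh (k₂ * s) - h s * (k₂ * Real.sinh (k₂ * s)) with hw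
    have hwanti : AntitoneOn w (Ici 0) := by
      apply antitoneOn_of_deriv_nonpos (convex_Ici 0)
        (continuous_iff_continuousAt.2 fun x => (hwd k₂ x).continuousAt).continuousOn
      · exact fun x _ => (hwd k₂ x).differentiableAt.differentiableWithinAt
      · intro x hx
        rw [interior_Ici] at hx
        rw [(hwd k₂ x).deriv]
        have h1 := hKlb x
        have h2 := hpos x (le_of_lt hx)
        exact mul_nonpos_of_nonpos_of_nonneg (by linarith)
          (mul_nonneg h2.le (Real.cosh_pos _).le)
    have hwnp : ∀ x, 0 ≤ x → w x ≤ 0 := by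
      intro x hx
      have := hwanti (self_mem_Ici) hx hx
      simp only [hw] at this ⊢
      rw [h'0, h0, mul_zero, Real.sinh_zero, mul_zero, mul_zero, zero_mul, sub_zero] at this
      linarith [this]
    have hqanti : AntitoneOn (fun s => h s / Real.cosh (k₂ * s)) (Ici 0) := by
      apply antitoneOn_of_deriv_nonpos (convex_Ici 0)
        (continuous_iff_continuousAt.2 fun x => (hqd k₂ x).continuousAt).continuousOn
      · exact fun x _ => (hqd k₂ x).differentiableAt.differentiableWithinAt
      · intro x hx
        rw [interior_Ici] at hx
        rw [(hqd k₂ x).deriv]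
        exact div_nonpos_of_nonpos_of_nonneg (hwnp x hx.le) (by positivity)
    have := hqanti self_mem_Ici hs hs
    simp only [mul_zero, Real.cosh_zero, h0, div_one] at this
    exact (div_le_one (Real.cosh_pos _)).1 this

/-- If `0 < k₁ ≤ k₂`, `K : ℝ → ℝ` is continuous with
`-k₂² ≤ K ≤ -k₁²`, and `h` is twice differentiable with `h'' = -K·h`, `h 0 = 1`,
`h' 0 = 0`, then `cosh (k₁ s) ≤ h s ≤ cosh (k₂ s)` for all `s`. -/
theorem fermi_coefficient_comparison (k₁ k₂ : ℝ) (hk₁ : 0 < k₁) (hk : k₁ ≤ k₂)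
    (K h h' : ℝ → ℝ) (hKcont : Continuous K)
    (hKlb : ∀ s, -k₂ ^ 2 ≤ K s) (hKub : ∀ s, K s ≤ -k₁ ^ 2)
    (hder : ∀ s, HasDerivAt h (h' s) s)
    (hder2 : ∀ s, HasDerivAt h' (-K s * h s) s)
    (h0 : h 0 = 1) (h'0 : h' 0 = 0) :
    ∀ s : ℝ, Real.cosh (k₁ * s) ≤ h s ∧ h s ≤ Real.cosh (k₂ * s) := by
  intro s
  rcases le_or_gt 0 s with hs | hs
  · exact fermi_aux k₁ k₂ hk₁ hk K h h' hKlb hKub hder hder2 h0 h'0 s hs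
  · have hderN : ∀ t, HasDerivAt (fun t => h (-t)) (-h' (-t)) t := by
      intro t
      simpa [Function.comp_def] using (hder (-t)).comp t (hasDerivAt_neg t)
    have hder2N : ∀ t, HasDerivAt (fun t => -h' (-t)) (-(K (-t)) * h (-t)) t := by
      intro t
      have h1 := ((hder2 (-t)).comp t (hasDerivAt_neg t)).neg
      exact h1.congr_deriv (by ring)
    have hres := fermi_aux k₁ k₂ hk₁ hk (fun t => K (-t)) (fun t => h (-t))
      (fun t => -h' (-t)) (fun t => hKlb (-t)) (fun t => hKub (-t)) hderN hder2N
      (by simpa using h0) (by simp [h'0]) (-s) (by linarith)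
    obtain ⟨hl, hu⟩ := hres
    simp only [neg_neg, mul_neg, Real.cosh_neg] at hl hu
    exact ⟨hl, hu⟩
end

section
/- For all real numbers x₁ < x₂, arctan(exp(x₂)) − arctan(exp(x₁)) ≤ arctan( (sinh(x₂) − sinh(x₁)) / 2 ). Equivalently, for all real p < q, arctan(q) − arctan(p) ≤ 2·arctan((q − p)/2). -/
open Real intervalIntegral

lemma key_lem (t m : ℝ) (ht : 0 ≤ t) (hm : 0 ≤ m) :
    arctan (m + t) - arctan (m - t) ≤ 2 * arctan t := by
  have h1 : arctan (t + m) - arctan t = ∫ x in t..(t + m), 1 / (1 + x ^ 2) := by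
    rw [integral_one_div_one_add_sq]
  have h2 : arctan (m - t) - arctan (-t) =
      ∫ x in t..(t + m), 1 / (1 + (x - 2 * t) ^ 2) := by
    rw [integral_comp_sub_right (fun x => (1:ℝ) / (1 + x ^ 2)) (2 * t),
      integral_one_div_one_add_sq]
    ring_nf
  have hmono : (∫ x in t..(t + m), 1 / (1 + x ^ 2)) ≤
      ∫ x in t..(t + m), 1 / (1 + (x - 2 * t) ^ 2) := by
    apply integral_mono_on (by linarith)
    · exact (continuous_const.div (by fun_prop) (fun x => by positivity)).intervalIntegrable _ _
    · exact (continuous_const.div (by fun_prop) (fun x => by positivity)).intervalIntegrable _ _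
    · intro x hx
      have hx1 : t ≤ x := hx.1
      apply div_le_div_of_nonneg_left one_pos.le (by nlinarith [sq_nonneg (x - 2*t)]) ?_
      nlinarith
  have := arctan_neg t
  have : arctan (t + m) - arctan t ≤ arctan (m - t) + arctan t := by
    rw [h1]; rw [arctan_neg] at h2; linarith [hmono, h2]
  have he : m + t = t + m := by ring
  rw [he]; linarith

lemma part2 (p q : ℝ) (hpq : p < q) :
    arctan q - arctan p ≤ 2 * arctan ((q - p) / 2) := by
  set t := (q - p) / 2 with htdef
  have ht : 0 ≤ t := by simp [htdef]; linarith
  rcases le_or_gt 0 (p + q) with hm | hm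
  · have := key_lem t ((p + q) / 2) ht (by linarith)
    have e1 : (p + q) / 2 + t = q := by rw [htdef]; ring
    have e2 : (p + q) / 2 - t = p := by rw [htdef]; ring
    rwa [e1, e2] at this
  · have := key_lem t (-(p + q) / 2) ht (by linarith)
    have e1 : -(p + q) / 2 + t = -p := by rw [htdef]; ring
    have e2 : -(p + q) / 2 - t = -q := by rw [htdef]; ring
    rw [e1, e2, arctan_neg, arctan_neg] at this
    linarith

lemma gud (x : ℝ) : arctan (Real.sinh x) = 2 * arctan (Real.exp x) - π / 2 := by
  set θ := arctan (Real.exp x) with hθ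
  have h1 : 0 < θ := by
    rw [hθ, ← arctan_zero]; exact arctan_strictMono (Real.exp_pos x)
  have h2 : θ < π / 2 := arctan_lt_pi_div_two _
  have hc : Real.cos θ ≠ 0 := (cos_arctan_pos _).ne'
  have hs : Real.sin θ ≠ 0 := ne_of_gt (Real.sin_pos_of_pos_of_lt_pi h1 (by linarith [Real.pi_pos]))
  have htan : Real.tan θ = Real.exp x := tan_arctan _
  have hex : Real.exp x ≠ 0 := (Real.exp_pos x).ne'
  have hsin : Real.sin θ = Real.exp x * Real.cos θ := by
    rw [Real.tan_eq_sin_div_cos] at htan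
    field_simp at htan; linarith [htan]
  have hkey : Real.tan (2 * θ - π / 2) = Real.sinh x := by
    rw [Real.tan_eq_sin_div_cos, Real.sin_sub, Real.cos_sub]
    simp only [Real.sin_pi_div_two, Real.cos_pi_div_two, mul_zero, mul_one, zero_sub,
      zero_add, Real.sin_two_mul, Real.cos_two_mul, Real.sinh_eq, Real.exp_neg]
    have hcos2 : Real.cos θ ^ 2 ≠ 0 := pow_ne_zero _ hc
    have hpyth : Real.exp x ^ 2 * Real.cos θ ^ 2 + Real.cos θ ^ 2 = 1 := by
      have h := Real.sin_sq_add_cos_sq θ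
      rw [hsin] at h
      linear_combination h
    rw [hsin]
    field_simp
    linear_combination (-1) * hpyth
  rw [← hkey, arctan_tan] <;> linarith

/-- For all real `x₁ < x₂`,
`arctan (exp x₂) - arctan (exp x₁) ≤ arctan ((sinh x₂ - sinh x₁) / 2)`;
equivalently, for all real `p < q`, `arctan q - arctan p ≤ 2 * arctan ((q - p) / 2)`. -/
theorem arctan_exp_sub_le_arctan_sinh_sub :
    (∀ x₁ x₂ : ℝ, x₁ < x₂ →
      Real.arctan (Real.exp x₂) - Real.arctan (Real.exp x₁) ≤
        Real.arctan ((Real.sinh x₂ - Real.sinh x₁) / 2)) ∧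
    (∀ p q : ℝ, p < q →
      Real.arctan q - Real.arctan p ≤ 2 * Real.arctan ((q - p) / 2)) := by
  refine ⟨fun x₁ x₂ h => ?_, part2⟩
  have hs : Real.sinh x₁ < Real.sinh x₂ := Real.sinh_lt_sinh.2 h
  have := part2 _ _ hs
  have g1 := gud x₁
  have g2 := gud x₂
  linarith
end

section
/- Let k > 0 and a₁ < a₂ be real numbers, and let W = (1/k)·arcsinh( (sinh(k a₂) − sinh(k a₁)) / 2 ), so that ∫_{−W}^{W} cosh(ks) ds = ∫_{a₁}^{a₂} cosh(ks) ds. Then ∫_{a₁}^{a₂} ds / cosh(ks) ≤ ∫_{−W}^{W} ds / cosh(ks). -/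
open Real intervalIntegral

private lemma aux_integral_cosh_mul (k a b : ℝ) (hk : k ≠ 0) :
    ∫ s in a..b, Real.cosh (k * s) = (Real.sinh (k * b) - Real.sinh (k * a)) / k := by
  have h : ∀ x ∈ Set.uIcc a b,
      HasDerivAt (fun s => Real.sinh (k * s) / k) (Real.cosh (k * x)) x := by
    intro x _
    have h1 : HasDerivAt (fun s : ℝ => k * s) k x := by
      simpa using (hasDerivAt_id x).const_mul k
    have h3 := ((Real.hasDerivAt_sinh (k * x)).comp x h1).div_const k
    refine h3.congr_deriv ?_
    field_simp
  rw [intervalIntegral.integral_eq_sub_of_hasDerivAt h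
    ((Real.continuous_cosh.comp (continuous_const.mul continuous_id)).intervalIntegrable a b)]
  ring

private lemma aux_integral_sech_mul (k a b : ℝ) (hk : k ≠ 0) :
    ∫ s in a..b, 1 / Real.cosh (k * s)
      = (Real.arctan (Real.sinh (k * b)) - Real.arctan (Real.sinh (k * a))) / k := by
  have h : ∀ x ∈ Set.uIcc a b,
      HasDerivAt (fun s => Real.arctan (Real.sinh (k * s)) / k) (1 / Real.cosh (k * x)) x := by
    intro x _
    have h1 : HasDerivAt (fun s : ℝ => k * s) k x := by
      simpa using (hasDerivAt_id x).const_mul k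
    have h2 := (Real.hasDerivAt_sinh (k * x)).comp x h1
    have h3 := ((Real.hasDerivAt_arctan (Real.sinh (k * x))).comp x h2).div_const k
    refine h3.congr_deriv ?_
    have hc : 0 < Real.cosh (k * x) := Real.cosh_pos _
    have hsq : 1 + Real.sinh (k * x) ^ 2 = Real.cosh (k * x) ^ 2 := by
      rw [Real.cosh_sq]; ring
    rw [hsq]
    field_simp
  rw [intervalIntegral.integral_eq_sub_of_hasDerivAt h]
  · ring
  · exact (continuous_const.div (Real.continuous_cosh.comp (continuous_const.mul continuous_id))
      (fun x => (Real.cosh_pos _).ne')).intervalIntegrable a b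

private lemma aux_key0 (d m : ℝ) (hd : 0 ≤ d) (hm : 0 ≤ m) :
    Real.arctan (m + d) - Real.arctan (m - d) ≤ 2 * Real.arctan d := by
  have hF : AntitoneOn (fun m => Real.arctan (m + d) - Real.arctan (m - d)) (Set.Ici 0) := by
    apply antitoneOn_of_deriv_nonpos (convex_Ici 0)
    · exact ((Real.continuous_arctan.comp (continuous_id.add continuous_const)).sub
        (Real.continuous_arctan.comp (continuous_id.sub continuous_const))).continuousOn
    · intro x _
      have h1 : HasDerivAt (fun m : ℝ => Real.arctan (m + d)) (1 / (1 + (x + d) ^ 2)) x := by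
        simpa using ((hasDerivAt_id x).add_const d).arctan
      have h2 : HasDerivAt (fun m : ℝ => Real.arctan (m - d)) (1 / (1 + (x - d) ^ 2)) x := by
        simpa using ((hasDerivAt_id x).sub_const d).arctan
      exact ((h1.sub h2).differentiableAt).differentiableWithinAt
    · intro x hx
      rw [interior_Ici] at hx
      have h1 : HasDerivAt (fun m : ℝ => Real.arctan (m + d)) (1 / (1 + (x + d) ^ 2)) x := by
        simpa using ((hasDerivAt_id x).add_const d).arctan
      have h2 : HasDerivAt (fun m : ℝ => Real.arctan (m - d)) (1 / (1 + (x - d) ^ 2)) x := by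
        simpa using ((hasDerivAt_id x).sub_const d).arctan
      rw [(show HasDerivAt (fun m => Real.arctan (m + d) - Real.arctan (m - d)) _ x from h1.sub h2).deriv]
      have hle : 1 + (x - d) ^ 2 ≤ 1 + (x + d) ^ 2 := by nlinarith [(Set.mem_Ioi.1 hx).le]
      have := one_div_le_one_div_of_le (by positivity) hle
      linarith
  have h := hF (Set.self_mem_Ici) (Set.mem_Ici.2 hm) hm
  simp only [zero_add, zero_sub, Real.arctan_neg] at h
  linarith

private lemma aux_arctan_sub_le (u v : ℝ) (h : u ≤ v) :
    Real.arctan v - Real.arctan u ≤ 2 * Real.arctan ((v - u) / 2) := by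
  have hd : 0 ≤ (v - u) / 2 := by linarith
  rcases le_or_gt 0 ((u + v) / 2) with hm | hm
  · have := aux_key0 ((v - u) / 2) ((u + v) / 2) hd hm
    have e1 : (u + v) / 2 + (v - u) / 2 = v := by ring
    have e2 : (u + v) / 2 - (v - u) / 2 = u := by ring
    rw [e1, e2] at this
    exact this
  · have := aux_key0 ((v - u) / 2) (-((u + v) / 2)) hd (by linarith)
    have e1 : -((u + v) / 2) + (v - u) / 2 = -u := by ring
    have e2 : -((u + v) / 2) - (v - u) / 2 = -v := by ring
    rw [e1, e2, Real.arctan_neg, Real.arctan_neg] at this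
    linarith

/-- For `k > 0`, `a₁ < a₂` and
`W = (1/k) · arsinh ((sinh (k a₂) - sinh (k a₁)) / 2)` (so that
`∫_{-W}^{W} cosh (k s) ds = ∫_{a₁}^{a₂} cosh (k s) ds`), one has
`∫_{a₁}^{a₂} ds / cosh (k s) ≤ ∫_{-W}^{W} ds / cosh (k s)`. -/
theorem integral_one_div_cosh_le_symmetrized (k a₁ a₂ : ℝ) (hk : 0 < k) (ha : a₁ < a₂)
    (W : ℝ) (hW : W = (1 / k) * Real.arsinh ((Real.sinh (k * a₂) - Real.sinh (k * a₁)) / 2)) :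
    (∫ s in (-W)..W, Real.cosh (k * s)) = (∫ s in a₁..a₂, Real.cosh (k * s)) ∧
    (∫ s in a₁..a₂, 1 / Real.cosh (k * s)) ≤ ∫ s in (-W)..W, 1 / Real.cosh (k * s) := by
  have hk' : k ≠ 0 := hk.ne'
  set u := Real.sinh (k * a₁) with hu
  set v := Real.sinh (k * a₂) with hv
  have hkW : Real.sinh (k * W) = (v - u) / 2 := by
    rw [hW, show k * (1 / k * Real.arsinh ((v - u) / 2)) = Real.arsinh ((v - u) / 2) by
      field_simp]
    exact Real.sinh_arsinh _
  have huv : u < v := by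
    rw [hu, hv]
    exact Real.sinh_lt_sinh.2 (by nlinarith)
  have hnegW : k * (-W) = -(k * W) := by ring
  constructor
  · rw [aux_integral_cosh_mul k _ _ hk', aux_integral_cosh_mul k _ _ hk', hnegW,
      Real.sinh_neg, hkW, ← hu, ← hv]
    ring
  · rw [aux_integral_sech_mul k _ _ hk', aux_integral_sech_mul k _ _ hk', hnegW,
      Real.sinh_neg, hkW, ← hu, ← hv, Real.arctan_neg]
    have := aux_arctan_sub_le u v huv.le
    have h2 : Real.arctan v - Real.arctan u
        ≤ Real.arctan ((v - u) / 2) - -Real.arctan ((v - u) / 2) := by linarith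
    gcongr
end

section
/- Let k > 0 and 0 ≤ b ≤ a < π/(2k), and let −a ≤ a₁ < a₂ ≤ b. Define W = (1/k)·arcsin( sin(k a₂) − sin(k a₁) − sin(k a) ), so that ∫_{−a}^{W} cos(ks) ds = ∫_{a₁}^{a₂} cos(ks) ds. Then ∫_{a₁}^{a₂} ds / cos(ks) ≤ ∫_{−a}^{W} ds / cos(ks). -/
open Real

private lemma key_log_ineq (x y A : ℝ) (hA1 : A < 1) (hx : x ≤ A) (hy : y ≤ A)
    (hxy : 0 < x + y) (h1 : -1 < x) (h2 : -1 < y) :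
    (Real.log (1 + x) - Real.log (1 - x)) + (Real.log (1 + y) - Real.log (1 - y)) ≤
      (Real.log (1 + A) - Real.log (1 - A)) +
        (Real.log (1 + (x + y - A)) - Real.log (1 - (x + y - A))) := by
  have hA0 : 0 < A := by nlinarith
  have p1 : (0:ℝ) < 1 + x := by linarith
  have p2 : (0:ℝ) < 1 - x := by linarith
  have p3 : (0:ℝ) < 1 + y := by linarith
  have p4 : (0:ℝ) < 1 - y := by linarith
  have p5 : (0:ℝ) < 1 + A := by linarith
  have p6 : (0:ℝ) < 1 - A := by linarith
  have p7 : (0:ℝ) < 1 + (x + y - A) := by linarith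
  have p8 : (0:ℝ) < 1 - (x + y - A) := by linarith
  have key : (1 + x) * (1 + y) * ((1 - A) * (1 - (x + y - A))) ≤
      (1 + A) * (1 + (x + y - A)) * ((1 - x) * (1 - y)) := by
    nlinarith [mul_nonneg (mul_nonneg hxy.le (sub_nonneg.2 hx)) (sub_nonneg.2 hy)]
  have hlog : Real.log ((1 + x) * (1 + y) * ((1 - A) * (1 - (x + y - A)))) ≤
      Real.log ((1 + A) * (1 + (x + y - A)) * ((1 - x) * (1 - y))) :=
    Real.log_le_log (by positivity) key
  rw [Real.log_mul (by positivity) (by positivity), Real.log_mul p1.ne' p3.ne',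
    Real.log_mul p6.ne' p8.ne', Real.log_mul (by positivity) (by positivity),
    Real.log_mul p5.ne' p7.ne', Real.log_mul p2.ne' p4.ne'] at hlog
  linarith

private lemma hasDerivAt_sin_mul (k s : ℝ) :
    HasDerivAt (fun t => Real.sin (k * t)) (Real.cos (k * s) * k) s := by
  have h1 : HasDerivAt (fun t : ℝ => k * t) k s := by
    simpa using (hasDerivAt_id s).const_mul k
  exact (Real.hasDerivAt_sin (k * s)).comp s h1

private lemma integral_cos_mul (k x y : ℝ) (hk : 0 < k) :
    ∫ s in x..y, Real.cos (k * s) = (Real.sin (k * y) - Real.sin (k * x)) / k := by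
  have hderiv : ∀ s ∈ Set.uIcc x y,
      HasDerivAt (fun t => Real.sin (k * t) / k) (Real.cos (k * s)) s := by
    intro s _
    have := (hasDerivAt_sin_mul k s).div_const k
    simpa [mul_div_assoc, div_self hk.ne'] using this
  have hint : IntervalIntegrable (fun s => Real.cos (k * s)) MeasureTheory.volume x y :=
    (Real.continuous_cos.comp (continuous_const.mul continuous_id)).intervalIntegrable x y
  rw [intervalIntegral.integral_eq_sub_of_hasDerivAt hderiv hint]
  ring

private lemma hasDerivAt_G (k s : ℝ) (hk : 0 < k) (hc : 0 < Real.cos (k * s)) :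
    HasDerivAt (fun t => (Real.log (1 + Real.sin (k * t)) - Real.log (1 - Real.sin (k * t))) / (2 * k))
      (1 / Real.cos (k * s)) s := by
  have hpyth := Real.sin_sq_add_cos_sq (k * s)
  have hs1 : -1 < Real.sin (k * s) := by nlinarith
  have hs2 : Real.sin (k * s) < 1 := by nlinarith
  have p1 : (0:ℝ) < 1 + Real.sin (k * s) := by linarith
  have p2 : (0:ℝ) < 1 - Real.sin (k * s) := by linarith
  have hsin := hasDerivAt_sin_mul k s
  have h1 : HasDerivAt (fun t => Real.log (1 + Real.sin (k * t)))
      ((Real.cos (k * s) * k) / (1 + Real.sin (k * s))) s := by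
    have := ((hasDerivAt_const s (1:ℝ)).add hsin).log p1.ne'
    simpa using this
  have h2 : HasDerivAt (fun t => Real.log (1 - Real.sin (k * t)))
      ((-(Real.cos (k * s) * k)) / (1 - Real.sin (k * s))) s := by
    have := ((hasDerivAt_const s (1:ℝ)).sub hsin).log p2.ne'
    simpa using this
  have := (h1.sub h2).div_const (2 * k)
  refine this.congr_deriv ?_
  field_simp
  nlinarith [hpyth]

private lemma integral_inv_cos_mul (k x y : ℝ) (hk : 0 < k) (hxy : x ≤ y)
    (hc : ∀ s ∈ Set.Icc x y, 0 < Real.cos (k * s)) :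
    ∫ s in x..y, 1 / Real.cos (k * s) =
      ((Real.log (1 + Real.sin (k * y)) - Real.log (1 - Real.sin (k * y))) -
        (Real.log (1 + Real.sin (k * x)) - Real.log (1 - Real.sin (k * x)))) / (2 * k) := by
  have huIcc : Set.uIcc x y = Set.Icc x y := Set.uIcc_of_le hxy
  have hderiv : ∀ s ∈ Set.uIcc x y,
      HasDerivAt (fun t => (Real.log (1 + Real.sin (k * t)) - Real.log (1 - Real.sin (k * t))) / (2 * k))
        (1 / Real.cos (k * s)) s := by
    intro s hs
    exact hasDerivAt_G k s hk (hc s (huIcc ▸ hs))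
  have hcont : ContinuousOn (fun s => 1 / Real.cos (k * s)) (Set.uIcc x y) := by
    apply ContinuousOn.div continuousOn_const
    · exact (Real.continuous_cos.comp (continuous_const.mul continuous_id)).continuousOn
    · intro s hs
      exact (hc s (huIcc ▸ hs)).ne'
  have hint : IntervalIntegrable (fun s => 1 / Real.cos (k * s)) MeasureTheory.volume x y :=
    hcont.intervalIntegrable
  rw [intervalIntegral.integral_eq_sub_of_hasDerivAt hderiv hint]
  ring

/-- For `k > 0`, `0 ≤ b ≤ a < π/(2k)` and `-a ≤ a₁ < a₂ ≤ b`, with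
`W = (1/k) · arcsin (sin (k a₂) - sin (k a₁) - sin (k a))` (so that
`∫_{-a}^{W} cos (k s) ds = ∫_{a₁}^{a₂} cos (k s) ds`), one has
`∫_{a₁}^{a₂} ds / cos (k s) ≤ ∫_{-a}^{W} ds / cos (k s)`. -/
theorem integral_one_div_cos_le_anchored (k a b a₁ a₂ : ℝ) (hk : 0 < k)
    (hb : 0 ≤ b) (hba : b ≤ a) (ha : a < π / (2 * k))
    (ha₁ : -a ≤ a₁) (h₁₂ : a₁ < a₂) (ha₂ : a₂ ≤ b)
    (W : ℝ) (hW : W = (1 / k) * Real.arcsin (Real.sin (k * a₂) - Real.sin (k * a₁) - Real.sin (k * a))) :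
    (∫ s in (-a)..W, Real.cos (k * s)) = (∫ s in a₁..a₂, Real.cos (k * s)) ∧
    (∫ s in a₁..a₂, 1 / Real.cos (k * s)) ≤ ∫ s in (-a)..W, 1 / Real.cos (k * s) := by
  have hka : k * a < π / 2 := by
    have := (lt_div_iff₀ (by positivity : (0:ℝ) < 2 * k)).1 ha
    nlinarith
  have ha0 : 0 ≤ a := le_trans hb hba
  -- membership facts in [-π/2, π/2]
  have hmem : ∀ s : ℝ, -a ≤ s → s ≤ a → k * s ∈ Set.Icc (-(π/2)) (π/2) := by
    intro s hs1 hs2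
    constructor
    · nlinarith
    · nlinarith
  have hm_a : k * a ∈ Set.Icc (-(π/2)) (π/2) := hmem a (by linarith) le_rfl
  have hm_na : k * (-a) ∈ Set.Icc (-(π/2)) (π/2) := hmem (-a) le_rfl (by linarith)
  have hm1 : k * a₁ ∈ Set.Icc (-(π/2)) (π/2) := hmem a₁ ha₁ (by linarith)
  have hm2 : k * a₂ ∈ Set.Icc (-(π/2)) (π/2) := hmem a₂ (by linarith) (by linarith)
  set A := Real.sin (k * a) with hA
  set u₁ := Real.sin (k * a₁) with hu₁
  set u₂ := Real.sin (k * a₂) with hu₂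
  have hu12 : u₁ < u₂ :=
    Real.strictMonoOn_sin hm1 hm2 (by nlinarith)
  have hu1A : -A ≤ u₁ := by
    have := Real.strictMonoOn_sin.monotoneOn hm_na hm1 (by nlinarith)
    simpa [mul_neg, Real.sin_neg] using this
  have hu2A : u₂ ≤ A :=
    Real.strictMonoOn_sin.monotoneOn hm2 hm_a (by nlinarith)
  have hA1 : A < 1 := by
    have := Real.cos_pos_of_mem_Ioo (show k * a ∈ Set.Ioo (-(π/2)) (π/2) from ⟨by nlinarith, hka⟩)
    nlinarith [Real.sin_sq_add_cos_sq (k * a)]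
  have hAnn : 0 ≤ A := Real.sin_nonneg_of_nonneg_of_le_pi (by positivity)
    (by nlinarith [Real.pi_pos])
  -- the value v = sin (k W)
  set v := u₂ - u₁ - A with hv
  have hv_le : v ≤ u₂ := by simp only [hv]; linarith
  have hv_gt : -A < v := by simp only [hv]; linarith
  have hv1 : -1 ≤ v := by linarith
  have hv2 : v ≤ 1 := le_trans hv_le (Real.sin_le_one _)
  have hkW : k * W = Real.arcsin v := by
    rw [hW]; field_simp
  have hsinW : Real.sin (k * W) = v := by
    rw [hkW]; exact Real.sin_arcsin hv1 hv2
  -- W range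
  have hWa : W ≤ a := by
    have h1 : Real.arcsin v ≤ Real.arcsin A := Real.monotone_arcsin (by linarith)
    rw [Real.arcsin_sin hm_a.1 hm_a.2] at h1
    have h2 : k * W ≤ k * a := by rw [hkW]; exact h1
    exact le_of_mul_le_mul_left h2 hk
  have hWna : -a ≤ W := by
    have h1 : Real.arcsin (-A) ≤ Real.arcsin v := Real.monotone_arcsin hv_gt.le
    have h2 : Real.arcsin (-A) = -(k * a) := by
      rw [show -A = Real.sin (-(k*a)) by simp [hA], Real.arcsin_sin (by linarith [hm_a.2]) (by linarith [hm_a.1])]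
    have h3 : k * (-a) ≤ k * W := by rw [hkW, mul_neg]; rw [h2] at h1; exact h1
    exact le_of_mul_le_mul_left h3 hk
  -- positivity of cos on the relevant intervals
  have hcos : ∀ s : ℝ, -a ≤ s → s ≤ a → 0 < Real.cos (k * s) := by
    intro s h1 h2
    apply Real.cos_pos_of_mem_Ioo
    constructor
    · nlinarith
    · nlinarith
  have hc1 : ∀ s ∈ Set.Icc a₁ a₂, 0 < Real.cos (k * s) := fun s hs =>
    hcos s (le_trans ha₁ hs.1) (by linarith [hs.2])
  have hc2 : ∀ s ∈ Set.Icc (-a) W, 0 < Real.cos (k * s) := fun s hs =>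
    hcos s hs.1 (le_trans hs.2 hWa)
  have hsin_na : Real.sin (k * (-a)) = -A := by simp [hA]
  constructor
  · rw [integral_cos_mul k _ _ hk, integral_cos_mul k _ _ hk, hsinW, hsin_na]
    simp only [hv]
    ring
  · rw [integral_inv_cos_mul k _ _ hk h₁₂.le hc1,
      integral_inv_cos_mul k _ _ hk (by linarith) hc2, hsinW, hsin_na]
    rw [div_le_div_iff_of_pos_right (by positivity)]
    have key := key_log_ineq u₂ (-u₁) A hA1 hu2A (by linarith) (by linarith)
      (by simp only [hu₂, hu₁]; linarith) (by simp only [hu₂, hu₁]; linarith)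
    have e1 : u₂ + -u₁ - A = v := by simp [hv]; ring
    rw [e1] at key
    have e2 : Real.log (1 + -u₁) = Real.log (1 - u₁) := by ring_nf
    have e3 : Real.log (1 - -u₁) = Real.log (1 + u₁) := by ring_nf
    have e4 : Real.log (1 + -A) = Real.log (1 - A) := by ring_nf
    have e5 : Real.log (1 - -A) = Real.log (1 + A) := by ring_nf
    rw [e2, e3] at key
    rw [e4, e5]
    linarith
end
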